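/- arXiv:2310.17114 — 9 statements merged into one kernel-verified Lean document; each statement's English description precedes it below -/
import Mathlib

section
/- Let p ≥ 1 and let μ be a probability measure on [0,1]^p having a density p_X with respect to Lebesgue measure with 0 < θ̲ ≤ p_X(u) ≤ θ̄ < ∞ for all u ∈ [0,1]^p; let X ~ μ. Suppose f*(u) = f*_1(u_1) + ⋯ + f*_p(u_p) with each f*_k differentiable on [0,1] with integrable derivative. Then for any rectangle A = ∏_{j=1}^p [ℓ_j, u_j] ⊆ [0,1]^p with ℓ_j < u_j for all j, writing q_A^{(k)}(t) := P(X^{(k)} ≤ t | X ∈ A) for the conditional CDF of the k-th coordinate, one has (sup_{j ∈ {1,…,p}, b ∈ ℝ} √(Δ(A, j, b))) · (∑_{k=1}^p ∫_{ℓ_k}^{u_k} √(q_A^{(k)}(t)(1 − q_A^{(k)}(t))) · |f*_k'(t)| dt) ≥ √(P(X ∈ A)) · Var(f*(X) | X ∈ A). -/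
open MeasureTheory Set Filter
open scoped ENNReal Classical

noncomputable section

def box (p : ℕ) : Set (Fin p → ℝ) := Set.univ.pi fun _ => Set.Icc (0 : ℝ) 1

def condMean {p : ℕ} (μ : Measure (Fin p → ℝ)) (f : (Fin p → ℝ) → ℝ)
    (A : Set (Fin p → ℝ)) : ℝ :=
  (∫ x in A, f x ∂μ) / (μ A).toReal

def condVar {p : ℕ} (μ : Measure (Fin p → ℝ)) (f : (Fin p → ℝ) → ℝ)
    (A : Set (Fin p → ℝ)) : ℝ :=
  (∫ x in A, (f x - condMean μ f A) ^ 2 ∂μ) / (μ A).toReal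

def cellL {p : ℕ} (A : Set (Fin p → ℝ)) (j : Fin p) (b : ℝ) : Set (Fin p → ℝ) :=
  A ∩ {v | v j ≤ b}

def cellR {p : ℕ} (A : Set (Fin p → ℝ)) (j : Fin p) (b : ℝ) : Set (Fin p → ℝ) :=
  A ∩ {v | b < v j}

def impurity {p : ℕ} (μ : Measure (Fin p → ℝ)) (f : (Fin p → ℝ) → ℝ)
    (A : Set (Fin p → ℝ)) (j : Fin p) (b : ℝ) : ℝ :=
  (μ A).toReal * condVar μ f A
    - (μ (cellL A j b)).toReal * condVar μ f (cellL A j b)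
    - (μ (cellR A j b)).toReal * condVar μ f (cellR A j b)

def rect {p : ℕ} (ℓ u : Fin p → ℝ) : Set (Fin p → ℝ) :=
  Set.univ.pi fun j => Set.Icc (ℓ j) (u j)

def condCDFCoord {p : ℕ} (μ : Measure (Fin p → ℝ)) (A : Set (Fin p → ℝ)) (k : Fin p)
    (s : ℝ) : ℝ :=
  (μ (A ∩ {v | v k ≤ s})).toReal / (μ A).toReal

lemma setIntegral_sub_sq {p : ℕ} (μ : Measure (Fin p → ℝ)) [IsFiniteMeasure μ]
    {g : (Fin p → ℝ) → ℝ} (hg : Integrable g μ) (hg2 : Integrable (fun x => g x ^ 2) μ)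
    (B : Set (Fin p → ℝ)) (a : ℝ) :
    ∫ x in B, (g x - a) ^ 2 ∂μ
      = (∫ x in B, g x ^ 2 ∂μ) - 2 * a * (∫ x in B, g x ∂μ) + a ^ 2 * (μ B).toReal := by
  have h1 : IntegrableOn g B μ := hg.integrableOn
  have h2 : IntegrableOn (fun x => g x ^ 2) B μ := hg2.integrableOn
  have key : ∀ x, (g x - a) ^ 2 = (g x ^ 2 - 2 * a * g x) + a ^ 2 := fun x => by ring
  calc ∫ x in B, (g x - a) ^ 2 ∂μ
      = ∫ x in B, ((g x ^ 2 - 2 * a * g x) + a ^ 2) ∂μ := by simp only [key]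
    _ = (∫ x in B, (g x ^ 2 - 2 * a * g x) ∂μ) + ∫ x in B, (a ^ 2 : ℝ) ∂μ := by
        exact integral_add (h2.sub (h1.const_mul (2 * a))) (integrableOn_const (measure_ne_top _ _))
    _ = (∫ x in B, g x ^ 2 ∂μ) - (∫ x in B, 2 * a * g x ∂μ) + a ^ 2 * (μ B).toReal := by
        rw [integral_sub h2 (h1.const_mul (2 * a)), setIntegral_const]
        simp [smul_eq_mul, mul_comm, measureReal_def]
    _ = _ := by rw [integral_const_mul]

lemma condVar_nonneg {p : ℕ} (μ : Measure (Fin p → ℝ)) (g : (Fin p → ℝ) → ℝ)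
    (B : Set (Fin p → ℝ)) : 0 ≤ condVar μ g B :=
  div_nonneg (integral_nonneg fun x => sq_nonneg _) ENNReal.toReal_nonneg

lemma weighted_condVar {p : ℕ} (μ : Measure (Fin p → ℝ)) [IsFiniteMeasure μ]
    {g : (Fin p → ℝ) → ℝ} (hg : Integrable g μ) (hg2 : Integrable (fun x => g x ^ 2) μ)
    (B : Set (Fin p → ℝ)) (hq : (μ B).toReal ≠ 0) :
    (μ B).toReal * condVar μ g B
      = (∫ x in B, g x ^ 2 ∂μ) - (∫ x in B, g x ∂μ) ^ 2 / (μ B).toReal := by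
  unfold condVar condMean
  rw [setIntegral_sub_sq μ hg hg2, mul_div_cancel₀ _ hq]
  field_simp
  ring

lemma condMean_congr {p : ℕ} {μ : Measure (Fin p → ℝ)} {f g : (Fin p → ℝ) → ℝ}
    (hae : f =ᵐ[μ] g) (B : Set (Fin p → ℝ)) : condMean μ f B = condMean μ g B := by
  unfold condMean
  rw [integral_congr_ae (ae_restrict_of_ae hae)]

lemma condVar_congr {p : ℕ} {μ : Measure (Fin p → ℝ)} {f g : (Fin p → ℝ) → ℝ}
    (hae : f =ᵐ[μ] g) (B : Set (Fin p → ℝ)) : condVar μ f B = condVar μ g B := by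
  unfold condVar
  rw [condMean_congr hae B,
    integral_congr_ae (ae_restrict_of_ae (hae.mono fun x hx => by rw [hx]))]

lemma impurity_congr {p : ℕ} {μ : Measure (Fin p → ℝ)} {f g : (Fin p → ℝ) → ℝ}
    (hae : f =ᵐ[μ] g) (A : Set (Fin p → ℝ)) (j : Fin p) (b : ℝ) :
    impurity μ f A j b = impurity μ g A j b := by
  unfold impurity
  rw [condVar_congr hae, condVar_congr hae, condVar_congr hae]

lemma inner_bound {p : ℕ} (μ : Measure (Fin p → ℝ)) [IsProbabilityMeasure μ]
    {g : (Fin p → ℝ) → ℝ} (hg : Integrable g μ) (hg2 : Integrable (fun x => g x ^ 2) μ)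
    {A : Set (Fin p → ℝ)} (hA : MeasurableSet A) (k : Fin p) (t : ℝ) :
    |∫ x in cellR A k t, (g x - condMean μ g A) ∂μ|
      ≤ Real.sqrt (impurity μ g A k t) *
        (Real.sqrt (μ A).toReal *
          Real.sqrt (condCDFCoord μ A k t * (1 - condCDFCoord μ A k t))) := by
  set B := cellL A k t with hBdef
  set C := cellR A k t with hCdef
  have hBmeas : MeasurableSet B := hA.inter (measurableSet_le (measurable_pi_apply k) measurable_const)
  have hCmeas : MeasurableSet C := hA.inter (measurableSet_lt measurable_const (measurable_pi_apply k))
  have hdisj : Disjoint B C := by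
    rw [Set.disjoint_left]
    rintro v ⟨-, h1⟩ ⟨-, h2⟩
    simp only [Set.mem_setOf_eq] at h1 h2
    exact absurd h2 (not_lt.2 h1)
  have hunion : B ∪ C = A := by
    ext v
    constructor
    · rintro (⟨hv, -⟩ | ⟨hv, -⟩) <;> exact hv
    · intro hv
      rcases le_or_gt (v k) t with h | h
      · exact Or.inl ⟨hv, h⟩
      · exact Or.inr ⟨hv, h⟩
  set qB := (μ B).toReal with hqBdef
  set qC := (μ C).toReal with hqCdef
  set m := (μ A).toReal with hmdef
  have hm_add : m = qB + qC := by
    rw [hmdef, ← hunion, measure_union hdisj hCmeas,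
      ENNReal.toReal_add (measure_ne_top μ B) (measure_ne_top μ C)]
  set S := ∫ x in B, g x ∂μ with hSdef
  set R := ∫ x in C, g x ∂μ with hRdef
  have hT : ∫ x in A, g x ∂μ = S + R := by
    rw [← hunion, setIntegral_union hdisj hCmeas hg.integrableOn hg.integrableOn]
  have hLHS : ∫ x in C, (g x - condMean μ g A) ∂μ = R - condMean μ g A * qC := by
    rw [integral_sub hg.integrableOn (integrableOn_const (measure_ne_top _ _)),
      setIntegral_const, measureReal_def, smul_eq_mul, mul_comm]
  have hqB0 : 0 ≤ qB := ENNReal.toReal_nonneg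
  have hqC0 : 0 ≤ qC := ENNReal.toReal_nonneg
  rcases eq_or_lt_of_le hqC0 with hqC | hqC
  · -- qC = 0
    have hμC : μ C = 0 := by
      have := measure_ne_top μ C
      rw [hqCdef] at hqC
      exact (ENNReal.toReal_eq_zero_iff _).1 hqC.symm |>.resolve_right this
    have hR : R = 0 := by rw [hRdef, Measure.restrict_eq_zero.2 hμC, integral_zero_measure]
    rw [hLHS, hR, ← hqC]
    simp only [zero_sub, mul_zero, neg_zero, abs_zero]
    positivity
  rcases eq_or_lt_of_le hqB0 with hqB | hqB
  · -- qB = 0, qC > 0 so m = qC > 0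
    have hμB : μ B = 0 := by
      have := measure_ne_top μ B
      rw [hqBdef] at hqB
      exact (ENNReal.toReal_eq_zero_iff _).1 hqB.symm |>.resolve_right this
    have hS : S = 0 := by rw [hSdef, Measure.restrict_eq_zero.2 hμB, integral_zero_measure]
    have hm : 0 < m := by rw [hm_add, ← hqB]; simpa using hqC
    have hmc : m = qC := by rw [hm_add, ← hqB, zero_add]
    have : condMean μ g A = R / m := by
      rw [condMean, ← hmdef, hT, hS, zero_add]
    rw [hLHS, this, hmc, div_mul_cancel₀ _ (hmc ▸ hm.ne')]
    simp only [sub_self, abs_zero]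
    positivity
  -- main case : qB > 0, qC > 0
  have hm : 0 < m := by rw [hm_add]; positivity
  set N := S * qC - R * qB with hNdef
  have hgB2 : IntegrableOn (fun x => g x ^ 2) B μ := hg2.integrableOn
  have hgC2 : IntegrableOn (fun x => g x ^ 2) C μ := hg2.integrableOn
  have hsq : ∫ x in A, g x ^ 2 ∂μ = (∫ x in B, g x ^ 2 ∂μ) + ∫ x in C, g x ^ 2 ∂μ := by
    rw [← hunion, setIntegral_union hdisj hCmeas hgB2 hgC2]
  have eB := weighted_condVar μ hg hg2 B hqB.ne'
  have eC := weighted_condVar μ hg hg2 C hqC.ne'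
  have eA := weighted_condVar μ hg hg2 A hm.ne'
  rw [← hqBdef, ← hSdef] at eB
  rw [← hqCdef, ← hRdef] at eC
  rw [← hmdef, hT] at eA
  have hmne : qB + qC ≠ 0 := by positivity
  have himp : impurity μ g A k t = N ^ 2 / (qB * qC * m) := by
    have h0 : impurity μ g A k t
        = m * condVar μ g A - qB * condVar μ g B - qC * condVar μ g C := rfl
    rw [h0, eA, eB, eC, hsq, hNdef, hm_add]
    field_simp
    ring
  have hq : condCDFCoord μ A k t = qB / m := rfl
  have h1mq : 1 - qB / m = qC / m := by
    rw [hm_add]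
    field_simp
    ring
  have hRHSsqrt : Real.sqrt m *
      Real.sqrt (condCDFCoord μ A k t * (1 - condCDFCoord μ A k t))
      = Real.sqrt (qB * qC / m) := by
    rw [hq, h1mq, ← Real.sqrt_mul hm.le]
    congr 1
    field_simp
  have hprod : Real.sqrt (impurity μ g A k t) * Real.sqrt (qB * qC / m) = |N| / m := by
    rw [himp, ← Real.sqrt_mul (by positivity)]
    have : N ^ 2 / (qB * qC * m) * (qB * qC / m) = (N / m) ^ 2 := by
      field_simp
    rw [this, Real.sqrt_sq_eq_abs, abs_div, abs_of_pos hm]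
  have hLHS2 : |∫ x in C, (g x - condMean μ g A) ∂μ| = |N| / m := by
    rw [hLHS]
    have hcm : condMean μ g A = (S + R) / m := by
      rw [condMean, ← hT, hmdef]
    have : R - condMean μ g A * qC = (R * qB - S * qC) / m := by
      rw [hcm, hm_add]
      field_simp
      ring
    rw [this, abs_div, abs_of_pos hm]
    congr 1
    rw [hNdef, ← abs_neg]
    congr 1
    ring
  rw [hLHS2, hRHSsqrt, hprod]


/-- **Lemma (lower bound on the best split in terms of weighted total variation).**
For an additive signal `f*(u) = ∑ f_k(u_k)` with differentiable components, and any
nondegenerate closed rectangle `A = ∏[ℓ_j,u_j] ⊆ [0,1]^p`,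
`(sup_{j,b} √Δ(A,j,b)) · ∑_k ∫ √(q_A^{(k)}(1−q_A^{(k)})) |f_k'| ≥ √P(X∈A) · Var(f*(X)|X∈A)`. -/
theorem best_split_lower_bound
    (p : ℕ) (hp : 1 ≤ p)
    (μ : Measure (Fin p → ℝ)) [IsProbabilityMeasure μ]
    (pX : (Fin p → ℝ) → ℝ) (θlo θhi : ℝ)
    (hθlo : 0 < θlo) (hθhi : θlo ≤ θhi)
    (hdens : μ = (volume.restrict (box p)).withDensity fun u => ENNReal.ofReal (pX u))
    (hbound : ∀ u ∈ box p, θlo ≤ pX u ∧ pX u ≤ θhi)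
    (f : Fin p → ℝ → ℝ) (f' : Fin p → ℝ → ℝ)
    (hderiv : ∀ k, ∀ s ∈ Set.Icc (0 : ℝ) 1, HasDerivWithinAt (f k) (f' k s) (Set.Icc (0 : ℝ) 1) s)
    (hint : ∀ k, IntegrableOn (f' k) (Set.Icc (0 : ℝ) 1) volume)
    (fstar : (Fin p → ℝ) → ℝ)
    (hadd : ∀ u, fstar u = ∑ k, f k (u k))
    (ℓ u : Fin p → ℝ) (hl : ∀ j, 0 ≤ ℓ j) (hlu : ∀ j, ℓ j < u j) (hu : ∀ j, u j ≤ 1) :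
    (⨆ j : Fin p, ⨆ b : ℝ, Real.sqrt (impurity μ fstar (rect ℓ u) j b)) *
        (∑ k : Fin p, ∫ s in ℓ k..u k,
          Real.sqrt (condCDFCoord μ (rect ℓ u) k s * (1 - condCDFCoord μ (rect ℓ u) k s)) *
            |f' k s|)
      ≥ Real.sqrt (μ (rect ℓ u)).toReal * condVar μ fstar (rect ℓ u) := by
  classical
  set A := rect ℓ u with hAdef
  have hAmeas : MeasurableSet A := MeasurableSet.univ_pi fun j => measurableSet_Icc
  have hboxmeas : MeasurableSet (box p) := MeasurableSet.univ_pi fun _ => measurableSet_Icc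
  have hAbox : A ⊆ box p := by
    intro v hv j _
    have hj := hv j (Set.mem_univ j)
    exact ⟨le_trans (hl j) hj.1, le_trans hj.2 (hu j)⟩
  have hAIcc : ∀ {x : Fin p → ℝ}, x ∈ A → ∀ k, x k ∈ Set.Icc (ℓ k) (u k) :=
    fun hx k => hx k (Set.mem_univ k)
  -- μ vanishes outside the box
  have hbox0 : μ (box p)ᶜ = 0 := by
    rw [hdens, withDensity_apply _ hboxmeas.compl, Measure.restrict_restrict hboxmeas.compl,
      Set.compl_inter_self, Measure.restrict_empty, lintegral_zero_measure]
  -- the clamped version of fstar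
  set clamp : ℝ → ℝ := fun s => min (max s 0) 1 with hclampdef
  have hclmem : ∀ s, clamp s ∈ Set.Icc (0:ℝ) 1 :=
    fun s => ⟨le_min (le_max_right _ _) zero_le_one, min_le_right _ _⟩
  have hclid : ∀ s ∈ Set.Icc (0:ℝ) 1, clamp s = s := by
    intro s hs
    simp [hclampdef, max_eq_left hs.1, min_eq_left hs.2]
  have hfc : ∀ k, ContinuousOn (f k) (Set.Icc (0:ℝ) 1) :=
    fun k s hs => (hderiv k s hs).continuousWithinAt
  set gk : Fin p → ℝ → ℝ := fun k s => f k (clamp s) with hgkdef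
  have hclcont : Continuous clamp := (continuous_id.max continuous_const).min continuous_const
  have hgkcont : ∀ k, Continuous (gk k) := fun k => (hfc k).comp_continuous hclcont hclmem
  obtain ⟨Cb, hCb⟩ : ∃ Cb : Fin p → ℝ, ∀ k, ∀ x ∈ Set.Icc (0:ℝ) 1, ‖f k x‖ ≤ Cb k := by
    choose Cb hCb using fun k => isCompact_Icc.exists_bound_of_continuousOn (hfc k)
    exact ⟨Cb, hCb⟩
  have hgkb : ∀ k s, |gk k s| ≤ Cb k := fun k s => hCb k _ (hclmem s)
  set g : (Fin p → ℝ) → ℝ := fun x => ∑ k, gk k (x k) with hgdef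
  have hgcont : Continuous g := continuous_finset_sum _ fun k _ => (hgkcont k).comp (continuous_apply k)
  set Cg : ℝ := ∑ k, Cb k with hCgdef
  have hgb : ∀ x, |g x| ≤ Cg :=
    fun x => (Finset.abs_sum_le_sum_abs _ _).trans (Finset.sum_le_sum fun k _ => hgkb k _)
  have hCg0 : 0 ≤ Cg := le_trans (abs_nonneg _) (hgb fun _ => 0)
  -- fstar = g a.e.
  have hboxeq : ∀ x ∈ box p, fstar x = g x := by
    intro x hx
    rw [hadd, hgdef]
    exact Finset.sum_congr rfl fun k _ => by rw [hgkdef]; simp [hclid _ (hx k (Set.mem_univ k))]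
  have hae : fstar =ᵐ[μ] g := by
    rw [Filter.eventuallyEq_iff_exists_mem]
    exact ⟨box p, by rwa [mem_ae_iff], hboxeq⟩
  -- integrability of g and g²
  have hgint : Integrable g μ :=
    (integrable_const Cg).mono' hgcont.aestronglyMeasurable (ae_of_all _ fun x => hgb x)
  have hg2int : Integrable (fun x => g x ^ 2) μ := by
    refine (integrable_const (Cg ^ 2)).mono' ((hgcont.pow 2).aestronglyMeasurable)
      (ae_of_all _ fun x => ?_)
    rw [Real.norm_eq_abs, abs_pow]
    exact pow_le_pow_left₀ (abs_nonneg _) (hgb x) 2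
  -- positivity of μ A
  have hμA : ENNReal.ofReal θlo * volume A ≤ μ A := by
    rw [hdens, withDensity_apply _ hAmeas, Measure.restrict_restrict hAmeas,
      Set.inter_eq_self_of_subset_left hAbox, ← setLIntegral_const A (ENNReal.ofReal θlo)]
    refine lintegral_mono_ae ?_
    filter_upwards [ae_restrict_mem hAmeas] with x hx
    exact ENNReal.ofReal_le_ofReal (hbound x (hAbox hx)).1
  have hvolpos : 0 < volume A := by
    rw [hAdef, rect, volume_pi_pi]
    refine CanonicallyOrderedAdd.prod_pos.2 fun i _ => ?_
    rw [Real.volume_Icc]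
    exact ENNReal.ofReal_pos.2 (sub_pos.2 (hlu i))
  have hμApos : 0 < μ A :=
    lt_of_lt_of_le (ENNReal.mul_pos (ENNReal.ofReal_pos.2 hθlo).ne' hvolpos.ne') hμA
  set m : ℝ := (μ A).toReal with hmdef
  have hmpos : 0 < m := ENNReal.toReal_pos hμApos.ne' (measure_ne_top μ A)
  set mA : ℝ := condMean μ g A with hmAdef
  have hCg2 : 0 ≤ Cg + |mA| := by positivity
  have hgmAb : ∀ x, |g x - mA| ≤ Cg + |mA| := fun x =>
    (abs_sub _ _).trans (add_le_add_left (hgb x) _)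
  have hgmAint : IntegrableOn (fun x => g x - mA) A μ :=
    (hgint.sub (integrable_const mA)).integrableOn
  have hz : ∫ x in A, (g x - mA) ∂μ = 0 := by
    rw [integral_sub hgint.integrableOn (integrable_const mA).integrableOn,
      setIntegral_const, measureReal_def, smul_eq_mul, hmAdef, condMean, ← hmdef]
    field_simp
    ring
  -- FTC
  have hFTC : ∀ k, ∀ c ∈ Set.Icc (ℓ k) (u k),
      ∫ s in (ℓ k)..c, f' k s = f k c - f k (ℓ k) := by
    intro k c hc
    have hsub : Set.Icc (ℓ k) c ⊆ Set.Icc (0:ℝ) 1 :=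
      Set.Icc_subset_Icc (hl k) (le_trans hc.2 (hu k))
    refine intervalIntegral.integral_eq_sub_of_hasDeriv_right_of_le hc.1
      ((hfc k).mono hsub) (fun s hs => ?_) ?_
    · have h0s : 0 < s := lt_of_le_of_lt (hl k) hs.1
      have hs1 : s < 1 := lt_of_lt_of_le hs.2 (le_trans hc.2 (hu k))
      exact ((hderiv k s ⟨h0s.le, hs1.le⟩).hasDerivAt
        (mem_nhds_iff.2 ⟨Set.Ioo 0 1, Set.Ioo_subset_Icc_self, isOpen_Ioo, ⟨h0s, hs1⟩⟩)).hasDerivWithinAt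
    · exact (intervalIntegrable_iff_integrableOn_Icc_of_le hc.1).2 ((hint k).mono_set hsub)
  -- the supremum D and its properties
  set D : ℝ := ⨆ j : Fin p, ⨆ b : ℝ, Real.sqrt (impurity μ fstar A j b) with hDdef
  have himpae : ∀ (j : Fin p) (b : ℝ), impurity μ fstar A j b = impurity μ g A j b :=
    fun j b => impurity_congr hae A j b
  have hcondVarae : condVar μ fstar A = condVar μ g A := condVar_congr hae A
  have himpub : ∀ (j : Fin p) (b : ℝ),
      Real.sqrt (impurity μ fstar A j b) ≤ Real.sqrt (m * condVar μ g A) := by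
    intro j b
    refine Real.sqrt_le_sqrt ?_
    rw [himpae]
    have h1 : 0 ≤ (μ (cellL A j b)).toReal * condVar μ g (cellL A j b) :=
      mul_nonneg ENNReal.toReal_nonneg (condVar_nonneg μ g _)
    have h2 : 0 ≤ (μ (cellR A j b)).toReal * condVar μ g (cellR A j b) :=
      mul_nonneg ENNReal.toReal_nonneg (condVar_nonneg μ g _)
    have h0 : impurity μ g A j b = m * condVar μ g A
        - (μ (cellL A j b)).toReal * condVar μ g (cellL A j b)
        - (μ (cellR A j b)).toReal * condVar μ g (cellR A j b) := rfl
    linarith [h0.le]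
  have hDb1 : ∀ j : Fin p, BddAbove (Set.range fun b => Real.sqrt (impurity μ fstar A j b)) :=
    fun j => ⟨Real.sqrt (m * condVar μ g A), by
      rintro y ⟨b, rfl⟩
      exact himpub j b⟩
  have hD2 : ∀ (j : Fin p) (b : ℝ), Real.sqrt (impurity μ fstar A j b) ≤ D := by
    intro j b
    refine le_trans (le_ciSup (hDb1 j) b) ?_
    exact le_ciSup (f := fun j : Fin p => ⨆ b : ℝ, Real.sqrt (impurity μ fstar A j b))
      (Set.finite_range _).bddAbove j
  -- Fubini block: for each coordinate k
  have hblock : ∀ k : Fin p,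
      (∫ x in A, (g x - mA) * (f k (x k) - f k (ℓ k)) ∂μ
        = ∫ t in Set.Ioc (ℓ k) (u k), (∫ x in cellR A k t, (g x - mA) ∂μ) * f' k t) ∧
      IntegrableOn (fun t => (∫ x in cellR A k t, (g x - mA) ∂μ) * f' k t)
        (Set.Ioc (ℓ k) (u k)) volume := by
    intro k
    set ν : Measure ℝ := volume.restrict (Set.Ioc (ℓ k) (u k)) with hνdef
    set ρ : Measure (Fin p → ℝ) := μ.restrict A with hρdef
    have hIocIcc : Set.Ioc (ℓ k) (u k) ⊆ Set.Icc (0:ℝ) 1 :=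
      fun t ht => ⟨(hl k).trans ht.1.le, ht.2.trans (hu k)⟩
    have hf'Ioc : IntegrableOn (f' k) (Set.Ioc (ℓ k) (u k)) volume :=
      (hint k).mono_set hIocIcc
    set Sset : Set ((Fin p → ℝ) × ℝ) := {z | z.2 < z.1 k} with hSdef
    have hSmeas : MeasurableSet Sset :=
      measurableSet_lt measurable_snd ((measurable_pi_apply k).comp measurable_fst)
    set H : (Fin p → ℝ) × ℝ → ℝ := Sset.indicator (fun w => (g w.1 - mA) * f' k w.2) with hHdef
    have hHaesm : AEStronglyMeasurable H (ρ.prod ν) := by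
      have h1 : AEStronglyMeasurable (fun w : (Fin p → ℝ) × ℝ => g w.1 - mA) (ρ.prod ν) :=
        ((hgcont.measurable.comp measurable_fst).sub measurable_const).aestronglyMeasurable
      have h2 : AEStronglyMeasurable (fun w : (Fin p → ℝ) × ℝ => f' k w.2) (ρ.prod ν) :=
        hf'Ioc.aestronglyMeasurable.comp_snd
      exact (h1.mul h2).indicator hSmeas
    have hHint : Integrable H (ρ.prod ν) := by
      refine ((integrable_const (Cg + |mA|)).mul_prod hf'Ioc.abs).mono' hHaesm
        (ae_of_all _ fun z => ?_)
      by_cases hzS : z ∈ Sset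
      · rw [hHdef, Set.indicator_of_mem hzS, Real.norm_eq_abs, abs_mul]
        exact mul_le_mul_of_nonneg_right (hgmAb _) (abs_nonneg _)
      · rw [hHdef, Set.indicator_of_notMem hzS, norm_zero]
        positivity
    have hswap : ∫ x, (∫ t, H (x, t) ∂ν) ∂ρ = ∫ t, (∫ x, H (x, t) ∂ρ) ∂ν :=
      integral_integral_swap (f := fun x t => H (x, t)) hHint
    have hL : ∫ x, (∫ t, H (x, t) ∂ν) ∂ρ
        = ∫ x in A, (g x - mA) * (f k (x k) - f k (ℓ k)) ∂μ := by
      refine setIntegral_congr_fun hAmeas fun x hx => ?_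
      have hxk := hAIcc hx k
      have e1 : ∀ t : ℝ, H (x, t)
          = (Set.Iio (x k)).indicator (fun s => (g x - mA) * f' k s) t := by
        intro t
        simp only [hHdef, hSdef, Set.indicator_apply, Set.mem_setOf_eq, Set.mem_Iio]
      have hseteq : Set.Iio (x k) ∩ Set.Ioc (ℓ k) (u k) = Set.Ioo (ℓ k) (x k) := by
        ext s
        simp only [Set.mem_inter_iff, Set.mem_Iio, Set.mem_Ioc, Set.mem_Ioo]
        constructor
        · rintro ⟨h1, h2, h3⟩
          exact ⟨h2, h1⟩
        · rintro ⟨h1, h2⟩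
          exact ⟨h2, h1, le_trans h2.le hxk.2⟩
      calc ∫ t, H (x, t) ∂ν
          = ∫ t, (Set.Iio (x k)).indicator (fun s => (g x - mA) * f' k s) t ∂ν := by
            simp_rw [e1]
        _ = ∫ t in Set.Iio (x k) ∩ Set.Ioc (ℓ k) (u k), (g x - mA) * f' k t ∂volume := by
            rw [hνdef, integral_indicator measurableSet_Iio,
              Measure.restrict_restrict measurableSet_Iio]
        _ = ∫ t in Set.Ioo (ℓ k) (x k), (g x - mA) * f' k t ∂volume := by rw [hseteq]
        _ = ∫ t in Set.Ioc (ℓ k) (x k), (g x - mA) * f' k t ∂volume :=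
            (integral_Ioc_eq_integral_Ioo).symm
        _ = ∫ t in (ℓ k)..(x k), (g x - mA) * f' k t := (intervalIntegral.integral_of_le hxk.1).symm
        _ = (g x - mA) * ∫ t in (ℓ k)..(x k), f' k t := intervalIntegral.integral_const_mul _ _
        _ = (g x - mA) * (f k (x k) - f k (ℓ k)) := by rw [hFTC k (x k) hxk]
    have hinner : ∀ t : ℝ, ∫ x, H (x, t) ∂ρ
        = (∫ x in cellR A k t, (g x - mA) ∂μ) * f' k t := by
      intro t
      have hsect : MeasurableSet {x : Fin p → ℝ | t < x k} :=
        measurableSet_lt measurable_const (measurable_pi_apply k)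
      have e2 : ∀ x : Fin p → ℝ, H (x, t)
          = ({x : Fin p → ℝ | t < x k}).indicator (fun x => (g x - mA) * f' k t) x := by
        intro x
        simp only [hHdef, hSdef, Set.indicator_apply, Set.mem_setOf_eq]
      calc ∫ x, H (x, t) ∂ρ
          = ∫ x, ({x : Fin p → ℝ | t < x k}).indicator (fun x => (g x - mA) * f' k t) x ∂ρ := by
            simp_rw [e2]
        _ = ∫ x in {x : Fin p → ℝ | t < x k} ∩ A, (g x - mA) * f' k t ∂μ := by
            rw [hρdef, integral_indicator hsect, Measure.restrict_restrict hsect]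
        _ = ∫ x in cellR A k t, (g x - mA) * f' k t ∂μ := by rw [Set.inter_comm]; rfl
        _ = (∫ x in cellR A k t, (g x - mA) ∂μ) * f' k t := integral_mul_const _ _
    have hmarg : IntegrableOn (fun t => (∫ x in cellR A k t, (g x - mA) ∂μ) * f' k t)
        (Set.Ioc (ℓ k) (u k)) volume :=
      (hHint.integral_prod_right).congr (ae_of_all _ hinner)
    refine ⟨?_, hmarg⟩
    rw [← hL, hswap]
    exact integral_congr_ae (ae_of_all _ hinner)
  -- properties of the conditional CDF factor
  have hq0 : ∀ (k : Fin p) (t : ℝ), 0 ≤ condCDFCoord μ A k t :=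
    fun k t => div_nonneg ENNReal.toReal_nonneg ENNReal.toReal_nonneg
  have hq1 : ∀ (k : Fin p) (t : ℝ), condCDFCoord μ A k t ≤ 1 := by
    intro k t
    refine div_le_one_of_le₀ ?_ ENNReal.toReal_nonneg
    exact ENNReal.toReal_mono (measure_ne_top μ A) (measure_mono Set.inter_subset_left)
  have hqq1 : ∀ (k : Fin p) (t : ℝ),
      Real.sqrt (condCDFCoord μ A k t * (1 - condCDFCoord μ A k t)) ≤ 1 := by
    intro k t
    refine Real.sqrt_le_one.2 ?_
    nlinarith [hq0 k t, hq1 k t]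
  have hqqmeas : ∀ k : Fin p,
      Measurable (fun t => Real.sqrt (condCDFCoord μ A k t * (1 - condCDFCoord μ A k t))) := by
    intro k
    have hmono : Monotone fun t : ℝ => (μ (A ∩ {v | v k ≤ t})).toReal := by
      intro t t' htt'
      exact ENNReal.toReal_mono (measure_ne_top _ _)
        (measure_mono (Set.inter_subset_inter_right A fun v hv => le_trans hv htt'))
    have hqmeas : Measurable fun t => condCDFCoord μ A k t := hmono.measurable.div_const _
    exact Real.continuous_sqrt.measurable.comp (hqmeas.mul (measurable_const.sub hqmeas))
  have hKint : ∀ k : Fin p, IntegrableOn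
      (fun t => Real.sqrt (condCDFCoord μ A k t * (1 - condCDFCoord μ A k t)) * |f' k t|)
      (Set.Ioc (ℓ k) (u k)) volume := by
    intro k
    have hIocIcc : Set.Ioc (ℓ k) (u k) ⊆ Set.Icc (0:ℝ) 1 :=
      fun t ht => ⟨(hl k).trans ht.1.le, ht.2.trans (hu k)⟩
    have hf'Ioc : IntegrableOn (f' k) (Set.Ioc (ℓ k) (u k)) volume :=
      (hint k).mono_set hIocIcc
    refine hf'Ioc.abs.mono' (((hqqmeas k).aestronglyMeasurable.restrict).mul
      hf'Ioc.abs.aestronglyMeasurable) (ae_of_all _ fun t => ?_)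
    rw [Real.norm_eq_abs, abs_mul, abs_abs, abs_of_nonneg (Real.sqrt_nonneg _)]
    calc Real.sqrt _ * |f' k t| ≤ 1 * |f' k t| :=
          mul_le_mul_of_nonneg_right (hqq1 k t) (abs_nonneg _)
      _ = |f' k t| := one_mul _
  -- per-coordinate bound
  have hbk : ∀ k : Fin p, ∫ x in A, (g x - mA) * (f k (x k) - f k (ℓ k)) ∂μ
      ≤ D * Real.sqrt m * ∫ t in Set.Ioc (ℓ k) (u k),
          Real.sqrt (condCDFCoord μ A k t * (1 - condCDFCoord μ A k t)) * |f' k t| := by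
    intro k
    rw [(hblock k).1]
    have hpt : ∀ t : ℝ, |∫ x in cellR A k t, (g x - mA) ∂μ| * |f' k t|
        ≤ D * Real.sqrt m *
          (Real.sqrt (condCDFCoord μ A k t * (1 - condCDFCoord μ A k t)) * |f' k t|) := by
      intro t
      have h1 := inner_bound μ hgint hg2int hAmeas k t
      have h2 : condMean μ g A = mA := rfl
      rw [h2] at h1
      have h3 : Real.sqrt (impurity μ g A k t) ≤ D := by
        rw [← himpae]
        exact hD2 k t
      have h4 : |∫ x in cellR A k t, (g x - mA) ∂μ|
          ≤ D * (Real.sqrt m * Real.sqrt (condCDFCoord μ A k t * (1 - condCDFCoord μ A k t))) := by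
        refine le_trans h1 (mul_le_mul_of_nonneg_right h3 (by positivity))
      calc |∫ x in cellR A k t, (g x - mA) ∂μ| * |f' k t|
          ≤ (D * (Real.sqrt m * Real.sqrt (condCDFCoord μ A k t * (1 - condCDFCoord μ A k t))))
              * |f' k t| := mul_le_mul_of_nonneg_right h4 (abs_nonneg _)
        _ = D * Real.sqrt m *
            (Real.sqrt (condCDFCoord μ A k t * (1 - condCDFCoord μ A k t)) * |f' k t|) := by ring
    calc ∫ t in Set.Ioc (ℓ k) (u k), (∫ x in cellR A k t, (g x - mA) ∂μ) * f' k t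
        ≤ |∫ t in Set.Ioc (ℓ k) (u k), (∫ x in cellR A k t, (g x - mA) ∂μ) * f' k t| :=
          le_abs_self _
      _ ≤ ∫ t in Set.Ioc (ℓ k) (u k), |∫ x in cellR A k t, (g x - mA) ∂μ| * |f' k t| := by
          simpa [Real.norm_eq_abs, abs_mul] using
            norm_integral_le_integral_norm (μ := volume.restrict (Set.Ioc (ℓ k) (u k)))
              (fun t => (∫ x in cellR A k t, (g x - mA) ∂μ) * f' k t)
      _ ≤ ∫ t in Set.Ioc (ℓ k) (u k), D * Real.sqrt m *
            (Real.sqrt (condCDFCoord μ A k t * (1 - condCDFCoord μ A k t)) * |f' k t|) := by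
          refine integral_mono ?_ (((hKint k).const_mul _)) hpt
          have := (hblock k).2.abs
          simpa [abs_mul] using this
      _ = D * Real.sqrt m * ∫ t in Set.Ioc (ℓ k) (u k),
            Real.sqrt (condCDFCoord μ A k t * (1 - condCDFCoord μ A k t)) * |f' k t| :=
          integral_const_mul _ _
  -- variance decomposition into coordinates
  set cl : ℝ := ∑ k, f k (ℓ k) with hcldef
  have hvar1 : m * condVar μ g A = ∫ x in A, (g x - mA) ^ 2 ∂μ := by
    rw [condVar, ← hmAdef, ← hmdef, mul_div_cancel₀ _ hmpos.ne']
  have hmm_int : IntegrableOn (fun x => (g x - mA) * (g x - cl)) A μ := by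
    refine ((integrable_const ((Cg + |mA|) * (Cg + |cl|))).mono'
      (((hgcont.measurable.sub measurable_const).mul
        (hgcont.measurable.sub measurable_const)).aestronglyMeasurable)
      (ae_of_all _ fun x => ?_)).integrableOn
    rw [Real.norm_eq_abs, Pi.mul_apply, abs_mul]
    exact mul_le_mul (hgmAb x) ((abs_sub _ _).trans (add_le_add_left (hgb x) _))
      (abs_nonneg _) hCg2
  have hvar2 : ∫ x in A, (g x - mA) ^ 2 ∂μ = ∫ x in A, (g x - mA) * (g x - cl) ∂μ := by
    have e0 : ∀ x, (g x - mA) ^ 2 = (g x - mA) * (g x - cl) + (cl - mA) * (g x - mA) :=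
      fun x => by ring
    simp only [e0]
    rw [integral_add hmm_int (hgmAint.const_mul _), integral_const_mul, hz, mul_zero, add_zero]
  have hterm_int : ∀ k : Fin p,
      IntegrableOn (fun x => (g x - mA) * (gk k (x k) - f k (ℓ k))) A μ := by
    intro k
    refine ((integrable_const ((Cg + |mA|) * (Cb k + |f k (ℓ k)|))).mono'
      (((hgcont.measurable.sub measurable_const).mul
        (((hgkcont k).measurable.comp (measurable_pi_apply k)).sub measurable_const)).aestronglyMeasurable)
      (ae_of_all _ fun x => ?_)).integrableOn
    rw [Real.norm_eq_abs, Pi.mul_apply, abs_mul]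
    exact mul_le_mul (hgmAb x) ((abs_sub _ _).trans (add_le_add_left (hgkb k _) _))
      (abs_nonneg _) hCg2
  have hvar3 : ∫ x in A, (g x - mA) * (g x - cl) ∂μ
      = ∑ k, ∫ x in A, (g x - mA) * (gk k (x k) - f k (ℓ k)) ∂μ := by
    rw [← integral_finset_sum _ fun k _ => hterm_int k]
    refine integral_congr_ae (ae_of_all _ fun x => ?_)
    rw [hgdef, hcldef]
    simp only
    rw [← Finset.sum_sub_distrib, ← Finset.mul_sum]
  have hvar4 : ∀ k : Fin p, ∫ x in A, (g x - mA) * (gk k (x k) - f k (ℓ k)) ∂μ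
      = ∫ x in A, (g x - mA) * (f k (x k) - f k (ℓ k)) ∂μ := by
    intro k
    refine setIntegral_congr_fun hAmeas fun x hx => ?_
    have hxk := hAIcc hx k
    have : gk k (x k) = f k (x k) := by
      rw [hgkdef]
      simp only
      rw [hclid _ ⟨(hl k).trans hxk.1, hxk.2.trans (hu k)⟩]
    rw [this]
  have hsum : m * condVar μ g A
      = ∑ k, ∫ x in A, (g x - mA) * (f k (x k) - f k (ℓ k)) ∂μ := by
    rw [hvar1, hvar2, hvar3]
    exact Finset.sum_congr rfl fun k _ => hvar4 k
  -- assemble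
  set K : ℝ := ∑ k : Fin p, ∫ s in ℓ k..u k,
      Real.sqrt (condCDFCoord μ A k s * (1 - condCDFCoord μ A k s)) * |f' k s| with hKdef
  have hKk : ∀ k : Fin p, (∫ s in ℓ k..u k,
      Real.sqrt (condCDFCoord μ A k s * (1 - condCDFCoord μ A k s)) * |f' k s|)
      = ∫ t in Set.Ioc (ℓ k) (u k),
          Real.sqrt (condCDFCoord μ A k t * (1 - condCDFCoord μ A k t)) * |f' k t| :=
    fun k => intervalIntegral.integral_of_le (hlu k).le
  have hmain : m * condVar μ g A ≤ D * Real.sqrt m * K := by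
    rw [hsum, hKdef, Finset.mul_sum]
    refine Finset.sum_le_sum fun k _ => ?_
    rw [hKk k]
    exact hbk k
  rw [ge_iff_le, hcondVarae]
  have hsm : 0 < Real.sqrt m := Real.sqrt_pos.2 hmpos
  refine le_of_mul_le_mul_left ?_ hsm
  calc Real.sqrt m * (Real.sqrt m * condVar μ g A) = m * condVar μ g A := by
        rw [← mul_assoc, Real.mul_self_sqrt hmpos.le]
    _ ≤ D * Real.sqrt m * K := hmain
    _ = Real.sqrt m * (D * K) := by ring
end
end

section
/- Let p ≥ 1 and let μ be a probability measure on [0,1]^p having a density p_X with respect to Lebesgue measure with 0 < θ̲ ≤ p_X(u) ≤ θ̄ < ∞ for all u ∈ [0,1]^p; let X ~ μ. Suppose f*(u) = f*_1(u_1) + ⋯ + f*_p(u_p) with each f*_k square-integrable on [0,1]. Then for any rectangle A = ∏_{j=1}^p [ℓ_j, u_j] ⊆ [0,1]^p with ℓ_j < u_j for all j, Var(f*(X) | X ∈ A) ≥ (θ̲/θ̄) · ∑_{j=1}^p (u_j − ℓ_j)^{−1} ∫_{ℓ_j}^{u_j} (f*_j(t) − c_j)² dt, where c_j := (u_j − ℓ_j)^{−1}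 ∫_{ℓ_j}^{u_j} f*_j(t) dt. -/
open MeasureTheory Set Filter
open scoped ENNReal Classical
noncomputable section

lemma pi_restrict_pi {p : ℕ} (t : Fin p → Set ℝ) (ht : ∀ i, MeasurableSet (t i)) :
    (volume : Measure (Fin p → ℝ)).restrict (Set.univ.pi t)
      = Measure.pi (fun i => volume.restrict (t i)) := by
  refine (Measure.pi_eq (μ := fun i => volume.restrict (t i)) fun s hs => ?_).symm
  rw [Measure.restrict_apply (MeasurableSet.univ_pi hs), ← Set.pi_inter_distrib,
    volume_pi_pi]
  exact Finset.prod_congr rfl fun i _ => (Measure.restrict_apply (hs i)).symm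

lemma integral_pi_prod {p : ℕ} (ν : Fin p → Measure ℝ) [hsf : ∀ i, SigmaFinite (ν i)]
    (h : Fin p → ℝ → ℝ) :
    ∫ x : Fin p → ℝ, ∏ i, h i (x i) ∂(Measure.pi ν) = ∏ i, ∫ t, h i t ∂(ν i) :=
  MeasureTheory.integral_fin_nat_prod_eq_prod (μ := ν) h

lemma integrable_pi_prod {p : ℕ} (ν : Fin p → Measure ℝ) [hsf : ∀ i, SigmaFinite (ν i)]
    (h : Fin p → ℝ → ℝ) (hi : ∀ i, Integrable (h i) (ν i)) :
    Integrable (fun x : Fin p → ℝ => ∏ i, h i (x i)) (Measure.pi ν) :=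
  MeasureTheory.Integrable.fin_nat_prod (μ := ν) hi

section single

variable {p : ℕ} (ν : Fin p → Measure ℝ) [∀ i, IsFiniteMeasure (ν i)]

lemma integrable_pi_single (j : Fin p) (g : ℝ → ℝ) (hg : Integrable g (ν j)) :
    Integrable (fun x : Fin p → ℝ => g (x j)) (Measure.pi ν) := by
  classical
  set H : Fin p → ℝ → ℝ := fun k t => if k = j then g t else 1 with hH
  have heq : (fun x : Fin p → ℝ => g (x j)) = fun x => ∏ k, H k (x k) := by
    funext x
    rw [Finset.prod_eq_single j (fun b _ hb => by simp [hH, hb])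
      (fun h => absurd (Finset.mem_univ j) h)]
    simp [hH]
  rw [heq]
  refine integrable_pi_prod ν H fun i => ?_
  by_cases h : i = j
  · subst h; simpa [hH] using hg
  · simpa [hH, h] using integrable_const (μ := ν i) (1 : ℝ)

lemma integral_pi_single (j : Fin p) (g : ℝ → ℝ) :
    ∫ x : Fin p → ℝ, g (x j) ∂(Measure.pi ν)
      = (∏ k ∈ Finset.univ.erase j, (ν k univ).toReal) * ∫ t, g t ∂(ν j) := by
  classical
  set H : Fin p → ℝ → ℝ := fun k t => if k = j then g t else 1 with hH
  have heq : (fun x : Fin p → ℝ => g (x j)) = fun x => ∏ k, H k (x k) := by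
    funext x
    rw [Finset.prod_eq_single j (fun b _ hb => by simp [hH, hb])
      (fun h => absurd (Finset.mem_univ j) h)]
    simp [hH]
  rw [heq, integral_pi_prod,
    ← Finset.mul_prod_erase Finset.univ _ (Finset.mem_univ j), mul_comm]
  congr 1
  · refine Finset.prod_congr rfl fun k hk => ?_
    have : k ≠ j := Finset.ne_of_mem_erase hk
    simp [hH, this, measureReal_def]
  · simp [hH]

lemma integrable_pi_pair (i j : Fin p) (hij : i ≠ j) (g1 g2 : ℝ → ℝ)
    (hg1 : Integrable g1 (ν i)) (hg2 : Integrable g2 (ν j)) :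
    Integrable (fun x : Fin p → ℝ => g1 (x i) * g2 (x j)) (Measure.pi ν) := by
  classical
  set H : Fin p → ℝ → ℝ := fun k t => if k = i then g1 t else if k = j then g2 t else 1 with hH
  have heq : (fun x : Fin p → ℝ => g1 (x i) * g2 (x j)) = fun x => ∏ k, H k (x k) := by
    funext x
    rw [← Finset.mul_prod_erase Finset.univ _ (Finset.mem_univ i),
      ← Finset.mul_prod_erase _ _ (Finset.mem_erase.2 ⟨hij.symm, Finset.mem_univ j⟩),
      Finset.prod_eq_one (fun k hk => by
        have h1 : k ≠ j := Finset.ne_of_mem_erase hk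
        have h2 : k ≠ i := Finset.ne_of_mem_erase (Finset.mem_of_mem_erase hk)
        simp [hH, h1, h2])]
    simp [hH, hij.symm]
  rw [heq]
  refine integrable_pi_prod ν H fun k => ?_
  by_cases h1 : k = i
  · subst h1; simpa [hH] using hg1
  by_cases h2 : k = j
  · subst h2; simpa [hH, h1] using hg2
  · simpa [hH, h1, h2] using integrable_const (μ := ν k) (1 : ℝ)

lemma integral_pi_pair_zero (i j : Fin p) (hij : i ≠ j) (g1 g2 : ℝ → ℝ)
    (h0 : ∫ t, g1 t ∂(ν i) = 0) :
    ∫ x : Fin p → ℝ, g1 (x i) * g2 (x j) ∂(Measure.pi ν) = 0 := by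
  classical
  set H : Fin p → ℝ → ℝ := fun k t => if k = i then g1 t else if k = j then g2 t else 1 with hH
  have heq : (fun x : Fin p → ℝ => g1 (x i) * g2 (x j)) = fun x => ∏ k, H k (x k) := by
    funext x
    rw [← Finset.mul_prod_erase Finset.univ _ (Finset.mem_univ i),
      ← Finset.mul_prod_erase _ _ (Finset.mem_erase.2 ⟨hij.symm, Finset.mem_univ j⟩),
      Finset.prod_eq_one (fun k hk => by
        have h1 : k ≠ j := Finset.ne_of_mem_erase hk
        have h2 : k ≠ i := Finset.ne_of_mem_erase (Finset.mem_of_mem_erase hk)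
        simp [hH, h1, h2])]
    simp [hH, hij.symm]
  rw [heq, integral_pi_prod]
  refine Finset.prod_eq_zero (Finset.mem_univ i) ?_
  simpa [hH] using h0

end single

/-- **Lemma (variance lower bound for additive functions).**
If `μ` has density in `[θlo, θhi]` on `[0,1]^p` and `f*(u) = ∑ f_j(u_j)` with
square-integrable components, then for any nondegenerate closed rectangle
`A = ∏[ℓ_j,u_j] ⊆ [0,1]^p`,
`Var(f*(X)|X∈A) ≥ (θlo/θhi) ∑_j (u_j−ℓ_j)⁻¹ ∫ (f_j − c_j)²`,
where `c_j` is the mean of `f_j` on `[ℓ_j, u_j]`. -/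
theorem variance_lower_bound_additive
    (p : ℕ) (hp : 1 ≤ p)
    (μ : Measure (Fin p → ℝ)) [IsProbabilityMeasure μ]
    (pX : (Fin p → ℝ) → ℝ) (θlo θhi : ℝ)
    (hθlo : 0 < θlo) (hθhi : θlo ≤ θhi)
    (hdens : μ = (volume.restrict (box p)).withDensity fun u => ENNReal.ofReal (pX u))
    (hbound : ∀ u ∈ box p, θlo ≤ pX u ∧ pX u ≤ θhi)
    (f : Fin p → ℝ → ℝ)
    (hfm : ∀ k, Measurable (f k))
    (hsq : ∀ k, MemLp (f k) 2 (volume.restrict (Set.Icc (0 : ℝ) 1)))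
    (fstar : (Fin p → ℝ) → ℝ)
    (hadd : ∀ u, fstar u = ∑ k, f k (u k))
    (ℓ u : Fin p → ℝ) (hl : ∀ j, 0 ≤ ℓ j) (hlu : ∀ j, ℓ j < u j) (hu : ∀ j, u j ≤ 1) :
    condVar μ fstar (rect ℓ u) ≥
      θlo / θhi * ∑ j : Fin p, (u j - ℓ j)⁻¹ *
        ∫ s in ℓ j..u j,
          (f j s - (u j - ℓ j)⁻¹ * ∫ s' in ℓ j..u j, f j s') ^ 2 := by
  classical
  have hθhi0 : 0 < θhi := lt_of_lt_of_le hθlo hθhi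
  set A : Set (Fin p → ℝ) := rect ℓ u with hAdef
  have hA : MeasurableSet A := MeasurableSet.univ_pi fun j => measurableSet_Icc
  have hAbox : A ⊆ box p := Set.pi_mono fun j _ => Set.Icc_subset_Icc (hl j) (hu j)
  set d : Fin p → ℝ := fun j => u j - ℓ j with hd
  have hdpos : ∀ j, 0 < d j := fun j => sub_pos.2 (hlu j)
  set ν : Fin p → Measure ℝ := fun j => volume.restrict (Icc (ℓ j) (u j)) with hν
  haveI : ∀ j, IsFiniteMeasure (ν j) := fun j => ⟨by
    rw [hν, Measure.restrict_apply_univ]; exact measure_Icc_lt_top⟩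
  have hmass : ∀ j, ((ν j) univ).toReal = d j := fun j => by
    rw [hν, Measure.restrict_apply_univ, Real.volume_Icc, ENNReal.toReal_ofReal (hdpos j).le]
  have hrestrict : volume.restrict A = Measure.pi ν :=
    pi_restrict_pi _ (fun j => measurableSet_Icc)
  -- component integrability
  have hfI : ∀ j, MemLp (f j) 2 (ν j) := fun j =>
    (hsq j).mono_measure (Measure.restrict_mono (Icc_subset_Icc (hl j) (hu j)) le_rfl)
  set c : Fin p → ℝ := fun j => (d j)⁻¹ * ∫ t, f j t ∂(ν j) with hc
  set g : Fin p → ℝ → ℝ := fun j t => f j t - c j with hg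
  have hgI2 : ∀ j, MemLp (g j) 2 (ν j) := fun j => (hfI j).sub (memLp_const (c j))
  have hgint : ∀ j, Integrable (g j) (ν j) := fun j => (hgI2 j).integrable one_le_two
  have hgsq : ∀ j, Integrable (fun t => g j t ^ 2) (ν j) := fun j => (hgI2 j).integrable_sq
  have hgmean : ∀ j, ∫ t, g j t ∂(ν j) = 0 := by
    intro j
    have : ∫ t, g j t ∂(ν j) = (∫ t, f j t ∂(ν j)) - ((ν j) univ).toReal • c j := by
      simp only [hg]
      rw [integral_sub ((hfI j).integrable one_le_two) (integrable_const _), integral_const, measureReal_def]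
    rw [this, hmass, smul_eq_mul, hc]
    dsimp only
    rw [inv_mul_eq_div, mul_comm, div_mul_cancel₀ _ (hdpos j).ne', sub_self]
  -- product integral computations
  set S : ℝ := ∑ j, (d j)⁻¹ * ∫ t, g j t ^ 2 ∂(ν j) with hS
  have hSnn : 0 ≤ S := Finset.sum_nonneg fun j _ => mul_nonneg (inv_nonneg.2 (hdpos j).le)
    (integral_nonneg fun t => sq_nonneg _)
  set Vr : ℝ := ∏ j, d j with hVr
  have hVrpos : 0 < Vr := Finset.prod_pos fun j _ => hdpos j
  have hGint : ∀ j, Integrable (fun x : Fin p → ℝ => g j (x j)) (Measure.pi ν) :=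
    fun j => integrable_pi_single ν j (g j) (hgint j)
  have hGsum : Integrable (fun x : Fin p → ℝ => ∑ j, g j (x j)) (Measure.pi ν) :=
    integrable_finset_sum _ fun j _ => hGint j
  have hGmean : ∫ x : Fin p → ℝ, (∑ j, g j (x j)) ∂(Measure.pi ν) = 0 := by
    rw [integral_finset_sum _ fun j _ => hGint j]
    exact Finset.sum_eq_zero fun j _ => by rw [integral_pi_single, hgmean j, mul_zero]
  have hTint : ∀ j i, Integrable (fun x : Fin p → ℝ => g j (x j) * g i (x i)) (Measure.pi ν) := by
    intro j i
    by_cases h : j = i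
    · subst h
      exact integrable_pi_single ν j (fun t => g j t * g j t) (by simpa [sq] using hgsq j)
    · exact integrable_pi_pair ν j i h _ _ (hgint j) (hgint i)
  have hsqeq : (fun x : Fin p → ℝ => (∑ j, g j (x j)) ^ 2)
      = fun x => ∑ j, ∑ i, g j (x j) * g i (x i) := by
    funext x; rw [sq, Finset.sum_mul_sum]
  have hSqint : Integrable (fun x : Fin p → ℝ => (∑ j, g j (x j)) ^ 2) (Measure.pi ν) := by
    rw [hsqeq]
    exact integrable_finset_sum _ fun j _ => integrable_finset_sum _ fun i _ => hTint j i
  have hErase : ∀ j, Vr = d j * ∏ k ∈ Finset.univ.erase j, d k :=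
    fun j => (Finset.mul_prod_erase _ _ (Finset.mem_univ j)).symm
  have hstep : ∀ j, ∫ x : Fin p → ℝ, ∑ i, g j (x j) * g i (x i) ∂(Measure.pi ν)
      = (∏ k ∈ Finset.univ.erase j, d k) * ∫ t, g j t ^ 2 ∂(ν j) := by
    intro j
    rw [integral_finset_sum _ fun i _ => hTint j i]
    rw [Finset.sum_eq_single j (fun i _ hij => integral_pi_pair_zero ν j i
      (fun h => hij h.symm) _ _ (hgmean j)) (fun h => absurd (Finset.mem_univ j) h)]
    calc ∫ x : Fin p → ℝ, g j (x j) * g j (x j) ∂(Measure.pi ν)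
        = ∫ x : Fin p → ℝ, (fun t => g j t ^ 2) (x j) ∂(Measure.pi ν) := by
          refine integral_congr_ae (Eventually.of_forall fun x => ?_)
          dsimp only; rw [sq]
      _ = (∏ k ∈ Finset.univ.erase j, ((ν k) univ).toReal) * ∫ t, g j t ^ 2 ∂(ν j) :=
          integral_pi_single ν j (fun t => g j t ^ 2)
      _ = (∏ k ∈ Finset.univ.erase j, d k) * ∫ t, g j t ^ 2 ∂(ν j) := by
          rw [Finset.prod_congr rfl fun k _ => hmass k]
  have hSqval : ∫ x : Fin p → ℝ, (∑ j, g j (x j)) ^ 2 ∂(Measure.pi ν) = Vr * S := by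
    rw [hsqeq, integral_finset_sum _ fun j _ => integrable_finset_sum _ fun i _ => hTint j i]
    refine (Finset.sum_congr rfl fun j _ => hstep j).trans ?_
    rw [hS, Finset.mul_sum]
    refine Finset.sum_congr rfl fun j _ => ?_
    rw [hErase j,
      show (d j * ∏ k ∈ Finset.univ.erase j, d k) * ((d j)⁻¹ * ∫ t, g j t ^ 2 ∂(ν j))
        = (d j * (d j)⁻¹) * ((∏ k ∈ Finset.univ.erase j, d k) * ∫ t, g j t ^ 2 ∂(ν j))
        from by ring,
      mul_inv_cancel₀ (hdpos j).ne', one_mul]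
  -- the shifted function
  set m : ℝ := condMean μ fstar A with hm
  set M : ℝ := ∑ j, c j with hM
  set a : ℝ := M - m with ha
  have hshift : ∀ x, fstar x - m = (∑ j, g j (x j)) + a := by
    intro x
    rw [hadd x, ha, hM]
    simp only [hg]
    rw [Finset.sum_sub_distrib]
    ring
  set F : (Fin p → ℝ) → ℝ := fun x => (fstar x - m) ^ 2 with hF
  have hFrw : F = fun x => (∑ j, g j (x j)) ^ 2 + (2 * a) * (∑ j, g j (x j)) + a ^ 2 := by
    funext x; rw [hF]; dsimp only; rw [hshift x]; ring
  have hI2 : Integrable (fun x : Fin p → ℝ => (2 * a) * ∑ j, g j (x j)) (Measure.pi ν) :=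
    hGsum.const_mul _
  have hI1 : Integrable
      (fun x : Fin p → ℝ => (∑ j, g j (x j)) ^ 2 + (2 * a) * ∑ j, g j (x j))
      (Measure.pi ν) := hSqint.add hI2
  have hFint : Integrable F (Measure.pi ν) := by
    rw [hFrw]
    exact hI1.add (integrable_const _)
  have hpiuniv : ((Measure.pi ν) univ).toReal = Vr := by
    rw [Measure.pi_univ, ENNReal.toReal_prod]
    exact Finset.prod_congr rfl fun j _ => hmass j
  have hFval : ∫ x, F x ∂(Measure.pi ν) = Vr * S + a ^ 2 * Vr := by
    rw [hFrw, integral_add hI1 (integrable_const _),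
      integral_add hSqint hI2, integral_const_mul, hGmean, hSqval,
      integral_const, measureReal_def, hpiuniv]
    simp [mul_comm]
  have hFmeas : Measurable F := by
    have hfsm : Measurable fstar := by
      have : fstar = fun x => ∑ k, f k (x k) := funext hadd
      rw [this]
      exact Finset.measurable_sum _ fun k _ => (hfm k).comp (measurable_pi_apply k)
    exact (hfsm.sub measurable_const).pow_const 2
  -- measure comparison
  set w : (Fin p → ℝ) → ℝ≥0∞ := fun x => ENNReal.ofReal (pX x) with hw
  have hrA : μ.restrict A = (Measure.pi ν).withDensity w := by
    rw [hdens, restrict_withDensity hA, Measure.restrict_restrict hA,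
      inter_eq_self_of_subset_left hAbox, hrestrict]
  have haeA : ∀ᵐ x ∂(Measure.pi ν), x ∈ A := by
    rw [← hrestrict]; exact ae_restrict_mem hA
  have hlow : (ENNReal.ofReal θlo) • (Measure.pi ν) ≤ μ.restrict A := by
    rw [hrA, ← withDensity_const]
    exact withDensity_mono (haeA.mono fun x hx =>
      ENNReal.ofReal_le_ofReal (hbound x (hAbox hx)).1)
  have hhigh : μ.restrict A ≤ (ENNReal.ofReal θhi) • (Measure.pi ν) := by
    rw [hrA, ← withDensity_const]
    exact withDensity_mono (haeA.mono fun x hx =>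
      ENNReal.ofReal_le_ofReal (hbound x (hAbox hx)).2)
  -- numerator
  have hFnn : 0 ≤ ∫ x, F x ∂(Measure.pi ν) := integral_nonneg fun x => sq_nonneg _
  have hNum : ∫ x in A, F x ∂μ = (∫⁻ x, ENNReal.ofReal (F x) ∂(μ.restrict A)).toReal :=
    integral_eq_lintegral_of_nonneg_ae (ae_of_all _ fun x => sq_nonneg _)
      hFmeas.aestronglyMeasurable
  have hLν : ∫⁻ x, ENNReal.ofReal (F x) ∂(Measure.pi ν)
      = ENNReal.ofReal (∫ x, F x ∂(Measure.pi ν)) :=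
    (ofReal_integral_eq_lintegral_ofReal hFint (ae_of_all _ fun x => sq_nonneg _)).symm
  have hNumLow : ENNReal.ofReal θlo * ENNReal.ofReal (∫ x, F x ∂(Measure.pi ν))
      ≤ ∫⁻ x, ENNReal.ofReal (F x) ∂(μ.restrict A) := by
    calc ENNReal.ofReal θlo * ENNReal.ofReal (∫ x, F x ∂(Measure.pi ν))
        = ∫⁻ x, ENNReal.ofReal (F x) ∂((ENNReal.ofReal θlo) • (Measure.pi ν)) := by
          rw [lintegral_smul_measure, hLν, smul_eq_mul]
      _ ≤ _ := lintegral_mono' hlow le_rfl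
  have hNumHigh : ∫⁻ x, ENNReal.ofReal (F x) ∂(μ.restrict A)
      ≤ ENNReal.ofReal θhi * ENNReal.ofReal (∫ x, F x ∂(Measure.pi ν)) := by
    calc ∫⁻ x, ENNReal.ofReal (F x) ∂(μ.restrict A)
        ≤ ∫⁻ x, ENNReal.ofReal (F x) ∂((ENNReal.ofReal θhi) • (Measure.pi ν)) :=
          lintegral_mono' hhigh le_rfl
      _ = _ := by rw [lintegral_smul_measure, hLν, smul_eq_mul]
  have hNumne : ∫⁻ x, ENNReal.ofReal (F x) ∂(μ.restrict A) ≠ ∞ :=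
    (lt_of_le_of_lt hNumHigh (ENNReal.mul_lt_top ENNReal.ofReal_lt_top
      ENNReal.ofReal_lt_top)).ne
  have hNlow : θlo * (∫ x, F x ∂(Measure.pi ν)) ≤ ∫ x in A, F x ∂μ := by
    rw [hNum]
    have : θlo * (∫ x, F x ∂(Measure.pi ν))
        = (ENNReal.ofReal θlo * ENNReal.ofReal (∫ x, F x ∂(Measure.pi ν))).toReal := by
      rw [ENNReal.toReal_mul, ENNReal.toReal_ofReal hθlo.le, ENNReal.toReal_ofReal hFnn]
    rw [this]
    exact ENNReal.toReal_mono hNumne hNumLow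
  -- denominator
  have hpiunivE : (Measure.pi ν) univ = ENNReal.ofReal Vr := by
    have hv : ∀ j, (ν j) univ = ENNReal.ofReal (d j) := fun j => by
      rw [hν, Measure.restrict_apply_univ, Real.volume_Icc]
    rw [Measure.pi_univ, Finset.prod_congr rfl fun j _ => hv j, hVr]
    exact (ENNReal.ofReal_prod_of_nonneg fun j _ => (hdpos j).le).symm
  have hDhigh : (μ A).toReal ≤ θhi * Vr := by
    have h1 : μ A = (μ.restrict A) univ := (Measure.restrict_apply_univ _).symm
    have h2 : (μ.restrict A) univ ≤ ENNReal.ofReal θhi * ENNReal.ofReal Vr := by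
      calc (μ.restrict A) univ ≤ ((ENNReal.ofReal θhi) • (Measure.pi ν)) univ :=
            hhigh univ
        _ = ENNReal.ofReal θhi * ENNReal.ofReal Vr := by
            rw [Measure.smul_apply, smul_eq_mul, hpiunivE]
    calc (μ A).toReal ≤ (ENNReal.ofReal θhi * ENNReal.ofReal Vr).toReal :=
          ENNReal.toReal_mono (ENNReal.mul_lt_top ENNReal.ofReal_lt_top
            ENNReal.ofReal_lt_top).ne (h1 ▸ h2)
      _ = θhi * Vr := by
          rw [ENNReal.toReal_mul, ENNReal.toReal_ofReal hθhi0.le,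
            ENNReal.toReal_ofReal hVrpos.le]
  have hDpos : 0 < (μ A).toReal := by
    refine ENNReal.toReal_pos ?_ (measure_ne_top μ A)
    have h2 : ((ENNReal.ofReal θlo) • (Measure.pi ν)) univ ≤ (μ.restrict A) univ := hlow univ
    rw [Measure.smul_apply, smul_eq_mul, hpiunivE, Measure.restrict_apply_univ] at h2
    refine fun h0 => ?_
    rw [h0, nonpos_iff_eq_zero, mul_eq_zero] at h2
    rcases h2 with h | h
    · exact (ENNReal.ofReal_pos.2 hθlo).ne' h
    · exact (ENNReal.ofReal_pos.2 hVrpos).ne' h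
  -- rewrite the RHS sum
  have hRHS : ∑ j : Fin p, (u j - ℓ j)⁻¹ *
      ∫ s in ℓ j..u j, (f j s - (u j - ℓ j)⁻¹ * ∫ s' in ℓ j..u j, f j s') ^ 2 = S := by
    rw [hS]
    refine Finset.sum_congr rfl fun j _ => ?_
    have hmean : ∫ s' in ℓ j..u j, f j s' = ∫ t, f j t ∂(ν j) := by
      rw [intervalIntegral.integral_of_le (hlu j).le, hν]
      exact (integral_Icc_eq_integral_Ioc).symm
    have hsq' : ∫ s in ℓ j..u j, (f j s - (u j - ℓ j)⁻¹ * ∫ s' in ℓ j..u j, f j s') ^ 2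
        = ∫ t, g j t ^ 2 ∂(ν j) := by
      rw [hmean, intervalIntegral.integral_of_le (hlu j).le, hν]
      rw [← integral_Icc_eq_integral_Ioc]
    rw [hsq']
  -- final assembly
  have hcond : condVar μ fstar A = (∫ x in A, F x ∂μ) / (μ A).toReal := rfl
  rw [hAdef] at hcond ⊢
  rw [hcond, hRHS, ge_iff_le]
  have hNlow' : θlo * Vr * S ≤ ∫ x in A, F x ∂μ := by
    refine le_trans ?_ hNlow
    rw [hFval]
    nlinarith [mul_nonneg (mul_nonneg hθlo.le (sq_nonneg a)) hVrpos.le]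
  calc θlo / θhi * S = (θlo * Vr * S) / (θhi * Vr) := by
        field_simp
    _ ≤ (∫ x in A, F x ∂μ) / (μ A).toReal :=
        div_le_div₀ (le_trans (by positivity) hNlow') hNlow' hDpos hDhigh
end
end

section
/- Let X be uniformly distributed on [0,1] (p = 1) and let f*(t) = t. Then for every interval A = [ℓ, r] ⊆ [0,1] with ℓ < r: (i) P(X ∈ A) · Var(f*(X) | X ∈ A) = (r − ℓ)³/12; (ii) the midpoint split satisfies Δ(A, 1, (ℓ+r)/2) = (r − ℓ)³/16; consequently sup_{b ∈ ℝ} Δ(A, 1, b) ≥ (3/4) · P(X ∈ A) · Var(f*(X) | X ∈ A), i.e. f* satisfies the Sufficient Impurity Decrease condition with parameter λ = 3/4. -/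
open MeasureTheory Set Filter
open scoped ENNReal Classical

noncomputable section

/-- Conditional mean `E[f(X) | X ∈ A]` for a real random variable (0 when `μ A = 0`). -/
def condMean1 (μ : Measure ℝ) (f : ℝ → ℝ) (A : Set ℝ) : ℝ :=
  (∫ x in A, f x ∂μ) / (μ A).toReal

/-- Conditional variance `Var(f(X) | X ∈ A)` (0 when `μ A = 0`). -/
def condVar1 (μ : Measure ℝ) (f : ℝ → ℝ) (A : Set ℝ) : ℝ :=
  (∫ x in A, (f x - condMean1 μ f A) ^ 2 ∂μ) / (μ A).toReal

/-- Population impurity decrease `Δ(A, 1, b)` for a univariate split at `b`. -/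
def impurity1 (μ : Measure ℝ) (f : ℝ → ℝ) (A : Set ℝ) (b : ℝ) : ℝ :=
  (μ A).toReal * condVar1 μ f A
    - (μ (A ∩ Set.Iic b)).toReal * condVar1 μ f (A ∩ Set.Iic b)
    - (μ (A ∩ Set.Ioi b)).toReal * condVar1 μ f (A ∩ Set.Ioi b)

lemma uni_meas (a b : ℝ) (h0 : 0 ≤ a) (hab : a ≤ b) (hb : b ≤ 1) :
    ((volume.restrict (Icc (0:ℝ) 1)) (Icc a b)).toReal = b - a := by
  rw [Measure.restrict_apply measurableSet_Icc,
    inter_eq_left.mpr (Icc_subset_Icc h0 hb), Real.volume_Icc,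
    ENNReal.toReal_ofReal (by linarith)]

lemma uni_int (a b : ℝ) (h0 : 0 ≤ a) (hab : a ≤ b) (hb : b ≤ 1) (f : ℝ → ℝ) :
    (∫ x in Icc a b, f x ∂(volume.restrict (Icc (0:ℝ) 1))) = ∫ x in a..b, f x := by
  have h : (volume.restrict (Icc (0:ℝ) 1)).restrict (Icc a b) = volume.restrict (Icc a b) := by
    rw [Measure.restrict_restrict measurableSet_Icc,
      inter_eq_left.mpr (Icc_subset_Icc h0 hb)]
  show ∫ x, f x ∂((volume.restrict (Icc (0:ℝ) 1)).restrict (Icc a b)) = _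
  rw [h, integral_Icc_eq_integral_Ioc, intervalIntegral.integral_of_le hab]

lemma key (a b : ℝ) (h0 : 0 ≤ a) (hab : a < b) (hb : b ≤ 1) :
    ((volume.restrict (Icc (0:ℝ) 1)) (Icc a b)).toReal *
      condVar1 (volume.restrict (Icc (0:ℝ) 1)) (fun s => s) (Icc a b) = (b - a) ^ 3 / 12 := by
  have hne : b - a ≠ 0 := by linarith
  have hm : condMean1 (volume.restrict (Icc (0:ℝ) 1)) (fun s => s) (Icc a b) = (a + b) / 2 := by
    rw [condMean1, uni_meas a b h0 hab.le hb, uni_int a b h0 hab.le hb]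
    rw [integral_id]
    field_simp
    ring
  rw [condVar1, hm, uni_meas a b h0 hab.le hb, uni_int a b h0 hab.le hb]
  have : (∫ x in a..b, (x - (a + b) / 2) ^ 2) = ((b - (a+b)/2)^3 - (a - (a+b)/2)^3) / 3 := by
    rw [intervalIntegral.integral_comp_sub_right (fun x => x ^ 2) ((a+b)/2),
      integral_pow]
    norm_num
  rw [this]
  field_simp
  ring

lemma ioc_ae (a b : ℝ) : (Ioc a b : Set ℝ) =ᵐ[volume.restrict (Icc (0:ℝ) 1)] Icc a b :=
  Ioc_ae_eq_Icc

lemma key' (a b : ℝ) (h0 : 0 ≤ a) (hab : a < b) (hb : b ≤ 1) :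
    ((volume.restrict (Icc (0:ℝ) 1)) (Ioc a b)).toReal *
      condVar1 (volume.restrict (Icc (0:ℝ) 1)) (fun s => s) (Ioc a b) = (b - a) ^ 3 / 12 := by
  have hμ : (volume.restrict (Icc (0:ℝ) 1)) (Ioc a b)
      = (volume.restrict (Icc (0:ℝ) 1)) (Icc a b) := measure_congr (ioc_ae a b)
  have hInt : ∀ g : ℝ → ℝ, (∫ x in Ioc a b, g x ∂(volume.restrict (Icc (0:ℝ) 1)))
      = ∫ x in Icc a b, g x ∂(volume.restrict (Icc (0:ℝ) 1)) := fun g =>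
    setIntegral_congr_set (ioc_ae a b)
  have hmean : condMean1 (volume.restrict (Icc (0:ℝ) 1)) (fun s => s) (Ioc a b)
      = condMean1 (volume.restrict (Icc (0:ℝ) 1)) (fun s => s) (Icc a b) := by
    rw [condMean1, condMean1, hμ, hInt]
  rw [condVar1, hμ, hmean, hInt]
  exact key a b h0 hab hb

lemma term_nonneg (μ : Measure ℝ) (f : ℝ → ℝ) (S : Set ℝ) :
    0 ≤ (μ S).toReal * condVar1 μ f S :=
  mul_nonneg ENNReal.toReal_nonneg
    (div_nonneg (integral_nonneg fun x => sq_nonneg _) ENNReal.toReal_nonneg)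


/-- **Example (univariate linear function satisfies SID with λ = 3/4).**
For `X` uniform on `[0,1]` and `f*(t) = t`, for every interval `A = [ℓ, r] ⊆ [0,1]` with
`ℓ < r`: (i) `P(X∈A)·Var(f*(X)|X∈A) = (r−ℓ)³/12`; (ii) the midpoint split gives
`Δ(A, 1, (ℓ+r)/2) = (r−ℓ)³/16`; hence `sup_b Δ(A,1,b) ≥ (3/4)·P(X∈A)·Var(f*(X)|X∈A)`. -/
theorem univariate_linear_sid (ℓ r : ℝ) (hℓ : 0 ≤ ℓ) (hℓr : ℓ < r) (hr : r ≤ 1) :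
    ((volume.restrict (Set.Icc (0 : ℝ) 1)) (Set.Icc ℓ r)).toReal *
        condVar1 (volume.restrict (Set.Icc (0 : ℝ) 1)) (fun s => s) (Set.Icc ℓ r)
      = (r - ℓ) ^ 3 / 12 ∧
    impurity1 (volume.restrict (Set.Icc (0 : ℝ) 1)) (fun s => s) (Set.Icc ℓ r) ((ℓ + r) / 2)
      = (r - ℓ) ^ 3 / 16 ∧
    (⨆ b : ℝ, impurity1 (volume.restrict (Set.Icc (0 : ℝ) 1)) (fun s => s) (Set.Icc ℓ r) b) ≥
      3 / 4 * (((volume.restrict (Set.Icc (0 : ℝ) 1)) (Set.Icc ℓ r)).toReal *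
        condVar1 (volume.restrict (Set.Icc (0 : ℝ) 1)) (fun s => s) (Set.Icc ℓ r)) := by
  set m := (ℓ + r) / 2 with hm
  have hℓm : ℓ < m := by rw [hm]; linarith
  have hmr : m < r := by rw [hm]; linarith
  have h1 : ((volume.restrict (Set.Icc (0 : ℝ) 1)) (Set.Icc ℓ r)).toReal *
      condVar1 (volume.restrict (Set.Icc (0 : ℝ) 1)) (fun s => s) (Set.Icc ℓ r)
      = (r - ℓ) ^ 3 / 12 := key ℓ r hℓ hℓr hr
  have hiL : Set.Icc ℓ r ∩ Set.Iic m = Set.Icc ℓ m := by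
    ext x
    simp only [mem_inter_iff, mem_Icc, mem_Iic]
    constructor
    · rintro ⟨⟨h1, _⟩, h3⟩; exact ⟨h1, h3⟩
    · rintro ⟨h1, h3⟩; exact ⟨⟨h1, by linarith⟩, h3⟩
  have hiR : Set.Icc ℓ r ∩ Set.Ioi m = Set.Ioc m r := by
    ext x
    simp only [mem_inter_iff, mem_Icc, mem_Ioi, mem_Ioc]
    constructor
    · rintro ⟨⟨_, h2⟩, h3⟩; exact ⟨h3, h2⟩
    · rintro ⟨h3, h2⟩; exact ⟨⟨by linarith, h2⟩, h3⟩
  have h2 : impurity1 (volume.restrict (Set.Icc (0 : ℝ) 1)) (fun s => s) (Set.Icc ℓ r) m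
      = (r - ℓ) ^ 3 / 16 := by
    rw [impurity1, hiL, hiR, h1, key ℓ m hℓ hℓm (by linarith),
      key' m r (by linarith) hmr hr]
    rw [hm]
    ring_nf
  refine ⟨h1, h2, ?_⟩
  have hbdd : BddAbove (Set.range fun b =>
      impurity1 (volume.restrict (Set.Icc (0 : ℝ) 1)) (fun s => s) (Set.Icc ℓ r) b) := by
    refine ⟨(r - ℓ) ^ 3 / 12, ?_⟩
    rintro y ⟨b, rfl⟩
    have t1 := term_nonneg (volume.restrict (Set.Icc (0 : ℝ) 1)) (fun s => s)
      (Set.Icc ℓ r ∩ Set.Iic b)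
    have t2 := term_nonneg (volume.restrict (Set.Icc (0 : ℝ) 1)) (fun s => s)
      (Set.Icc ℓ r ∩ Set.Ioi b)
    simp only [impurity1]
    rw [h1]
    linarith
  have hle := le_ciSup hbdd m
  rw [h2] at hle
  rw [h1]
  have : 3 / 4 * ((r - ℓ) ^ 3 / 12) = (r - ℓ) ^ 3 / 16 := by ring
  linarith
end
end

section
/- Let g be a differentiable function on [0,1] with 0 < c₁ ≤ g'(t) ≤ c₂ for all t ∈ [0,1]. Then g belongs to LRP([0,1], 2√3·c₂/c₁); that is, for every subinterval [a,b] ⊆ [0,1] with a < b, (∫_a^b |g'(t)| dt)² ≤ (12 c₂²/c₁²) · (b−a)^{−1} · inf_{w ∈ ℝ} ∫_a^b |g(t) − w|² dt. -/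
open MeasureTheory Set Filter

noncomputable section

/-- **Example (strongly increasing functions are in `LRP([0,1], 2√3 c₂/c₁)`).**
If `g` is differentiable on `[0,1]` with `0 < c₁ ≤ g' ≤ c₂`, then for every subinterval
`[a,b] ⊆ [0,1]` with `a < b`,
`(∫_a^b |g'|)² ≤ (12 c₂²/c₁²) (b−a)⁻¹ inf_w ∫_a^b |g−w|²`. -/
theorem lrp_strongly_increasing (g g' : ℝ → ℝ) (c₁ c₂ : ℝ) (hc₁ : 0 < c₁)
    (hderiv : ∀ t ∈ Set.Icc (0 : ℝ) 1, HasDerivWithinAt g (g' t) (Set.Icc (0 : ℝ) 1) t)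
    (hlo : ∀ t ∈ Set.Icc (0 : ℝ) 1, c₁ ≤ g' t)
    (hhi : ∀ t ∈ Set.Icc (0 : ℝ) 1, g' t ≤ c₂) :
    ∀ a b : ℝ, 0 ≤ a → a < b → b ≤ 1 →
      (∫ t in a..b, |g' t|) ^ 2
        ≤ 12 * c₂ ^ 2 / c₁ ^ 2 * (b - a)⁻¹ * ⨅ w : ℝ, ∫ t in a..b, |g t - w| ^ 2 := by
  intro a b ha hab hb
  have hab' : a ≤ b := hab.le
  have hsub : Set.Icc a b ⊆ Set.Icc (0 : ℝ) 1 := Set.Icc_subset_Icc ha hb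
  have h0 : (0 : ℝ) ∈ Set.Icc (0 : ℝ) 1 := ⟨le_rfl, zero_le_one⟩
  have hc₂ : 0 < c₂ := lt_of_lt_of_le hc₁ ((hlo 0 h0).trans (hhi 0 h0))
  have hgc : ContinuousOn g (Set.Icc (0 : ℝ) 1) := fun t ht =>
    (hderiv t ht).continuousWithinAt
  -- quantitative monotonicity
  have key : ∀ x ∈ Set.Icc (0 : ℝ) 1, ∀ y ∈ Set.Icc (0 : ℝ) 1, x ≤ y →
      c₁ * (y - x) ≤ g y - g x := by
    have hD : Convex ℝ (Set.Icc (0 : ℝ) 1) := convex_Icc 0 1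
    have hint : interior (Set.Icc (0 : ℝ) 1) = Set.Ioo (0 : ℝ) 1 := interior_Icc
    have hda : ∀ x ∈ interior (Set.Icc (0 : ℝ) 1), HasDerivAt g (g' x) x := by
      intro x hx
      rw [hint] at hx
      exact (hderiv x (Set.Ioo_subset_Icc_self hx)).hasDerivAt
        (Filter.mem_of_superset (isOpen_Ioo.mem_nhds hx) Set.Ioo_subset_Icc_self)
    refine hD.mul_sub_le_image_sub_of_le_deriv hgc
      (fun x hx => (hda x hx).differentiableAt.differentiableWithinAt) ?_
    intro x hx
    rw [(hda x hx).deriv]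
    rw [hint] at hx
    exact hlo x (Set.Ioo_subset_Icc_self hx)
  -- lower bound for the infimum
  have lower : ∀ w : ℝ, c₁ ^ 2 * (b - a) ^ 3 / 12 ≤ ∫ t in a..b, |g t - w| ^ 2 := by
    intro w
    have haI : a ∈ Set.Icc (0 : ℝ) 1 := hsub ⟨le_rfl, hab'⟩
    have hbI : b ∈ Set.Icc (0 : ℝ) 1 := hsub ⟨hab', le_rfl⟩
    obtain ⟨s, hs, hpt⟩ : ∃ s ∈ Set.Icc a b, ∀ t ∈ Set.Icc a b, c₁ * |t - s| ≤ |g t - w| := by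
      rcases le_or_gt w (g a) with hw | hw
      · refine ⟨a, ⟨le_rfl, hab'⟩, fun t ht => ?_⟩
        have h1 : c₁ * (t - a) ≤ g t - g a := key a haI t (hsub ht) ht.1
        have h2 : |t - a| = t - a := abs_of_nonneg (by linarith [ht.1])
        have h3 : 0 ≤ g t - w := by nlinarith [ht.1]
        rw [h2, abs_of_nonneg h3]; linarith
      rcases le_or_gt (g b) w with hw' | hw'
      · refine ⟨b, ⟨hab', le_rfl⟩, fun t ht => ?_⟩
        have h1 : c₁ * (b - t) ≤ g b - g t := key t (hsub ht) b hbI ht.2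
        have h2 : |t - b| = b - t := by rw [abs_sub_comm]; exact abs_of_nonneg (by linarith [ht.2])
        have h3 : g t - w ≤ 0 := by nlinarith [ht.2]
        rw [h2, abs_of_nonpos h3]; linarith
      · obtain ⟨s, hsmem, hgs⟩ :=
          intermediate_value_Icc hab' (hgc.mono hsub) ⟨hw.le, hw'.le⟩
        refine ⟨s, hsmem, fun t ht => ?_⟩
        rcases le_total s t with hst | hst
        · have h1 : c₁ * (t - s) ≤ g t - g s := key s (hsub hsmem) t (hsub ht) hst
          have h2 : |t - s| = t - s := abs_of_nonneg (by linarith)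
          have h3 : 0 ≤ g t - w := by rw [← hgs]; nlinarith
          rw [h2, abs_of_nonneg h3, ← hgs]; linarith
        · have h1 : c₁ * (s - t) ≤ g s - g t := key t (hsub ht) s (hsub hsmem) hst
          have h2 : |t - s| = s - t := by rw [abs_sub_comm]; exact abs_of_nonneg (by linarith)
          have h3 : g t - w ≤ 0 := by rw [← hgs]; nlinarith
          rw [h2, abs_of_nonpos h3, ← hgs]; linarith
    have hcont : ContinuousOn (fun t => |g t - w| ^ 2) (Set.Icc a b) := by
      have : ContinuousOn g (Set.Icc a b) := hgc.mono hsub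
      fun_prop
    have hint1 : IntervalIntegrable (fun t => c₁ ^ 2 * (t - s) ^ 2) volume a b :=
      (Continuous.intervalIntegrable (by continuity) a b)
    have hint2 : IntervalIntegrable (fun t => |g t - w| ^ 2) volume a b :=
      ContinuousOn.intervalIntegrable (by rw [Set.uIcc_of_le hab']; exact hcont)
    have hmono : (∫ t in a..b, c₁ ^ 2 * (t - s) ^ 2) ≤ ∫ t in a..b, |g t - w| ^ 2 := by
      refine intervalIntegral.integral_mono_on hab' hint1 hint2 (fun t ht => ?_)
      have h1 := hpt t ht
      have h2 : 0 ≤ c₁ * |t - s| := mul_nonneg hc₁.le (abs_nonneg _)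
      calc c₁ ^ 2 * (t - s) ^ 2 = (c₁ * |t - s|) ^ 2 := by
            rw [mul_pow, sq_abs]
        _ ≤ |g t - w| ^ 2 := by nlinarith [abs_nonneg (g t - w)]
    have hcomp : (∫ t in a..b, c₁ ^ 2 * (t - s) ^ 2)
        = c₁ ^ 2 * (((b - s) ^ 3 - (a - s) ^ 3) / 3) := by
      rw [intervalIntegral.integral_const_mul]
      have : (∫ t in a..b, (t - s) ^ 2) = ∫ t in a - s..b - s, t ^ 2 :=
        intervalIntegral.integral_comp_sub_right (fun t => t ^ 2) s
      rw [this, integral_pow]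
      norm_num
    have halg : c₁ ^ 2 * (b - a) ^ 3 / 12 ≤ c₁ ^ 2 * (((b - s) ^ 3 - (a - s) ^ 3) / 3) := by
      have h1 : a ≤ s := hs.1
      have h2 : s ≤ b := hs.2
      have h4 : (b - a) ^ 3 ≤ 4 * ((b - s) ^ 3 - (a - s) ^ 3) := by
        nlinarith [mul_nonneg (sub_nonneg.2 (h1.trans h2))
          (sq_nonneg ((s - a) - (b - s))), sub_nonneg.2 h1, sub_nonneg.2 h2]
      have h5 := mul_le_mul_of_nonneg_left h4 (sq_nonneg c₁)
      linarith
    linarith [hcomp ▸ hmono]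
  have hinf : c₁ ^ 2 * (b - a) ^ 3 / 12 ≤ ⨅ w : ℝ, ∫ t in a..b, |g t - w| ^ 2 :=
    le_ciInf lower
  -- upper bound for the left side
  have hL : (∫ t in a..b, |g' t|) ^ 2 ≤ c₂ ^ 2 * (b - a) ^ 2 := by
    have hb' : ‖∫ t in a..b, |g' t|‖ ≤ c₂ * |b - a| := by
      refine intervalIntegral.norm_integral_le_of_norm_le_const (fun x hx => ?_)
      rw [Set.uIoc_of_le hab'] at hx
      have hxI : x ∈ Set.Icc (0 : ℝ) 1 := hsub ⟨hx.1.le, hx.2⟩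
      have h1 := hlo x hxI
      have h2 := hhi x hxI
      rw [Real.norm_eq_abs, abs_abs, abs_of_pos (hc₁.trans_le h1)]
      exact h2
    have h3 : (∫ t in a..b, |g' t|) ^ 2 ≤ (c₂ * |b - a|) ^ 2 := by
      rw [← sq_abs]
      exact pow_le_pow_left₀ (abs_nonneg _) hb' 2
    calc (∫ t in a..b, |g' t|) ^ 2 ≤ (c₂ * |b - a|) ^ 2 := h3
      _ = c₂ ^ 2 * (b - a) ^ 2 := by rw [mul_pow, sq_abs]
  -- combine
  have hba : 0 < b - a := sub_pos.2 hab
  calc (∫ t in a..b, |g' t|) ^ 2 ≤ c₂ ^ 2 * (b - a) ^ 2 := hL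
    _ = 12 * c₂ ^ 2 / c₁ ^ 2 * (b - a)⁻¹ * (c₁ ^ 2 * (b - a) ^ 3 / 12) := by
        field_simp
    _ ≤ 12 * c₂ ^ 2 / c₁ ^ 2 * (b - a)⁻¹ * ⨅ w : ℝ, ∫ t in a..b, |g t - w| ^ 2 := by
        refine mul_le_mul_of_nonneg_left hinf ?_
        positivity
end
end

section
/- Let 0 < σ < L and let g be a differentiable function on [0,1] that is L-smooth and σ-strongly convex, i.e. (σ/2)(t−s)² ≤ g(t) − g(s) − g'(s)(t−s) ≤ (L/2)(t−s)² for all t, s ∈ [0,1]. Then g belongs to LRP([0,1], 110·L/σ); that is, for every subinterval [a,b] ⊆ [0,1] with a < b, (∫_a^b |g'(t)| dt)² ≤ (110 L/σ)² · (b−a)^{−1} · inf_{w ∈ ℝ} ∫_a^b |g(t) − w|² dt. -/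
set_option maxHeartbeats 1000000

open MeasureTheory Set Filter

noncomputable section

lemma lrp_mono_lip (g g' : ℝ → ℝ) (σ L : ℝ)
    (hsc : ∀ t ∈ Set.Icc (0 : ℝ) 1, ∀ s ∈ Set.Icc (0 : ℝ) 1,
      σ / 2 * (t - s) ^ 2 ≤ g t - g s - g' s * (t - s))
    (hsm : ∀ t ∈ Set.Icc (0 : ℝ) 1, ∀ s ∈ Set.Icc (0 : ℝ) 1,
      g t - g s - g' s * (t - s) ≤ L / 2 * (t - s) ^ 2) :
    ∀ s ∈ Set.Icc (0 : ℝ) 1, ∀ t ∈ Set.Icc (0 : ℝ) 1, s ≤ t →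
      σ * (t - s) ≤ g' t - g' s ∧ g' t - g' s ≤ L * (t - s) := by
  intro s hs t ht hst
  rcases eq_or_lt_of_le hst with rfl | h
  · simp
  constructor
  · have h1 := hsc t ht s hs
    have h2 := hsc s hs t ht
    nlinarith
  · have h1 := hsm t ht s hs
    have h2 := hsm s hs t ht
    nlinarith

lemma lrp_cont_g' (g g' : ℝ → ℝ) (σ L : ℝ) (hσ : 0 < σ) (hσL : σ < L)
    (hsc : ∀ t ∈ Set.Icc (0 : ℝ) 1, ∀ s ∈ Set.Icc (0 : ℝ) 1,
      σ / 2 * (t - s) ^ 2 ≤ g t - g s - g' s * (t - s))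
    (hsm : ∀ t ∈ Set.Icc (0 : ℝ) 1, ∀ s ∈ Set.Icc (0 : ℝ) 1,
      g t - g s - g' s * (t - s) ≤ L / 2 * (t - s) ^ 2) :
    ContinuousOn g' (Set.Icc (0 : ℝ) 1) := by
  have key := lrp_mono_lip g g' σ L hsc hsm
  have hL : (0:ℝ) ≤ L := le_of_lt (hσ.trans hσL)
  have : LipschitzOnWith (Real.toNNReal L) g' (Set.Icc (0:ℝ) 1) := by
    rw [lipschitzOnWith_iff_dist_le_mul]
    intro x hx y hy
    rw [Real.dist_eq, Real.dist_eq, Real.coe_toNNReal L hL]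
    rcases le_total x y with hxy | hxy
    · have := key x hx y hy hxy
      have h0 : 0 ≤ σ * (y - x) := by nlinarith [hxy, hσ.le]
      rw [abs_sub_comm (g' x), abs_sub_comm x y, abs_of_nonneg (by linarith [this.1]), abs_of_nonneg (by linarith : (0:ℝ) ≤ y - x)]
      linarith [this.2]
    · have := key y hy x hx hxy
      have h0 : 0 ≤ σ * (x - y) := by nlinarith [hxy, hσ.le]
      rw [abs_of_nonneg (by linarith [this.1]), abs_of_nonneg (by linarith : (0:ℝ) ≤ x - y)]
      linarith [this.2]
  exact this.continuousOn

lemma lrp_cont_g (g g' : ℝ → ℝ)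
    (hderiv : ∀ t ∈ Set.Icc (0 : ℝ) 1, HasDerivWithinAt g (g' t) (Set.Icc (0 : ℝ) 1) t) :
    ContinuousOn g (Set.Icc (0 : ℝ) 1) :=
  fun t ht => (hderiv t ht).continuousWithinAt

lemma lrp_ftc (g g' : ℝ → ℝ)
    (hderiv : ∀ t ∈ Set.Icc (0 : ℝ) 1, HasDerivWithinAt g (g' t) (Set.Icc (0 : ℝ) 1) t)
    (hcont' : ContinuousOn g' (Set.Icc (0 : ℝ) 1)) :
    ∀ u v : ℝ, 0 ≤ u → u ≤ v → v ≤ 1 → ∫ t in u..v, g' t = g v - g u := by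
  intro u v hu huv hv
  have hsub : Set.Icc u v ⊆ Set.Icc (0:ℝ) 1 := Set.Icc_subset_Icc hu hv
  apply intervalIntegral.integral_eq_sub_of_hasDeriv_right_of_le huv
    ((lrp_cont_g g g' hderiv).mono hsub)
  · intro x hx
    have hx01 : x ∈ Set.Ioo (0:ℝ) 1 := ⟨lt_of_le_of_lt hu hx.1, lt_of_lt_of_le hx.2 hv⟩
    have := (hderiv x (Set.Ioo_subset_Icc_self hx01)).hasDerivAt
      (Icc_mem_nhds hx01.1 hx01.2)
    exact this.hasDerivWithinAt
  · exact (hcont'.mono ((Set.uIcc_of_le huv).trans_subset hsub)).intervalIntegrable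

/-- lower bound an integral of a nonneg function by a bound on a subinterval -/
lemma lrp_int_lower (F : ℝ → ℝ) (a b c d : ℝ) (hac : a ≤ c) (hcd : c ≤ d) (hdb : d ≤ b)
    (hF : ContinuousOn F (Set.Icc a b)) (hF0 : ∀ t, 0 ≤ F t) (E2 : ℝ)
    (hE : ∀ t ∈ Set.Icc c d, E2 ≤ F t) : (d - c) * E2 ≤ ∫ t in a..b, F t := by
  have hab : a ≤ b := le_trans hac (le_trans hcd hdb)
  have i1 : IntervalIntegrable F volume a c :=
    (hF.mono (by rw [Set.uIcc_of_le hac]; exact Set.Icc_subset_Icc le_rfl (hcd.trans hdb))).intervalIntegrable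
  have i2 : IntervalIntegrable F volume c d :=
    (hF.mono (by rw [Set.uIcc_of_le hcd]; exact Set.Icc_subset_Icc hac hdb)).intervalIntegrable
  have i3 : IntervalIntegrable F volume d b :=
    (hF.mono (by rw [Set.uIcc_of_le hdb]; exact Set.Icc_subset_Icc (hac.trans hcd) le_rfl)).intervalIntegrable
  have e1 : ∫ t in a..b, F t = (∫ t in a..c, F t) + (∫ t in c..d, F t) + ∫ t in d..b, F t := by
    rw [intervalIntegral.integral_add_adjacent_intervals i1 i2,
      intervalIntegral.integral_add_adjacent_intervals (i1.trans i2) i3]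
  have l1 : (0:ℝ) ≤ ∫ t in a..c, F t := intervalIntegral.integral_nonneg hac (fun t _ => hF0 t)
  have l3 : (0:ℝ) ≤ ∫ t in d..b, F t := intervalIntegral.integral_nonneg hdb (fun t _ => hF0 t)
  have l2 : (d - c) * E2 ≤ ∫ t in c..d, F t := by
    have : ∫ t in c..d, E2 ≤ ∫ t in c..d, F t :=
      intervalIntegral.integral_mono_on hcd intervalIntegrable_const i2 hE
    simpa using this
  linarith

lemma lrp_sep (g g' : ℝ → ℝ) (σ : ℝ) (hσ : 0 < σ)
    (hcontg : ContinuousOn g (Set.Icc (0 : ℝ) 1))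
    (hsc : ∀ t ∈ Set.Icc (0 : ℝ) 1, ∀ s ∈ Set.Icc (0 : ℝ) 1,
      σ / 2 * (t - s) ^ 2 ≤ g t - g s - g' s * (t - s))
    (a b : ℝ) (ha : 0 ≤ a) (hab : a < b) (hb : b ≤ 1) :
    ∀ w : ℝ, 28561 / 268435456 * σ ^ 2 * (b - a) ^ 5 ≤ ∫ t in a..b, |g t - w| ^ 2 := by
  intro w
  set h := b - a with hh
  have hh0 : 0 < h := sub_pos.2 hab
  set E : ℝ := 169 / 4096 * σ * h ^ 2 with hE
  have hE0 : 0 < E := by positivity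
  set m : ℝ := (a + b) / 2 with hm
  have hFc : ContinuousOn (fun t => |g t - w| ^ 2) (Set.Icc a b) := by
    apply ContinuousOn.pow
    exact ((hcontg.mono (Set.Icc_subset_Icc ha hb)).sub continuousOn_const).abs
  have hF0 : ∀ t, (0:ℝ) ≤ |g t - w| ^ 2 := fun t => by positivity
  have key : (h / 16) * E ^ 2 ≤ ∫ t in a..b, |g t - w| ^ 2 := by
    by_cases HL : ∀ t ∈ Set.Icc a (a + h/16), E ≤ |g t - w|
    · have := lrp_int_lower _ a b a (a + h/16) le_rfl (by linarith) (by linarith)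
        hFc hF0 (E^2) (fun t ht => by
          have := HL t ht; nlinarith [abs_nonneg (g t - w)])
      calc (h/16) * E^2 = (a + h/16 - a) * E^2 := by ring_nf
        _ ≤ _ := this
    by_cases HM : ∀ t ∈ Set.Icc (m - h/32) (m + h/32), E ≤ |g t - w|
    · have := lrp_int_lower _ a b (m - h/32) (m + h/32)
        (by rw [hm, hh]; linarith) (by linarith) (by rw [hm, hh]; linarith)
        hFc hF0 (E^2) (fun t ht => by
          have := HM t ht; nlinarith [abs_nonneg (g t - w)])
      calc (h/16) * E^2 = (m + h/32 - (m - h/32)) * E^2 := by ring_nf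
        _ ≤ _ := this
    by_cases HR : ∀ t ∈ Set.Icc (b - h/16) b, E ≤ |g t - w|
    · have := lrp_int_lower _ a b (b - h/16) b (by linarith) (by linarith) le_rfl
        hFc hF0 (E^2) (fun t ht => by
          have := HR t ht; nlinarith [abs_nonneg (g t - w)])
      calc (h/16) * E^2 = (b - (b - h/16)) * E^2 := by ring_nf
        _ ≤ _ := this
    · exfalso
      push_neg at HL HM HR
      obtain ⟨u, hu, hu'⟩ := HL
      obtain ⟨v, hv, hv'⟩ := HM
      obtain ⟨x, hx, hx'⟩ := HR
      have hu01 : u ∈ Set.Icc (0:ℝ) 1 := ⟨by linarith [hu.1], by linarith [hu.2, hh0.le]⟩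
      have hv01 : v ∈ Set.Icc (0:ℝ) 1 := by
        constructor
        · have := hv.1; rw [hm] at this; linarith
        · have := hv.2; rw [hm] at this; linarith
      have hx01 : x ∈ Set.Icc (0:ℝ) 1 := ⟨by linarith [hx.1], by linarith [hx.2]⟩
      have h1 := hsc u hu01 v hv01
      have h2 := hsc x hx01 v hv01
      have hp : 13/32 * h ≤ x - v := by
        have := hx.1; have := hv.2; rw [hm] at *; linarith
      have hq : 13/32 * h ≤ v - u := by
        have := hv.1; have := hu.2; rw [hm] at *; linarith
      have habs1 := abs_lt.1 hu'
      have habs2 := abs_lt.1 hv'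
      have habs3 := abs_lt.1 hx'
      have hp0 : (0:ℝ) < x - v := lt_of_lt_of_le (by positivity) hp
      have hq0 : (0:ℝ) < v - u := lt_of_lt_of_le (by positivity) hq
      have A := mul_le_mul_of_nonneg_left h1 hp0.le
      have B := mul_le_mul_of_nonneg_left h2 hq0.le
      have comb : σ/2 * ((x-v)*(v-u)*((x-v)+(v-u)))
          ≤ (x-v)*(g u - g v) + (v-u)*(g x - g v) := by nlinarith [A, B]
      have C : (x-v)*(g u - g v) + (v-u)*(g x - g v)
          < 2*((x-v)+(v-u))*E := by
        have c1 : (x-v)*(g u - w) < (x-v)*E := by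
          exact mul_lt_mul_of_pos_left habs1.2 hp0
        have c2 : (v-u)*(g x - w) < (v-u)*E := by
          exact mul_lt_mul_of_pos_left habs3.2 hq0
        have c3 : ((x-v)+(v-u))*(-(g v - w)) < ((x-v)+(v-u))*E := by
          apply mul_lt_mul_of_pos_left _ (by linarith)
          linarith [habs2.1]
        linarith [c1, c2, c3]
      have hpq : (13/32*h)*(13/32*h) ≤ (x-v)*(v-u) :=
        mul_le_mul hp hq (by positivity) hp0.le
      have h4E : 2*E ≤ σ/2*((x-v)*(v-u)) := by
        have := mul_le_mul_of_nonneg_left hpq (by positivity : (0:ℝ) ≤ σ/2)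
        rw [hE]; nlinarith [this]
      have hs0 : (0:ℝ) < (x-v)+(v-u) := by linarith
      linarith [mul_le_mul_of_nonneg_right h4E hs0.le, comb, C]
  calc 28561 / 268435456 * σ ^ 2 * h ^ 5 = (h/16) * E^2 := by rw [hE]; ring
    _ ≤ _ := key

lemma lrp_mono (g g' : ℝ → ℝ) (σ L : ℝ) (hσ : 0 < σ) (hσL : σ < L)
    (hderiv : ∀ t ∈ Set.Icc (0 : ℝ) 1, HasDerivWithinAt g (g' t) (Set.Icc (0 : ℝ) 1) t)
    (hsc : ∀ t ∈ Set.Icc (0 : ℝ) 1, ∀ s ∈ Set.Icc (0 : ℝ) 1,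
      σ / 2 * (t - s) ^ 2 ≤ g t - g s - g' s * (t - s))
    (hsm : ∀ t ∈ Set.Icc (0 : ℝ) 1, ∀ s ∈ Set.Icc (0 : ℝ) 1,
      g t - g s - g' s * (t - s) ≤ L / 2 * (t - s) ^ 2) :
    ∀ a b : ℝ, 0 ≤ a → a < b → b ≤ 1 → 0 ≤ g' a →
      (∫ t in a..b, |g' t|) ^ 2
        ≤ (110 * L / σ) ^ 2 * (b - a)⁻¹ * ⨅ w : ℝ, ∫ t in a..b, |g t - w| ^ 2 := by
  intro a b ha hab hb hga
  have hL : (0:ℝ) < L := hσ.trans hσL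
  have hh0 : (0:ℝ) < b - a := sub_pos.2 hab
  have mlip := lrp_mono_lip g g' σ L hsc hsm
  have hcont' := lrp_cont_g' g g' σ L hσ hσL hsc hsm
  have hcontg := lrp_cont_g g g' hderiv
  have ftc := lrp_ftc g g' hderiv hcont'
  have hsub : Set.Icc a b ⊆ Set.Icc (0:ℝ) 1 := Set.Icc_subset_Icc ha hb
  have hg'0 : ∀ t ∈ Set.Icc a b, 0 ≤ g' t := by
    intro t ht
    have := (mlip a (hsub ⟨le_rfl, hab.le⟩) t (hsub ht) ht.1).1
    nlinarith [ht.1, hσ.le]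
  have hg'b : ∀ t ∈ Set.Icc a b, g' t ≤ g' b := by
    intro t ht
    have := (mlip t (hsub ht) b (hsub ⟨hab.le, le_rfl⟩) ht.2).1
    nlinarith [ht.2, hσ.le]
  have hgb0 : 0 < g' b := by
    have := (mlip a (hsub ⟨le_rfl, hab.le⟩) b (hsub ⟨hab.le, le_rfl⟩) hab.le).1
    nlinarith
  -- the integral of |g'|
  have hIeq : (∫ t in a..b, |g' t|) = g b - g a := by
    rw [← ftc a b ha hab.le hb]
    apply intervalIntegral.integral_congr
    intro t ht
    rw [Set.uIcc_of_le hab.le] at ht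
    exact abs_of_nonneg (hg'0 t ht)
  have hI0 : 0 ≤ ∫ t in a..b, |g' t| :=
    intervalIntegral.integral_nonneg hab.le (fun t _ => abs_nonneg _)
  have hIub : (∫ t in a..b, |g' t|) ≤ (b - a) * g' b := by
    have : (∫ t in a..b, |g' t|) ≤ ∫ t in a..b, g' b := by
      apply intervalIntegral.integral_mono_on hab.le
      · exact ((hcont'.mono hsub).mono (by rw [Set.uIcc_of_le hab.le] : Set.uIcc a b ⊆ Set.Icc a b)).abs.intervalIntegrable
      · exact intervalIntegrable_const
      · intro t ht
        rw [abs_of_nonneg (hg'0 t ht)]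
        exact hg'b t ht
    simpa [smul_eq_mul] using this
  have hC0 : (0:ℝ) ≤ (110 * L / σ) ^ 2 * (b - a)⁻¹ := by positivity
  have gmono : ∀ s ∈ Set.Icc a b, ∀ t ∈ Set.Icc a b, s ≤ t → g s ≤ g t := by
    intro s hs t ht hst
    have e := ftc s t (by linarith [hs.1]) hst (by linarith [ht.2])
    have : (0:ℝ) ≤ ∫ u in s..t, g' u := by
      apply intervalIntegral.integral_nonneg hst
      intro u hu
      exact hg'0 u ⟨le_trans hs.1 hu.1, le_trans hu.2 ht.2⟩
    linarith [e ▸ this]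
  rcases le_or_gt (g' b) (L * (b - a)) with hcase | hcase
  · -- flat case : use the separation lower bound
    have hV := lrp_sep g g' σ hσ hcontg hsc a b ha hab hb
    have hinf : 28561 / 268435456 * σ ^ 2 * (b - a) ^ 5
        ≤ ⨅ w : ℝ, ∫ t in a..b, |g t - w| ^ 2 := le_ciInf hV
    calc (∫ t in a..b, |g' t|) ^ 2
        ≤ ((b - a) * (L * (b - a))) ^ 2 := by
          nlinarith [hIub, hI0, mul_le_mul_of_nonneg_left hcase hh0.le]
      _ ≤ (110 * L / σ) ^ 2 * (b - a)⁻¹ * (28561 / 268435456 * σ ^ 2 * (b - a) ^ 5) := by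
          have hrw : (110 * L / σ) ^ 2 * (b - a)⁻¹ * (28561 / 268435456 * σ ^ 2 * (b - a) ^ 5)
              = 345588100 / 268435456 * (L ^ 2 * (b - a) ^ 4) := by
            field_simp
            ring
          rw [hrw]
          nlinarith [sq_nonneg (L * (b - a))]
      _ ≤ _ := by
          apply mul_le_mul_of_nonneg_left hinf hC0
  · -- steep case : two-interval lower bound near b
    set M := g' b with hM
    set A := g (b - (b - a)/4) with hA
    set B := g (a + (b - a)/4) with hB
    have hABm : a + (b-a)/4 ≤ b - (b-a)/2 := by linarith
    have hmem1 : b - (b-a)/2 ∈ Set.Icc a b := ⟨by linarith, by linarith⟩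
    have hmem2 : b - (b-a)/4 ∈ Set.Icc a b := ⟨by linarith, by linarith⟩
    have hmem3 : a + (b-a)/4 ∈ Set.Icc a b := ⟨by linarith, by linarith⟩
    have hg'mid : M / 2 ≤ g' (b - (b - a)/2) := by
      have := (mlip (b - (b-a)/2) (hsub hmem1) b (hsub ⟨hab.le, le_rfl⟩) (by linarith)).2
      nlinarith
    have hD' : (b - a)/8 * M ≤ A - B := by
      have e1 : g (b - (b-a)/4) - g (b - (b-a)/2) = ∫ t in (b - (b-a)/2)..(b - (b-a)/4), g' t := by
        rw [ftc _ _ (by linarith) (by linarith) (by linarith)]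
      have e2 : (b - a)/4 * (M/2) ≤ ∫ t in (b - (b-a)/2)..(b - (b-a)/4), g' t := by
        have : ∫ t in (b - (b-a)/2)..(b - (b-a)/4), (M/2 : ℝ)
            ≤ ∫ t in (b - (b-a)/2)..(b - (b-a)/4), g' t := by
          apply intervalIntegral.integral_mono_on (by linarith)
          · exact intervalIntegrable_const
          · apply ContinuousOn.intervalIntegrable
            apply hcont'.mono
            rw [Set.uIcc_of_le (by linarith : b - (b-a)/2 ≤ b - (b-a)/4)]
            exact Set.Icc_subset_Icc (by linarith) (by linarith)
          · intro t ht
            have := (mlip (b - (b-a)/2) (hsub hmem1) t (hsub ⟨by linarith [ht.1], by linarith [ht.2]⟩) ht.1).1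
            nlinarith [ht.1, hσ.le, hg'mid]
        rw [intervalIntegral.integral_const, smul_eq_mul] at this
        calc (b-a)/4 * (M/2) = ((b - (b-a)/4) - (b - (b-a)/2)) * (M/2) := by ring
          _ ≤ _ := this
      have e3 : g (a + (b-a)/4) ≤ g (b - (b-a)/2) :=
        gmono _ hmem3 _ hmem1 hABm
      rw [hA, hB]; linarith [e1 ▸ e2]
    have hD'0 : 0 < A - B := lt_of_lt_of_le (by positivity) hD'
    have hV : ∀ w : ℝ, (b - a)/4 * ((A - B)/2) ^ 2 ≤ ∫ t in a..b, |g t - w| ^ 2 := by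
      intro w
      have hFc : ContinuousOn (fun t => |g t - w| ^ 2) (Set.Icc a b) :=
        (((hcontg.mono hsub).sub continuousOn_const).abs).pow 2
      have hF0 : ∀ t, (0:ℝ) ≤ |g t - w| ^ 2 := fun t => by positivity
      rcases le_or_gt w ((A + B)/2) with hw | hw
      · have := lrp_int_lower _ a b (b - (b-a)/4) b (by linarith) (by linarith) le_rfl
          hFc hF0 (((A - B)/2)^2) (fun t ht => by
            have hgt : A ≤ g t := gmono _ hmem2 _ ⟨by linarith [ht.1], ht.2⟩ ht.1
            have h1 : (A - B)/2 ≤ g t - w := by linarith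
            calc ((A - B)/2)^2 ≤ (g t - w)^2 := by nlinarith
              _ ≤ |g t - w| ^ 2 := by rw [sq_abs]
            )
        calc (b-a)/4 * ((A - B)/2)^2 = (b - (b - (b-a)/4)) * ((A - B)/2)^2 := by ring
          _ ≤ _ := this
      · have := lrp_int_lower _ a b a (a + (b-a)/4) le_rfl (by linarith) (by linarith)
          hFc hF0 (((A - B)/2)^2) (fun t ht => by
            have hgt : g t ≤ B := gmono _ ⟨ht.1, by linarith [ht.2]⟩ _ hmem3 ht.2
            have h1 : (A - B)/2 ≤ w - g t := by linarith
            calc ((A - B)/2)^2 ≤ (g t - w)^2 := by nlinarith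
              _ ≤ |g t - w| ^ 2 := by rw [sq_abs]
            )
        calc (b-a)/4 * ((A - B)/2)^2 = (a + (b-a)/4 - a) * ((A - B)/2)^2 := by ring
          _ ≤ _ := this
    have hinf := le_ciInf hV
    calc (∫ t in a..b, |g' t|) ^ 2
        ≤ ((b - a) * M) ^ 2 := by nlinarith [hIub, hI0]
      _ ≤ (110 * L / σ) ^ 2 * (b - a)⁻¹ * ((b - a)/4 * ((A - B)/2) ^ 2) := by
          have hrw : (110 * L / σ) ^ 2 * (b - a)⁻¹ * ((b - a)/4 * ((A - B)/2) ^ 2)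
              = 12100 / 16 * (L / σ) ^ 2 * (A - B) ^ 2 := by
            field_simp
            ring
          rw [hrw]
          have hK : (1:ℝ) ≤ (L / σ) ^ 2 := by
            have h1 : (1:ℝ) ≤ L / σ := (one_le_div hσ).2 hσL.le
            nlinarith [h1]
          have hD2 : ((b - a)/8 * M)^2 ≤ (A - B)^2 := by
            apply pow_le_pow_left₀ (by positivity) hD'
          nlinarith [sq_nonneg ((b-a) * M), hD2, hK, sq_nonneg (A - B)]
      _ ≤ _ := by
          apply mul_le_mul_of_nonneg_left hinf hC0

/-- **Example (smooth strongly convex functions are in `LRP([0,1], 110 L/σ)`).**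
If `g` is differentiable on `[0,1]`, `L`-smooth and `σ`-strongly convex (`0 < σ < L`),
then for every subinterval `[a,b] ⊆ [0,1]` with `a < b`,
`(∫_a^b |g'|)² ≤ (110 L/σ)² (b−a)⁻¹ inf_w ∫_a^b |g−w|²`. -/
theorem lrp_smooth_strongly_convex (g g' : ℝ → ℝ) (σ L : ℝ) (hσ : 0 < σ) (hσL : σ < L)
    (hderiv : ∀ t ∈ Set.Icc (0 : ℝ) 1, HasDerivWithinAt g (g' t) (Set.Icc (0 : ℝ) 1) t)
    (hsc : ∀ t ∈ Set.Icc (0 : ℝ) 1, ∀ s ∈ Set.Icc (0 : ℝ) 1,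
      σ / 2 * (t - s) ^ 2 ≤ g t - g s - g' s * (t - s))
    (hsm : ∀ t ∈ Set.Icc (0 : ℝ) 1, ∀ s ∈ Set.Icc (0 : ℝ) 1,
      g t - g s - g' s * (t - s) ≤ L / 2 * (t - s) ^ 2) :
    ∀ a b : ℝ, 0 ≤ a → a < b → b ≤ 1 →
      (∫ t in a..b, |g' t|) ^ 2
        ≤ (110 * L / σ) ^ 2 * (b - a)⁻¹ * ⨅ w : ℝ, ∫ t in a..b, |g t - w| ^ 2 := by
  intro a b ha hab hb
  have hL : (0:ℝ) < L := hσ.trans hσL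
  have hh0 : (0:ℝ) < b - a := sub_pos.2 hab
  rcases le_or_gt 0 (g' a) with hga | hga
  · exact lrp_mono g g' σ L hσ hσL hderiv hsc hsm a b ha hab hb hga
  rcases le_or_gt (g' b) 0 with hgb | hgb
  · -- decreasing case, by reflection t ↦ 1 - t
    have hd : ∀ t ∈ Set.Icc (0 : ℝ) 1,
        HasDerivWithinAt (fun u => g (1 - u)) (-g' (1 - t)) (Set.Icc (0 : ℝ) 1) t := by
      intro t ht
      have h1t : (1 : ℝ) - t ∈ Set.Icc (0:ℝ) 1 := ⟨by linarith [ht.2], by linarith [ht.1]⟩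
      have hcomp := HasDerivWithinAt.comp t (hderiv (1 - t) h1t)
        ((hasDerivWithinAt_id t (Set.Icc (0:ℝ) 1)).const_sub 1)
        (fun x hx => ⟨by linarith [hx.2], by linarith [hx.1]⟩)
      have : g' (1 - t) * (-1) = -g' (1 - t) := by ring
      rw [this] at hcomp
      exact hcomp
    have hs1 : ∀ t ∈ Set.Icc (0 : ℝ) 1, ∀ s ∈ Set.Icc (0 : ℝ) 1,
        σ / 2 * (t - s) ^ 2 ≤ g (1 - t) - g (1 - s) - (-g' (1 - s)) * (t - s) := by
      intro t ht s hs
      have := hsc (1 - t) ⟨by linarith [ht.2], by linarith [ht.1]⟩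
        (1 - s) ⟨by linarith [hs.2], by linarith [hs.1]⟩
      nlinarith [this]
    have hs2 : ∀ t ∈ Set.Icc (0 : ℝ) 1, ∀ s ∈ Set.Icc (0 : ℝ) 1,
        g (1 - t) - g (1 - s) - (-g' (1 - s)) * (t - s) ≤ L / 2 * (t - s) ^ 2 := by
      intro t ht s hs
      have := hsm (1 - t) ⟨by linarith [ht.2], by linarith [ht.1]⟩
        (1 - s) ⟨by linarith [hs.2], by linarith [hs.1]⟩
      nlinarith [this]
    have key := lrp_mono (fun u => g (1 - u)) (fun u => -g' (1 - u)) σ L hσ hσL hd hs1 hs2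
      (1 - b) (1 - a) (by linarith) (by linarith) (by linarith)
      (by simp only [sub_sub_cancel]; linarith)
    have e1 : (∫ t in (1-b)..(1-a), |-g' (1 - t)|) = ∫ t in a..b, |g' t| := by
      simp only [abs_neg]
      have := intervalIntegral.integral_comp_sub_left (fun u => |g' u|) 1
        (a := 1 - b) (b := 1 - a)
      simpa [sub_sub_cancel] using this
    have einf : (⨅ w : ℝ, ∫ t in (1-b)..(1-a), |g (1 - t) - w| ^ 2)
        = ⨅ w : ℝ, ∫ t in a..b, |g t - w| ^ 2 := by
      apply iInf_congr
      intro w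
      have := intervalIntegral.integral_comp_sub_left (fun u => |g u - w| ^ 2) 1
        (a := 1 - b) (b := 1 - a)
      simpa [sub_sub_cancel] using this
    calc (∫ t in a..b, |g' t|) ^ 2
        = (∫ t in (1-b)..(1-a), |-g' (1 - t)|) ^ 2 := by rw [e1]
      _ ≤ (110 * L / σ) ^ 2 * ((1-a) - (1-b))⁻¹
          * ⨅ w : ℝ, ∫ t in (1-b)..(1-a), |g (1 - t) - w| ^ 2 := key
      _ = (110 * L / σ) ^ 2 * (b - a)⁻¹ * ⨅ w : ℝ, ∫ t in a..b, |g t - w| ^ 2 := by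
          rw [einf, show (1:ℝ) - a - (1 - b) = b - a from by ring]
  · -- interior minimum case
    have mlip := lrp_mono_lip g g' σ L hsc hsm
    have hcont' := lrp_cont_g' g g' σ L hσ hσL hsc hsm
    have hcontg := lrp_cont_g g g' hderiv
    have ftc := lrp_ftc g g' hderiv hcont'
    have hsub : Set.Icc a b ⊆ Set.Icc (0:ℝ) 1 := Set.Icc_subset_Icc ha hb
    obtain ⟨c, hc, hc0⟩ := intermediate_value_Icc hab.le (hcont'.mono hsub)
      (Set.mem_Icc.2 ⟨hga.le, hgb.le⟩)
    have hc01 : c ∈ Set.Icc (0:ℝ) 1 := hsub hc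
    have hneg : ∀ t ∈ Set.Icc a c, g' t ≤ 0 := by
      intro t ht
      have := (mlip t (hsub ⟨ht.1, le_trans ht.2 hc.2⟩) c hc01 ht.2).1
      nlinarith [ht.2, hσ.le, hc0]
    have hpos : ∀ t ∈ Set.Icc c b, 0 ≤ g' t := by
      intro t ht
      have := (mlip c hc01 t (hsub ⟨le_trans hc.1 ht.1, ht.2⟩) ht.1).1
      nlinarith [ht.1, hσ.le, hc0]
    have i1 : IntervalIntegrable (fun t => |g' t|) volume a c := by
      apply ContinuousOn.intervalIntegrable
      apply ContinuousOn.abs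
      apply hcont'.mono
      rw [Set.uIcc_of_le hc.1]
      exact Set.Icc_subset_Icc ha (le_trans hc.2 hb)
    have i2 : IntervalIntegrable (fun t => |g' t|) volume c b := by
      apply ContinuousOn.intervalIntegrable
      apply ContinuousOn.abs
      apply hcont'.mono
      rw [Set.uIcc_of_le hc.2]
      exact Set.Icc_subset_Icc (le_trans ha hc.1) hb
    have hsplit : (∫ t in a..b, |g' t|) = (∫ t in a..c, |g' t|) + ∫ t in c..b, |g' t| :=
      (intervalIntegral.integral_add_adjacent_intervals i1 i2).symm
    have e1 : (∫ t in a..c, |g' t|) = g a - g c := by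
      have : (∫ t in a..c, |g' t|) = ∫ t in a..c, -g' t := by
        apply intervalIntegral.integral_congr
        intro t ht
        rw [Set.uIcc_of_le hc.1] at ht
        exact abs_of_nonpos (hneg t ht)
      rw [this, intervalIntegral.integral_neg, ftc a c ha hc.1 (le_trans hc.2 hb)]
      ring
    have e2 : (∫ t in c..b, |g' t|) = g b - g c := by
      have : (∫ t in c..b, |g' t|) = ∫ t in c..b, g' t := by
        apply intervalIntegral.integral_congr
        intro t ht
        rw [Set.uIcc_of_le hc.2] at ht
        exact abs_of_nonneg (hpos t ht)
      rw [this, ftc c b (le_trans ha hc.1) hc.2 hb]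
    have bound1 : g a - g c ≤ L / 2 * (a - c) ^ 2 := by
      have h := hsm a (hsub ⟨le_rfl, hab.le⟩) c hc01
      have h0 : g' c * (a - c) = 0 := by rw [hc0]; ring
      linarith [h, h0]
    have bound2 : g b - g c ≤ L / 2 * (b - c) ^ 2 := by
      have h := hsm b (hsub ⟨hab.le, le_rfl⟩) c hc01
      have h0 : g' c * (b - c) = 0 := by rw [hc0]; ring
      linarith [h, h0]
    have hIub : (∫ t in a..b, |g' t|) ≤ L / 2 * (b - a) ^ 2 := by
      rw [hsplit, e1, e2]
      nlinarith [bound1, bound2, mul_nonneg hL.le (mul_nonneg (sub_nonneg.2 hc.1) (sub_nonneg.2 hc.2))]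
    have hI0 : 0 ≤ ∫ t in a..b, |g' t| :=
      intervalIntegral.integral_nonneg hab.le (fun t _ => abs_nonneg _)
    have hV := lrp_sep g g' σ hσ hcontg hsc a b ha hab hb
    have hinf : 28561 / 268435456 * σ ^ 2 * (b - a) ^ 5
        ≤ ⨅ w : ℝ, ∫ t in a..b, |g t - w| ^ 2 := le_ciInf hV
    have hC0 : (0:ℝ) ≤ (110 * L / σ) ^ 2 * (b - a)⁻¹ := by positivity
    calc (∫ t in a..b, |g' t|) ^ 2
        ≤ (L / 2 * (b - a) ^ 2) ^ 2 := by nlinarith [hIub, hI0]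
      _ ≤ (110 * L / σ) ^ 2 * (b - a)⁻¹ * (28561 / 268435456 * σ ^ 2 * (b - a) ^ 5) := by
          have hrw : (110 * L / σ) ^ 2 * (b - a)⁻¹ * (28561 / 268435456 * σ ^ 2 * (b - a) ^ 5)
              = 345588100 / 268435456 * (L ^ 2 * (b - a) ^ 4) := by
            field_simp
            ring
          rw [hrw]
          nlinarith [sq_nonneg (L * (b - a))]
      _ ≤ _ := mul_le_mul_of_nonneg_left hinf hC0
end
end

section
/- For every integer r ≥ 0 there exists a constant C_r > 0, depending only on r, such that every real polynomial g of degree at most r satisfies, for all real numbers a < b, (∫_a^b |g'(t)| dt)² ≤ (C_r/(b−a)) · inf_{w ∈ ℝ} ∫_a^b |g(t) − w|² dt; that is, g ∈ LRP(ℝ, √C_r). -/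
open MeasureTheory Set Filter

noncomputable section

namespace LRPPoly

open Polynomial intervalIntegral

/-- The polynomial with coefficient vector `c`. -/
def Phi (r : ℕ) (c : Fin (r+1) → ℝ) : Polynomial ℝ :=
  ∑ i : Fin (r+1), Polynomial.C (c i) * Polynomial.X ^ (i : ℕ)

lemma Phi_eval (r : ℕ) (c : Fin (r+1) → ℝ) (s : ℝ) :
    (Phi r c).eval s = ∑ i : Fin (r+1), c i * s ^ (i : ℕ) := by
  simp [Phi, Polynomial.eval_finset_sum]

lemma Phi_deriv_eval (r : ℕ) (c : Fin (r+1) → ℝ) (s : ℝ) :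
    (Polynomial.derivative (Phi r c)).eval s
      = ∑ i : Fin (r+1), c i * ((i : ℕ) * s ^ ((i : ℕ) - 1)) := by
  simp [Phi, Polynomial.derivative_C_mul_X_pow, Polynomial.derivative_X_pow, Polynomial.eval_finset_sum, mul_assoc]

lemma Phi_coeff (r : ℕ) (c : Fin (r+1) → ℝ) (j : Fin (r+1)) :
    (Phi r c).coeff (j : ℕ) = c j := by
  simp only [Phi, Polynomial.finset_sum_coeff, Polynomial.coeff_C_mul,
    Polynomial.coeff_X_pow, mul_ite, mul_one, mul_zero]
  rw [Finset.sum_eq_single j]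
  · simp
  · intro i _ hij
    have : ¬ ((j : ℕ) = (i : ℕ)) := fun h => hij (Fin.ext h.symm)
    simp [this]
  · simp

/-- `∫₀¹ |(Phi c)'|` written as an explicit function of the coefficients. -/
def Ffun (r : ℕ) (c : Fin (r+1) → ℝ) : ℝ :=
  ∫ s in (0:ℝ)..1, |∑ i : Fin (r+1), c i * ((i : ℕ) * s ^ ((i : ℕ) - 1))|

/-- `∫₀¹ (Phi c)²` written as an explicit function of the coefficients. -/
def Gfun (r : ℕ) (c : Fin (r+1) → ℝ) : ℝ :=
  ∫ s in (0:ℝ)..1, (∑ i : Fin (r+1), c i * s ^ (i : ℕ)) ^ 2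

lemma continuous_F (r : ℕ) : Continuous (Ffun r) := by
  apply intervalIntegral.continuous_parametric_intervalIntegral_of_continuous'
  apply Continuous.abs
  apply continuous_finset_sum
  intro i _
  exact Continuous.mul (by fun_prop) (by fun_prop)

lemma continuous_G (r : ℕ) : Continuous (Gfun r) := by
  apply intervalIntegral.continuous_parametric_intervalIntegral_of_continuous'
  apply Continuous.pow
  apply continuous_finset_sum
  intro i _
  exact Continuous.mul (by fun_prop) (by fun_prop)

lemma F_nonneg (r : ℕ) (c : Fin (r+1) → ℝ) : 0 ≤ Ffun r c :=
  intervalIntegral.integral_nonneg zero_le_one (fun _ _ => abs_nonneg _)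

lemma G_nonneg (r : ℕ) (c : Fin (r+1) → ℝ) : 0 ≤ Gfun r c :=
  intervalIntegral.integral_nonneg zero_le_one (fun _ _ => sq_nonneg _)

lemma F_smul (r : ℕ) (t : ℝ) (c : Fin (r+1) → ℝ) : Ffun r (t • c) = |t| * Ffun r c := by
  unfold Ffun
  rw [← intervalIntegral.integral_const_mul]
  congr 1; funext s
  rw [← abs_mul, Finset.mul_sum]
  congr 2; funext i
  simp [mul_assoc]

lemma G_smul (r : ℕ) (t : ℝ) (c : Fin (r+1) → ℝ) : Gfun r (t • c) = t ^ 2 * Gfun r c := by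
  unfold Gfun
  rw [← intervalIntegral.integral_const_mul]
  congr 1; funext s
  rw [← mul_pow, Finset.mul_sum]
  congr 2; funext i; simp [mul_assoc]

lemma G_eq_zero (r : ℕ) (c : Fin (r+1) → ℝ) (h : Gfun r c = 0) : c = 0 := by
  have hcont : Continuous fun s : ℝ => ((Phi r c).eval s) ^ 2 :=
    ((Phi r c).continuous_aeval).pow 2
  have hG : (∫ s in (0:ℝ)..1, ((Phi r c).eval s) ^ 2) = 0 := by
    rw [← h]; unfold Gfun; congr 1; funext s; rw [Phi_eval]
  have hae : (fun s => ((Phi r c).eval s) ^ 2) =ᵐ[volume.restrict (Ioc (0:ℝ) 1)] 0 := by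
    rw [← intervalIntegral.integral_eq_zero_iff_of_le_of_nonneg_ae zero_le_one
      (Eventually.of_forall fun s => sq_nonneg _) (hcont.intervalIntegrable 0 1)]
    exact hG
  have hroot : ∀ᵐ s ∂(volume.restrict (Ioc (0:ℝ) 1)), s ∈ {x | (Phi r c).IsRoot x} := by
    filter_upwards [hae] with s hs
    have : ((Phi r c).eval s) ^ 2 = 0 := hs
    simpa [Polynomial.IsRoot] using pow_eq_zero_iff (n := 2) two_ne_zero |>.mp this
  have hPhi : Phi r c = 0 := by
    apply Polynomial.eq_zero_of_infinite_isRoot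
    by_contra hfin
    rw [Set.not_infinite] at hfin
    set R := {x | (Phi r c).IsRoot x}
    have h1 : volume.restrict (Ioc (0:ℝ) 1) Rᶜ = 0 := by
      have := hroot
      rwa [ae_iff] at this
    have h2 : volume.restrict (Ioc (0:ℝ) 1) R = 0 :=
      le_antisymm (le_trans (Measure.restrict_le_self _)
        (le_of_eq (hfin.measure_zero volume))) (by simp)
    have h3 : volume.restrict (Ioc (0:ℝ) 1) univ ≤ 0 := by
      calc volume.restrict (Ioc (0:ℝ) 1) univ
          = volume.restrict (Ioc (0:ℝ) 1) (R ∪ Rᶜ) := by rw [Set.union_compl_self]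
        _ ≤ _ + _ := measure_union_le R Rᶜ
        _ = 0 := by rw [h1, h2, add_zero]
    rw [Measure.restrict_apply_univ] at h3
    simp [Real.volume_Ioc] at h3
  funext j
  have := Phi_coeff r c j
  rw [hPhi] at this
  simpa using this.symm

/-- The compactness/homogeneity step: `F² ≤ C·G` on coefficient space. -/
lemma key (r : ℕ) : ∃ C : ℝ, 0 < C ∧ ∀ c : Fin (r+1) → ℝ,
    (Ffun r c) ^ 2 ≤ C * Gfun r c := by
  set S := Metric.sphere (0 : Fin (r+1) → ℝ) 1 with hS
  have hScomp : IsCompact S := isCompact_sphere _ _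
  have hSne : S.Nonempty := NormedSpace.sphere_nonempty.mpr zero_le_one
  obtain ⟨u, huS, hu⟩ := hScomp.exists_isMinOn hSne (continuous_G r).continuousOn
  obtain ⟨v, hvS, hv⟩ := hScomp.exists_isMaxOn hSne (continuous_F r).continuousOn
  set δ := Gfun r u with hδ
  set M := Ffun r v with hM
  have hδpos : 0 < δ := by
    rcases (G_nonneg r u).lt_or_eq with h | h
    · exact h
    · exfalso
      have := G_eq_zero r u h.symm
      rw [this] at huS
      simp [hS] at huS
  have hMnn : 0 ≤ M := F_nonneg r v
  refine ⟨(M ^ 2 + 1) / δ, by positivity, fun c => ?_⟩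
  rcases eq_or_ne c 0 with rfl | hc
  · have h1 : Ffun r 0 = 0 := by
      have := F_smul r 0 0
      simpa using this
    have h2 : Gfun r 0 = 0 := by
      have := G_smul r 0 0
      simpa using this
    simp [h1, h2]
  · set t := ‖c‖ with ht
    have htpos : 0 < t := norm_pos_iff.mpr hc
    set w := t⁻¹ • c with hw
    have hwS : w ∈ S := by
      have : ‖w‖ = 1 := by
        rw [hw, norm_smul, norm_inv, Real.norm_eq_abs, abs_of_pos htpos, ← ht,
          inv_mul_cancel₀ htpos.ne']
      simpa [hS] using this
    have hcw : c = t • w := by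
      rw [hw, smul_smul, mul_inv_cancel₀ htpos.ne', one_smul]
    have hF : Ffun r c = t * Ffun r w := by
      rw [hcw, F_smul, abs_of_pos htpos]
    have hG : Gfun r c = t ^ 2 * Gfun r w := by rw [hcw, G_smul]
    have hFw : Ffun r w ≤ M := hv hwS
    have hGw : δ ≤ Gfun r w := hu hwS
    calc (Ffun r c) ^ 2 = t ^ 2 * (Ffun r w) ^ 2 := by rw [hF]; ring
      _ ≤ t ^ 2 * (M ^ 2 + 1) := by
          apply mul_le_mul_of_nonneg_left _ (sq_nonneg t)
          nlinarith [F_nonneg r w]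
      _ = (M ^ 2 + 1) / δ * (t ^ 2 * δ) := by field_simp
      _ ≤ (M ^ 2 + 1) / δ * Gfun r c := by
          apply mul_le_mul_of_nonneg_left _ (by positivity)
          rw [hG]
          exact mul_le_mul_of_nonneg_left hGw (sq_nonneg t)

/-- The key inequality at the level of polynomials, on `[0,1]`. -/
lemma key_poly (r : ℕ) : ∃ C : ℝ, 0 < C ∧ ∀ p : Polynomial ℝ, p.natDegree ≤ r →
    (∫ s in (0:ℝ)..1, |(Polynomial.derivative p).eval s|) ^ 2
      ≤ C * ∫ s in (0:ℝ)..1, (p.eval s) ^ 2 := by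
  obtain ⟨C, hC, hkey⟩ := key r
  refine ⟨C, hC, fun p hp => ?_⟩
  set c : Fin (r+1) → ℝ := fun i => p.coeff i with hc
  have hPhi : Phi r c = p := by
    rw [Phi, Fin.sum_univ_eq_sum_range (fun i => Polynomial.C (p.coeff i) * Polynomial.X ^ i)]
    conv_rhs => rw [p.as_sum_range' (r+1) (Nat.lt_succ_of_le hp)]
    exact Finset.sum_congr rfl fun i _ => by rw [Polynomial.C_mul_X_pow_eq_monomial]
  have hF : Ffun r c = ∫ s in (0:ℝ)..1, |(Polynomial.derivative p).eval s| := by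
    unfold Ffun
    congr 1; funext s
    rw [← Phi_deriv_eval, hPhi]
  have hG : Gfun r c = ∫ s in (0:ℝ)..1, (p.eval s) ^ 2 := by
    unfold Gfun
    congr 1; funext s
    rw [← Phi_eval, hPhi]
  rw [← hF, ← hG]
  exact hkey c

end LRPPoly

/-- **Example (polynomials of degree at most `r` are in `LRP(ℝ, √C_r)`).**
For every `r` there is a constant `C_r > 0`, depending only on `r`, such that every
polynomial `g` of degree at most `r` satisfies, for all `a < b`,
`(∫_a^b |g'|)² ≤ (C_r/(b−a)) inf_w ∫_a^b |g−w|²`. -/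
theorem lrp_polynomial (r : ℕ) :
    ∃ C : ℝ, 0 < C ∧ ∀ g : Polynomial ℝ, g.natDegree ≤ r → ∀ a b : ℝ, a < b →
      (∫ t in a..b, |(Polynomial.derivative g).eval t|) ^ 2
        ≤ C / (b - a) * ⨅ w : ℝ, ∫ t in a..b, |g.eval t - w| ^ 2 := by
  classical
  obtain ⟨C, hC, hkey⟩ := LRPPoly.key_poly r
  refine ⟨C, hC, fun g hg a b hab => ?_⟩
  have hba : (0:ℝ) < b - a := sub_pos.mpr hab
  set k : ℝ := C / (b - a) with hk
  have hkpos : 0 < k := div_pos hC hba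
  set L : ℝ := ∫ t in a..b, |(Polynomial.derivative g).eval t| with hL
  -- the inequality for every fixed `w`
  have hper : ∀ w : ℝ, L ^ 2 ≤ k * ∫ t in a..b, |g.eval t - w| ^ 2 := by
    intro w
    set ℓ : Polynomial ℝ := Polynomial.C (b - a) * Polynomial.X + Polynomial.C a with hℓ
    set p : Polynomial ℝ := g.comp ℓ - Polynomial.C w with hpdef
    have hdegℓ : ℓ.natDegree = 1 := Polynomial.natDegree_linear hba.ne'
    have hdegp : p.natDegree ≤ r := by
      rw [hpdef, Polynomial.natDegree_sub_C, Polynomial.natDegree_comp, hdegℓ, mul_one]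
      exact hg
    have hevℓ : ∀ s : ℝ, ℓ.eval s = (b - a) * s + a := by intro s; simp [hℓ]
    have hev : ∀ s : ℝ, p.eval s = g.eval ((b - a) * s + a) - w := by
      intro s; simp [hpdef, Polynomial.eval_comp, hevℓ]
    have hdev : ∀ s : ℝ, (Polynomial.derivative p).eval s
        = (b - a) * (Polynomial.derivative g).eval ((b - a) * s + a) := by
      intro s
      rw [hpdef]
      simp [Polynomial.derivative_comp, hℓ, Polynomial.eval_comp]
    -- substitution for the derivative integral
    have hcontg' : Continuous fun t : ℝ => |(Polynomial.derivative g).eval t| :=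
      ((Polynomial.derivative g).continuous_aeval).abs
    have hsub1 : (∫ s in (0:ℝ)..1, |(Polynomial.derivative g).eval ((b - a) * s + a)|)
        = (b - a)⁻¹ * L := by
      have := intervalIntegral.integral_comp_mul_add
        (a := (0:ℝ)) (b := 1) (f := fun t => |(Polynomial.derivative g).eval t|)
        hba.ne' a
      rw [this]
      norm_num [hL]
    have hLp : (∫ s in (0:ℝ)..1, |(Polynomial.derivative p).eval s|) = L := by
      have : (fun s : ℝ => |(Polynomial.derivative p).eval s|)
          = fun s => (b - a) * |(Polynomial.derivative g).eval ((b - a) * s + a)| := by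
        funext s
        rw [hdev, abs_mul, abs_of_pos hba]
      rw [this, intervalIntegral.integral_const_mul, hsub1]
      field_simp
    -- substitution for the square integral
    have hsub2 : (∫ s in (0:ℝ)..1, |g.eval ((b - a) * s + a) - w| ^ 2)
        = (b - a)⁻¹ * ∫ t in a..b, |g.eval t - w| ^ 2 := by
      have := intervalIntegral.integral_comp_mul_add
        (a := (0:ℝ)) (b := 1) (f := fun t => |g.eval t - w| ^ 2)
        hba.ne' a
      rw [this]
      norm_num
    have hGp : (∫ s in (0:ℝ)..1, (p.eval s) ^ 2)
        = (b - a)⁻¹ * ∫ t in a..b, |g.eval t - w| ^ 2 := by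
      rw [← hsub2]
      congr 1; funext s
      rw [hev, ← sq_abs]
    have := hkey p hdegp
    rw [hLp, hGp] at this
    calc L ^ 2 ≤ C * ((b - a)⁻¹ * ∫ t in a..b, |g.eval t - w| ^ 2) := this
      _ = k * ∫ t in a..b, |g.eval t - w| ^ 2 := by rw [hk]; ring
  -- pass to the infimum
  have hinf : L ^ 2 / k ≤ ⨅ w : ℝ, ∫ t in a..b, |g.eval t - w| ^ 2 := by
    apply le_ciInf
    intro w
    rw [div_le_iff₀ hkpos]
    calc L ^ 2 ≤ k * ∫ t in a..b, |g.eval t - w| ^ 2 := hper w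
      _ = (∫ t in a..b, |g.eval t - w| ^ 2) * k := mul_comm _ _
  calc L ^ 2 = k * (L ^ 2 / k) := by field_simp
    _ ≤ k * ⨅ w : ℝ, ∫ t in a..b, |g.eval t - w| ^ 2 :=
        mul_le_mul_of_nonneg_left hinf hkpos.le
end
end

section
/- Let [a,b] ⊆ [0,1] with a < b and let c ∈ (a,b). Let h: [a,b] → ℝ be continuously differentiable on (a,c) and on (c,b) with |h'| Lebesgue-integrable on (a,c) ∪ (c,b), with h(s) − h(t) = ∫_t^s h'(τ) dτ whenever t, s lie in the same of these two intervals, and suppose the one-sided limits h(c−) := lim_{t→c−} h(t) and h(c+) := lim_{t→c+} h(t) exist and are finite; set Δh(c) := h(c+) − h(c−). If |Δh(c)| > 4 · max{∫_a^c |h'(t)| dt, ∫_c^b |h'(t)| dt}, then inf_{w ∈ ℝ} ∫_a^b (h(t) − w)² dt ≥ min{c − a, b − c} · (Δh(c))² / 16. -/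
open MeasureTheory Set Filter

noncomputable section

/-- Auxiliary: a continuous, bounded function squared is integrable on a finite-measure set. -/
lemma sq_integrableOn_of_bounded {s : Set ℝ} (hs : MeasurableSet s) (hfin : volume s ≠ ⊤)
    {f : ℝ → ℝ} (hf : ContinuousOn f s) {C : ℝ} (hC : ∀ t ∈ s, |f t| ≤ C) :
    IntegrableOn (fun t => f t ^ 2) s volume := by
  refine Integrable.mono' (g := fun _ => C ^ 2)
    ((integrableOn_const_iff).mpr (Or.inr hfin.lt_top)) ?_ ?_
  · exact ((hf.pow 2)).aestronglyMeasurable hs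
  · rw [ae_restrict_iff' hs]
    refine Filter.Eventually.of_forall fun t ht => ?_
    calc ‖f t ^ 2‖ = |f t| ^ 2 := by rw [Real.norm_eq_abs, abs_pow]
      _ ≤ C ^ 2 := pow_le_pow_left₀ (abs_nonneg _) (hC t ht) 2

/-- Auxiliary: lower bound for an integral over a superset via a constant bound on a piece. -/
lemma integral_ge_piece {g : ℝ → ℝ} {s T : Set ℝ} (hsT : s ⊆ T) (hmeas : MeasurableSet s)
    (hfin : volume s ≠ ⊤) (hintT : IntegrableOn g T volume) (hints : IntegrableOn g s volume)
    (hnn : ∀ t, 0 ≤ g t) {K : ℝ} (hK : ∀ t ∈ s, K ≤ g t) :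
    K * (volume s).toReal ≤ ∫ t in T, g t := by
  refine le_trans (setIntegral_ge_of_const_le_real hmeas hfin hK hints) ?_
  exact setIntegral_mono_set hintT (Filter.Eventually.of_forall hnn)
    (HasSubset.Subset.eventuallyLE hsT)

/-- **Lemma (a large jump forces large L² distance to constants).**
Let `[a,b] ⊆ [0,1]`, `c ∈ (a,b)`, and let `h` be continuously differentiable on `(a,c)` and
on `(c,b)` with `|h'|` integrable on both pieces and satisfying the fundamental theorem of
calculus on each piece. Suppose the one-sided limits `h(c−) = hcm` and `h(c+) = hcp` exist
and are finite, and that the jump `Δh(c) = hcp − hcm` satisfies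
`|Δh(c)| > 4 max{∫_a^c |h'|, ∫_c^b |h'|}`. Then
`inf_w ∫_a^b (h−w)² ≥ min{c−a, b−c} (Δh(c))²/16`. -/
theorem jump_forces_l2_distance (a b c : ℝ) (h h' : ℝ → ℝ)
    (ha : 0 ≤ a) (hb : b ≤ 1) (hac : a < c) (hcb : c < b)
    (hd1 : ∀ t ∈ Set.Ioo a c, HasDerivAt h (h' t) t)
    (hd2 : ∀ t ∈ Set.Ioo c b, HasDerivAt h (h' t) t)
    (hcont1 : ContinuousOn h' (Set.Ioo a c))
    (hcont2 : ContinuousOn h' (Set.Ioo c b))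
    (hint1 : IntegrableOn (fun t => |h' t|) (Set.Ioo a c) volume)
    (hint2 : IntegrableOn (fun t => |h' t|) (Set.Ioo c b) volume)
    (hftc1 : ∀ t ∈ Set.Ioo a c, ∀ s ∈ Set.Ioo a c, h s - h t = ∫ τ in t..s, h' τ)
    (hftc2 : ∀ t ∈ Set.Ioo c b, ∀ s ∈ Set.Ioo c b, h s - h t = ∫ τ in t..s, h' τ)
    (hcm hcp : ℝ)
    (hlimL : Tendsto h (nhdsWithin c (Set.Iio c)) (nhds hcm))
    (hlimR : Tendsto h (nhdsWithin c (Set.Ioi c)) (nhds hcp))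
    (hjump : 4 * max (∫ t in a..c, |h' t|) (∫ t in c..b, |h' t|) < |hcp - hcm|) :
    (⨅ w : ℝ, ∫ t in a..b, (h t - w) ^ 2) ≥ min (c - a) (b - c) * (hcp - hcm) ^ 2 / 16 := by
  set Δ := hcp - hcm with hΔ
  set M1 := ∫ t in a..c, |h' t| with hM1
  set M2 := ∫ t in c..b, |h' t| with hM2
  have hab : a < b := hac.trans hcb
  have hM1nn : 0 ≤ M1 :=
    intervalIntegral.integral_nonneg hac.le (fun t _ => abs_nonneg _)
  have hM2nn : 0 ≤ M2 :=
    intervalIntegral.integral_nonneg hcb.le (fun t _ => abs_nonneg _)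
  have hM1lt : M1 < |Δ| / 4 := by
    have := le_max_left M1 M2; linarith
  have hM2lt : M2 < |Δ| / 4 := by
    have := le_max_right M1 M2; linarith
  -- difference bound on (a,c) and on (c,b)
  have hdiff1 : ∀ t ∈ Set.Ioo a c, ∀ s ∈ Set.Ioo a c, t ≤ s → |h s - h t| ≤ M1 := by
    intro t ht s hs hts
    rw [hftc1 t ht s hs]
    calc |∫ τ in t..s, h' τ| ≤ ∫ τ in t..s, |h' τ| :=
          intervalIntegral.abs_integral_le_integral_abs hts
      _ = ∫ τ in Set.Ioc t s, |h' τ| := intervalIntegral.integral_of_le hts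
      _ ≤ ∫ τ in Set.Ioo a c, |h' τ| := by
          refine setIntegral_mono_set hint1 ?_ ?_
          · exact Filter.Eventually.of_forall fun τ => abs_nonneg _
          · refine HasSubset.Subset.eventuallyLE fun τ hτ => ?_
            exact ⟨ht.1.trans hτ.1, hτ.2.trans_lt hs.2⟩
      _ = M1 := by
          rw [hM1, intervalIntegral.integral_of_le hac.le,
            MeasureTheory.integral_Ioc_eq_integral_Ioo]
  have hdiff2 : ∀ t ∈ Set.Ioo c b, ∀ s ∈ Set.Ioo c b, t ≤ s → |h s - h t| ≤ M2 := by
    intro t ht s hs hts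
    rw [hftc2 t ht s hs]
    calc |∫ τ in t..s, h' τ| ≤ ∫ τ in t..s, |h' τ| :=
          intervalIntegral.abs_integral_le_integral_abs hts
      _ = ∫ τ in Set.Ioc t s, |h' τ| := intervalIntegral.integral_of_le hts
      _ ≤ ∫ τ in Set.Ioo c b, |h' τ| := by
          refine setIntegral_mono_set hint2 ?_ ?_
          · exact Filter.Eventually.of_forall fun τ => abs_nonneg _
          · refine HasSubset.Subset.eventuallyLE fun τ hτ => ?_
            exact ⟨ht.1.trans hτ.1, hτ.2.trans_lt hs.2⟩
      _ = M2 := by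
          rw [hM2, intervalIntegral.integral_of_le hcb.le,
            MeasureTheory.integral_Ioc_eq_integral_Ioo]
  -- closeness to the one-sided limits
  have hkey1 : ∀ t ∈ Set.Ioo a c, |h t - hcm| ≤ M1 := by
    intro t ht
    have htend : Tendsto (fun s => |h s - h t|) (nhdsWithin c (Set.Iio c))
        (nhds |hcm - h t|) := ((hlimL.sub_const (h t)).abs)
    have hev : ∀ᶠ s in nhdsWithin c (Set.Iio c), |h s - h t| ≤ M1 := by
      filter_upwards [Ioo_mem_nhdsLT_of_mem (⟨ht.2, le_refl c⟩ : c ∈ Set.Ioc t c)]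
        with s hs
      exact hdiff1 t ht s ⟨ht.1.trans hs.1, hs.2⟩ hs.1.le
    have := le_of_tendsto htend hev
    rwa [abs_sub_comm] at this
  have hkey2 : ∀ t ∈ Set.Ioo c b, |h t - hcp| ≤ M2 := by
    intro t ht
    have htend : Tendsto (fun s => |h t - h s|) (nhdsWithin c (Set.Ioi c))
        (nhds |h t - hcp|) := ((hlimR.const_sub (h t)).abs)
    have hev : ∀ᶠ s in nhdsWithin c (Set.Ioi c), |h t - h s| ≤ M2 := by
      filter_upwards [Ioo_mem_nhdsGT_of_mem (⟨le_refl c, ht.1⟩ : c ∈ Set.Ico c t)]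
        with s hs
      exact hdiff2 s ⟨hs.1, hs.2.trans ht.2⟩ t ht hs.2.le
    exact le_of_tendsto htend hev
  -- continuity of h on the pieces
  have hch1 : ContinuousOn h (Set.Ioo a c) := fun t ht =>
    (hd1 t ht).continuousAt.continuousWithinAt
  have hch2 : ContinuousOn h (Set.Ioo c b) := fun t ht =>
    (hd2 t ht).continuousAt.continuousWithinAt
  have hfin : ∀ u v : ℝ, volume (Set.Ioo u v) ≠ ⊤ := fun u v => by
    rw [Real.volume_Ioo]; exact ENNReal.ofReal_ne_top
  -- integrability of (h - w)^2 on the pieces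
  have hgint1 : ∀ w : ℝ, IntegrableOn (fun t => (h t - w) ^ 2) (Set.Ioo a c) volume := by
    intro w
    refine sq_integrableOn_of_bounded measurableSet_Ioo (hfin a c)
      (hch1.sub continuousOn_const) (C := M1 + |hcm - w|) fun t ht => ?_
    calc |h t - w| = |(h t - hcm) + (hcm - w)| := by ring_nf
      _ ≤ |h t - hcm| + |hcm - w| := abs_add_le _ _
      _ ≤ M1 + |hcm - w| := by linarith [hkey1 t ht]
  have hgint2 : ∀ w : ℝ, IntegrableOn (fun t => (h t - w) ^ 2) (Set.Ioo c b) volume := by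
    intro w
    refine sq_integrableOn_of_bounded measurableSet_Ioo (hfin c b)
      (hch2.sub continuousOn_const) (C := M2 + |hcp - w|) fun t ht => ?_
    calc |h t - w| = |(h t - hcp) + (hcp - w)| := by ring_nf
      _ ≤ |h t - hcp| + |hcp - w| := abs_add_le _ _
      _ ≤ M2 + |hcp - w| := by linarith [hkey2 t ht]
  -- integrability on (a, b]
  have hgint : ∀ w : ℝ, IntegrableOn (fun t => (h t - w) ^ 2) (Set.Ioc a b) volume := by
    intro w
    rw [integrableOn_Ioc_iff_integrableOn_Ioo,
      ← Set.Ioo_union_Ico_eq_Ioo hac hcb.le]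
    exact (hgint1 w).union ((integrableOn_Ico_iff_integrableOn_Ioo).mpr (hgint2 w))
  -- the pointwise lower bound in each case
  have habs : 0 < |Δ| := by nlinarith [le_max_left M1 M2]
  -- main per-w bound
  have hmain : ∀ w : ℝ, min (c - a) (b - c) * Δ ^ 2 / 16 ≤ ∫ t in a..b, (h t - w) ^ 2 := by
    intro w
    rw [intervalIntegral.integral_of_le hab.le]
    have hnn : ∀ t, (0:ℝ) ≤ (h t - w) ^ 2 := fun t => sq_nonneg _
    have hcase : |Δ| / 2 ≤ |hcm - w| ∨ |Δ| / 2 ≤ |hcp - w| := by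
      by_contra hcon
      push_neg at hcon
      have : |Δ| ≤ |hcp - w| + |hcm - w| := by
        calc |Δ| = |(hcp - w) - (hcm - w)| := by rw [hΔ]; ring_nf
          _ ≤ |hcp - w| + |hcm - w| := abs_sub _ _
      linarith [hcon.1, hcon.2]
    rcases hcase with hc1 | hc2
    · -- lower bound on (a, c)
      have hlow : ∀ t ∈ Set.Ioo a c, Δ ^ 2 / 16 ≤ (h t - w) ^ 2 := by
        intro t ht
        have h1 : |Δ| / 4 ≤ |h t - w| := by
          have htr : |hcm - w| ≤ |hcm - h t| + |h t - w| := by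
            calc |hcm - w| = |(hcm - h t) + (h t - w)| := by ring_nf
              _ ≤ |hcm - h t| + |h t - w| := abs_add_le _ _
          have := hkey1 t ht
          rw [abs_sub_comm] at this
          linarith
        calc Δ ^ 2 / 16 = (|Δ| / 4) ^ 2 := by rw [div_pow, sq_abs]; ring
          _ ≤ |h t - w| ^ 2 := pow_le_pow_left₀ (by positivity) h1 2
          _ = (h t - w) ^ 2 := sq_abs _
      have := integral_ge_piece (Set.Ioo_subset_Ioc_self.trans
          (Set.Ioc_subset_Ioc_right hcb.le)) measurableSet_Ioo (hfin a c)
          (hgint w) (hgint1 w) hnn hlow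
      rw [Real.volume_Ioo, ENNReal.toReal_ofReal (by linarith)] at this
      have hmin : min (c - a) (b - c) ≤ c - a := min_le_left _ _
      have hsq : (0:ℝ) ≤ Δ ^ 2 / 16 := by positivity
      calc min (c - a) (b - c) * Δ ^ 2 / 16 ≤ (c - a) * (Δ ^ 2 / 16) := by
            rw [mul_div_assoc]; exact mul_le_mul_of_nonneg_right hmin hsq
        _ = Δ ^ 2 / 16 * (c - a) := by ring
        _ ≤ ∫ t in Set.Ioc a b, (h t - w) ^ 2 := this
    · -- lower bound on (c, b)
      have hlow : ∀ t ∈ Set.Ioo c b, Δ ^ 2 / 16 ≤ (h t - w) ^ 2 := by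
        intro t ht
        have h1 : |Δ| / 4 ≤ |h t - w| := by
          have htr : |hcp - w| ≤ |hcp - h t| + |h t - w| := by
            calc |hcp - w| = |(hcp - h t) + (h t - w)| := by ring_nf
              _ ≤ |hcp - h t| + |h t - w| := abs_add_le _ _
          have := hkey2 t ht
          rw [abs_sub_comm] at this
          linarith
        calc Δ ^ 2 / 16 = (|Δ| / 4) ^ 2 := by rw [div_pow, sq_abs]; ring
          _ ≤ |h t - w| ^ 2 := pow_le_pow_left₀ (by positivity) h1 2
          _ = (h t - w) ^ 2 := sq_abs _
      have := integral_ge_piece (Set.Ioo_subset_Ioc_self.trans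
          (Set.Ioc_subset_Ioc_left hac.le)) measurableSet_Ioo (hfin c b)
          (hgint w) (hgint2 w) hnn hlow
      rw [Real.volume_Ioo, ENNReal.toReal_ofReal (by linarith)] at this
      have hmin : min (c - a) (b - c) ≤ b - c := min_le_right _ _
      have hsq : (0:ℝ) ≤ Δ ^ 2 / 16 := by positivity
      calc min (c - a) (b - c) * Δ ^ 2 / 16 ≤ (b - c) * (Δ ^ 2 / 16) := by
            rw [mul_div_assoc]; exact mul_le_mul_of_nonneg_right hmin hsq
        _ = Δ ^ 2 / 16 * (b - c) := by ring
        _ ≤ ∫ t in Set.Ioc a b, (h t - w) ^ 2 := this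
  exact le_ciInf hmain
end
end

section
/- Let (x_1, z_1),…,(x_n, z_n) be i.i.d. pairs where x_i takes values in [0,1]^p and z_i is a real random variable with |z_i| ≤ V < ∞ almost surely; let X have the same distribution as x_1. Fix a depth d ≥ 1 and δ ∈ (0,1). Then with probability at least 1 − δ, max over all A ∈ 𝒜̃_{p,d} with P(X ∈ A) > t̄₁(δ) of (1/√(P(X ∈ A))) · |(1/n)∑_{i=1}^n z_i 1_{x_i ∈ A} − E[z_1 1_{x_1 ∈ A}]| is at most 2V·√(t̄₁(δ)). -/
open MeasureTheory Set Filter ProbabilityTheory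
open scoped ENNReal Classical

noncomputable section

/-- `𝒜̃_{p,d}`: closed rectangles in `[0,1]^p` with at most `d` non-full coordinates
whose endpoints all lie on the grid `{0, 1/n, …, 1}`. -/
def gridApd (p n d : ℕ) : Set (Set (Fin p → ℝ)) :=
  {A | ∃ ℓ u : Fin p → ℝ,
    A = Set.univ.pi (fun j => Set.Icc (ℓ j) (u j)) ∧
    (∀ j, Set.Icc (ℓ j) (u j) ⊆ Set.Icc (0 : ℝ) 1) ∧
    (Finset.univ.filter fun j => Set.Icc (ℓ j) (u j) ≠ Set.Icc (0 : ℝ) 1).card ≤ d ∧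
    (∀ j, (∃ k : ℕ, k ≤ n ∧ ℓ j = (k : ℝ) / n) ∧ (∃ k : ℕ, k ≤ n ∧ u j = (k : ℝ) / n))}

/-- `t̄₁(δ) = (4/n) log(2 p^d (n+1)^{2d}/δ)`. -/
def tbar1 (p n d : ℕ) (δ : ℝ) : ℝ :=
  4 / n * Real.log (2 * (p : ℝ) ^ d * ((n : ℝ) + 1) ^ (2 * d) / δ)


lemma exp_le_one_add_add_sq {u : ℝ} (h : |u| ≤ 1) : Real.exp u ≤ 1 + u + u ^ 2 := by
  have h2 := Real.exp_bound h (by norm_num : (0:ℕ) < 2)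
  have hs : ∑ m ∈ Finset.range 2, u ^ m / m.factorial = 1 + u := by
    simp [Finset.sum_range_succ]
  rw [hs] at h2
  norm_num [Nat.factorial] at h2
  have := abs_le.1 h2
  nlinarith [sq_nonneg u]

lemma integrable_of_abs_le {Ω : Type*} [MeasurableSpace Ω] {P : Measure Ω} [IsFiniteMeasure P]
    {f : Ω → ℝ} (hf : AEStronglyMeasurable f P) {C : ℝ} (h : ∀ᵐ ω ∂P, |f ω| ≤ C) :
    Integrable f P :=
  ⟨hf, HasFiniteIntegral.of_bounded (C := C) (by simpa [Real.norm_eq_abs] using h)⟩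

lemma mgf_centered_le {Ω : Type*} [MeasurableSpace Ω] {P : Measure Ω} [IsProbabilityMeasure P]
    {Y : Ω → ℝ} (hYm : Measurable Y) {V q m c : ℝ} (hV : 0 < V)
    (hYbd : ∀ᵐ ω ∂P, |Y ω| ≤ V) (hm : ∫ ω, Y ω ∂P = m)
    (hY2 : ∫ ω, (Y ω)^2 ∂P ≤ V^2 * q)
    (hcV : |c| * V ≤ 1) :
    mgf (fun ω => Y ω - m) P c ≤ Real.exp (c^2 * (V^2 * q)) := by
  have hYint : Integrable Y P := integrable_of_abs_le hYm.aestronglyMeasurable hYbd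
  have hY2int : Integrable (fun ω => (Y ω)^2) P := by
    refine integrable_of_abs_le (hYm.pow_const 2).aestronglyMeasurable (C := V^2) ?_
    filter_upwards [hYbd] with ω hω
    rw [abs_pow]
    exact pow_le_pow_left₀ (abs_nonneg _) hω 2
  have hexpint : Integrable (fun ω => Real.exp (c * Y ω)) P := by
    refine integrable_of_abs_le ((hYm.const_mul c).exp).aestronglyMeasurable
      (C := Real.exp (|c| * V)) ?_
    filter_upwards [hYbd] with ω hω
    rw [abs_of_pos (Real.exp_pos _)]
    apply Real.exp_le_exp.2
    calc c * Y ω ≤ |c * Y ω| := le_abs_self _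
    _ = |c| * |Y ω| := abs_mul _ _
    _ ≤ |c| * V := by gcongr
  have hpolyint : Integrable (fun ω => 1 + c * Y ω + c^2 * (Y ω)^2) P := by
    have h1 : Integrable (fun ω => 1 + c * Y ω) P :=
      (integrable_const 1).add (hYint.const_mul c)
    exact h1.add (hY2int.const_mul (c^2))
  have hpt : ∀ᵐ ω ∂P, Real.exp (c * Y ω) ≤ 1 + c * Y ω + c^2 * (Y ω)^2 := by
    filter_upwards [hYbd] with ω hω
    have h1 : |c * Y ω| ≤ 1 := by
      rw [abs_mul]
      calc |c| * |Y ω| ≤ |c| * V := by gcongr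
      _ ≤ 1 := hcV
    calc Real.exp (c * Y ω) ≤ 1 + c * Y ω + (c * Y ω)^2 := exp_le_one_add_add_sq h1
    _ = 1 + c * Y ω + c^2 * (Y ω)^2 := by ring
  have h1 : ∫ ω, Real.exp (c * Y ω) ∂P ≤ ∫ ω, (1 + c * Y ω + c^2 * (Y ω)^2) ∂P :=
    integral_mono_ae hexpint hpolyint hpt
  have h2 : ∫ ω, (1 + c * Y ω + c^2 * (Y ω)^2) ∂P
      = 1 + c * m + c^2 * ∫ ω, (Y ω)^2 ∂P := by
    rw [integral_add (show Integrable (fun ω => 1 + c * Y ω) P from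
        (integrable_const 1).add (hYint.const_mul c)) (hY2int.const_mul (c^2)),
      integral_add (integrable_const 1) (hYint.const_mul c),
      integral_const, integral_const_mul, integral_const_mul, hm]
    simp
  have hb : 1 + c * m + c^2 * ∫ ω, (Y ω)^2 ∂P ≤ 1 + (c * m + c^2 * (V^2*q)) := by
    have := mul_le_mul_of_nonneg_left hY2 (sq_nonneg c)
    linarith
  have h3 : ∫ ω, Real.exp (c * Y ω) ∂P ≤ Real.exp (c * m + c^2 * (V^2 * q)) := by
    refine ((h1.trans_eq h2).trans hb).trans ?_
    have := Real.add_one_le_exp (c * m + c^2 * (V^2*q))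
    linarith
  have hmgf : mgf (fun ω => Y ω - m) P c
      = (∫ ω, Real.exp (c * Y ω) ∂P) / Real.exp (c * m) := by
    rw [mgf]
    simp_rw [mul_sub, Real.exp_sub]
    rw [integral_div]
  rw [hmgf, div_le_iff₀ (Real.exp_pos _)]
  calc ∫ ω, Real.exp (c * Y ω) ∂P ≤ Real.exp (c * m + c^2 * (V^2 * q)) := h3
  _ = Real.exp (c^2 * (V^2*q)) * Real.exp (c * m) := by
      rw [← Real.exp_add]; ring_nf

lemma Nr_one_le (p n d : ℕ) (hp : 1 ≤ p) :
    (1:ℝ) ≤ (p:ℝ)^d * ((n:ℝ)+1)^(2*d) := by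
  have h1 : (1:ℝ) ≤ (p:ℝ)^d := one_le_pow₀ (by exact_mod_cast hp)
  have h2 : (1:ℝ) ≤ ((n:ℝ)+1)^(2*d) := one_le_pow₀ (le_add_of_nonneg_left (Nat.cast_nonneg n))
  nlinarith

lemma tbar1_pos (p n d : ℕ) (hp : 1 ≤ p) (hn : 0 < n) {δ : ℝ}
    (hδ : δ ∈ Set.Ioo (0:ℝ) 1) : 0 < tbar1 p n d δ := by
  unfold tbar1
  apply mul_pos (by positivity)
  apply Real.log_pos
  have h1 := Nr_one_le p n d hp
  rw [mul_assoc, lt_div_iff₀ hδ.1]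
  nlinarith [hδ.2]

lemma exp_neg_ntb_le (p n d : ℕ) (hp : 1 ≤ p) (hn : 0 < n) {δ : ℝ}
    (hδ : δ ∈ Set.Ioo (0:ℝ) 1) :
    Real.exp (-((n:ℝ) * tbar1 p n d δ)) ≤ δ / (2 * ((p:ℝ)^d * ((n:ℝ)+1)^(2*d))) := by
  set Nr := (p:ℝ)^d * ((n:ℝ)+1)^(2*d) with hNrdef
  have hNr : (1:ℝ) ≤ Nr := Nr_one_le p n d hp
  set R := 2 * Nr / δ with hRdef
  have hR : 1 < R := by
    rw [hRdef, lt_div_iff₀ hδ.1]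
    nlinarith [hδ.2]
  have hn' : (n:ℝ) ≠ 0 := by positivity
  have hntb : (n:ℝ) * tbar1 p n d δ = 4 * Real.log R := by
    unfold tbar1
    rw [hRdef, hNrdef, ← mul_assoc]
    rw [show 2 * (↑p:ℝ) ^ d * (↑n + 1) ^ (2 * d) / δ = 2 * ((↑p:ℝ) ^ d * (↑n + 1) ^ (2 * d)) / δ by ring] 
    field_simp
  rw [hntb]
  have h4 : Real.exp (-(4 * Real.log R)) = (R^(4:ℕ))⁻¹ := by
    rw [Real.exp_neg]
    congr 1
    rw [show (4:ℝ) * Real.log R = ((4:ℕ):ℝ) * Real.log R by norm_num,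
      Real.exp_nat_mul, Real.exp_log (by linarith)]
  rw [h4]
  have h5 : (R^(4:ℕ))⁻¹ ≤ R⁻¹ := by
    apply inv_anti₀ (by linarith)
    exact le_self_pow₀ hR.le (by norm_num)
  refine h5.trans ?_
  rw [hRdef, inv_div]

def rectOf (p n d : ℕ) (f : Fin d → Fin p × Fin (n+1) × Fin (n+1)) : Set (Fin p → ℝ) :=
  (Set.univ.pi fun _ => Set.Icc (0:ℝ) 1) ∩
    ⋂ s : Fin d, {x | x (f s).1 ∈
      Set.Icc ((((f s).2.1 : ℕ) : ℝ) / n) ((((f s).2.2 : ℕ) : ℝ) / n)}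

lemma rectOf_measurable (p n d : ℕ) (f : Fin d → Fin p × Fin (n+1) × Fin (n+1)) :
    MeasurableSet (rectOf p n d f) := by
  apply MeasurableSet.inter
  · exact MeasurableSet.univ_pi (fun j => measurableSet_Icc)
  · exact MeasurableSet.iInter
      (fun s => measurableSet_Icc.preimage (measurable_pi_apply _))

lemma gridApd_eq_rectOf (p n d : ℕ) (hp : 1 ≤ p) (hn : 0 < n)
    {A : Set (Fin p → ℝ)} (hA : A ∈ gridApd p n d) :
    ∃ f : Fin d → Fin p × Fin (n+1) × Fin (n+1), A = rectOf p n d f := by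
  obtain ⟨ℓ, u, hAeq, hsub, hcard, hgrid⟩ := hA
  choose kl hkl hkl' using fun j => (hgrid j).1
  choose ku hku hku' using fun j => (hgrid j).2
  set T := Finset.filter (fun j => Set.Icc (ℓ j) (u j) ≠ Set.Icc (0:ℝ) 1) Finset.univ with hT
  have hcardT : Fintype.card {j // j ∈ T} ≤ Fintype.card (Fin d) := by
    rw [Fintype.card_coe, Fintype.card_fin]; exact hcard
  obtain ⟨φ⟩ := Function.Embedding.nonempty_of_card_le hcardT
  set j₀ : Fin p := ⟨0, hp⟩ with hj₀
  have hn' : (0:ℝ) < n := by exact_mod_cast hn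
  refine ⟨fun s => if h : ∃ jt : {j // j ∈ T}, φ jt = s then
      (h.choose.1, ⟨kl h.choose.1, Nat.lt_succ_of_le (hkl h.choose.1)⟩,
        ⟨ku h.choose.1, Nat.lt_succ_of_le (hku h.choose.1)⟩)
    else (j₀, ⟨0, Nat.succ_pos n⟩, ⟨n, Nat.lt_succ_self n⟩), ?_⟩
  rw [hAeq, rectOf]
  ext xx
  simp only [Set.mem_pi, Set.mem_univ, true_implies, Set.mem_inter_iff, Set.mem_iInter,
    Set.mem_setOf_eq]
  constructor
  · intro hx
    refine ⟨fun j => hsub j (hx j), fun s => ?_⟩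
    by_cases h : ∃ jt : {j // j ∈ T}, φ jt = s
    · rw [dif_pos h]
      simp only []
      rw [← hkl', ← hku']
      exact hx _
    · rw [dif_neg h]
      simp only []
      have hb := hsub j₀ (hx j₀)
      have h0 : ((0:ℕ):ℝ) / (n:ℝ) = 0 := by simp
      have h1 : ((n:ℕ):ℝ) / (n:ℝ) = 1 := by field_simp
      rw [h0, h1]
      exact hb
  · rintro ⟨hbox, hcons⟩ j
    by_cases hj : j ∈ T
    · have h : ∃ jt : {j' // j' ∈ T}, φ jt = φ ⟨j, hj⟩ := ⟨⟨j, hj⟩, rfl⟩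
      have hc := hcons (φ ⟨j, hj⟩)
      rw [dif_pos h] at hc
      have he : h.choose = ⟨j, hj⟩ := φ.injective h.choose_spec
      rw [he] at hc
      simp only [] at hc
      rw [hkl' j, hku' j]
      exact hc
    · have hfull : Set.Icc (ℓ j) (u j) = Set.Icc (0:ℝ) 1 := by
        by_contra hne
        exact hj (Finset.mem_filter.2 ⟨Finset.mem_univ j, hne⟩)
      rw [hfull]
      exact hbox j

lemma chernoff_rect
    (p n d : ℕ) (hp : 1 ≤ p) (hn : 0 < n)
    (Ω : Type*) [MeasurableSpace Ω] (P : Measure Ω) [IsProbabilityMeasure P]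
    (x : Fin n → Ω → Fin p → ℝ) (z : Fin n → Ω → ℝ)
    (hxm : ∀ i, Measurable (x i)) (hzm : ∀ i, Measurable (z i))
    (hindep : iIndepFun (fun i ω => (x i ω, z i ω)) P)
    (hident : ∀ i i' : Fin n, IdentDistrib (fun ω => (x i ω, z i ω))
      (fun ω => (x i' ω, z i' ω)) P P)
    (V : ℝ) (hV : 0 < V) (hzbd : ∀ i, ∀ᵐ ω ∂P, |z i ω| ≤ V)
    (μ : Measure (Fin p → ℝ)) (hμ : Measure.map (x ⟨0, hn⟩) P = μ)
    (δ : ℝ) (hδ : δ ∈ Set.Ioo (0 : ℝ) 1)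
    (A : Set (Fin p → ℝ)) (hA : MeasurableSet A) :
    P {ω | tbar1 p n d δ < (μ A).toReal ∧
        ¬ (1 / Real.sqrt (μ A).toReal *
            |(1 / (n : ℝ)) * (∑ i : Fin n, if x i ω ∈ A then z i ω else 0)
              - ∫ ω', (if x ⟨0, hn⟩ ω' ∈ A then z ⟨0, hn⟩ ω' else 0) ∂P|
          ≤ 2 * V * Real.sqrt (tbar1 p n d δ))}
      ≤ ENNReal.ofReal (δ / ((p:ℝ)^d * ((n:ℝ)+1)^(2*d))) := by
  have htb : 0 < tbar1 p n d δ := tbar1_pos p n d hp hn hδ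
  by_cases hq : tbar1 p n d δ < (μ A).toReal
  swap
  · have hemp : {ω | tbar1 p n d δ < (μ A).toReal ∧
        ¬ (1 / Real.sqrt (μ A).toReal *
            |(1 / (n : ℝ)) * (∑ i : Fin n, if x i ω ∈ A then z i ω else 0)
              - ∫ ω', (if x ⟨0, hn⟩ ω' ∈ A then z ⟨0, hn⟩ ω' else 0) ∂P|
          ≤ 2 * V * Real.sqrt (tbar1 p n d δ))} = (∅ : Set Ω) := by
      ext ω; simp [hq]
    rw [hemp]
    simp
  haveI hμprob : IsProbabilityMeasure μ := by
    rw [← hμ]; exact Measure.isProbabilityMeasure_map (hxm _).aemeasurable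
  set tb := tbar1 p n d δ with htbdef
  set i₀ : Fin n := ⟨0, hn⟩ with hi₀def
  set q := (μ A).toReal with hqdef
  have hq0 : 0 < q := htb.trans hq
  have hn' : (0:ℝ) < n := by exact_mod_cast hn
  set g : (Fin p → ℝ) × ℝ → ℝ := fun w => if w.1 ∈ A then w.2 else 0 with hgdef
  have hg : Measurable g :=
    Measurable.ite (hA.preimage measurable_fst) measurable_snd measurable_const
  set Y : Fin n → Ω → ℝ := fun i ω => if x i ω ∈ A then z i ω else 0 with hYdef
  have hYm : ∀ i, Measurable (Y i) := fun i => hg.comp ((hxm i).prodMk (hzm i))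
  have hYid : ∀ i, IdentDistrib (Y i) (Y i₀) P P := fun i => (hident i i₀).comp hg
  set m := ∫ ω, Y i₀ ω ∂P with hmdef
  have hmi : ∀ i, ∫ ω, Y i ω ∂P = m := fun i => (hYid i).integral_eq
  have hYbd : ∀ i, ∀ᵐ ω ∂P, |Y i ω| ≤ V := by
    intro i
    filter_upwards [hzbd i] with ω hω
    by_cases hx' : x i ω ∈ A
    · simpa [hYdef, hx'] using hω
    · simp [hYdef, hx', hV.le]
  have hqi : ∀ i, (P (x i ⁻¹' A)).toReal = q := by
    intro i
    have h1 : Measure.map (x i) P = μ := by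
      rw [← hμ]
      exact ((hident i i₀).comp measurable_fst).map_eq
    rw [hqdef, ← h1, Measure.map_apply (hxm i) hA]
  have hY2int : ∀ i, Integrable (fun ω => (Y i ω)^2) P := by
    intro i
    refine integrable_of_abs_le ((hYm i).pow_const 2).aestronglyMeasurable (C := V^2) ?_
    filter_upwards [hYbd i] with ω hω
    rw [abs_pow]
    exact pow_le_pow_left₀ (abs_nonneg _) hω 2
  have hY2 : ∀ i, ∫ ω, (Y i ω)^2 ∂P ≤ V^2 * q := by
    intro i
    have hindm : Measurable ((x i ⁻¹' A).indicator (fun _ => (1:ℝ))) :=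
      measurable_const.indicator ((hxm i) hA)
    have hindint : Integrable (fun ω => V^2 * (x i ⁻¹' A).indicator (fun _ => (1:ℝ)) ω) P := by
      refine integrable_of_abs_le (hindm.const_mul _).aestronglyMeasurable (C := V^2) ?_
      apply ae_of_all
      intro ω
      by_cases hx' : x i ω ∈ A <;>
        simp [Set.indicator_apply, hx', abs_of_nonneg (sq_nonneg V)] <;>
        positivity
    have hptw : ∀ᵐ ω ∂P, (Y i ω)^2 ≤ V^2 * (x i ⁻¹' A).indicator (fun _ => (1:ℝ)) ω := by
      filter_upwards [hzbd i] with ω hω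
      by_cases hx' : x i ω ∈ A
      · simp only [hYdef, hx', if_true, Set.indicator_apply, Set.mem_preimage, mul_one]
        rw [← sq_abs]
        exact pow_le_pow_left₀ (abs_nonneg _) hω 2
      · simp [hYdef, hx', Set.indicator_apply]
    calc ∫ ω, (Y i ω)^2 ∂P
        ≤ ∫ ω, V^2 * (x i ⁻¹' A).indicator (fun _ => (1:ℝ)) ω ∂P :=
          integral_mono_ae (hY2int i) hindint hptw
    _ = V^2 * ∫ ω, (x i ⁻¹' A).indicator (fun _ => (1:ℝ)) ω ∂P := integral_const_mul _ _
    _ = V^2 * q := by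
        rw [integral_indicator_const (1:ℝ) ((hxm i) hA)]
        have hqi' : P.real (x i ⁻¹' A) = q := hqi i
        simp [hqi']
  have hmV : |m| ≤ V := by
    have h1 : ‖∫ ω, Y i₀ ω ∂P‖ ≤ V * (P Set.univ).toReal :=
      norm_integral_le_of_norm_le_const (by
        filter_upwards [hYbd i₀] with ω hω using by simpa [Real.norm_eq_abs] using hω)
    simpa [Real.norm_eq_abs, hmdef] using h1
  -- constants
  set stb := Real.sqrt tb with hstbdef
  set sq := Real.sqrt q with hsqdef
  have hsq : 0 < sq := Real.sqrt_pos.2 hq0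
  have hstb : 0 < stb := Real.sqrt_pos.2 htb
  set c := stb / (V * sq) with hcdef
  have hc0 : 0 < c := div_pos hstb (mul_pos hV hsq)
  have hstb_le : stb ≤ sq := Real.sqrt_le_sqrt hq.le
  have hcV : |c| * V ≤ 1 := by
    rw [abs_of_pos hc0, hcdef, div_mul_eq_mul_div, div_le_one (by positivity)]
    nlinarith
  have hc2 : c^2 * (V^2 * q) = tb := by
    rw [hcdef, div_pow, mul_pow, hstbdef, hsqdef,
      Real.sq_sqrt htb.le, Real.sq_sqrt hq0.le]
    field_simp
  set t' := 2 * V * stb * sq with ht'def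
  have hct' : c * ((n:ℝ) * t') = (n:ℝ) * (2 * tb) := by
    have h1 : stb^2 = tb := Real.sq_sqrt htb.le
    rw [hcdef, ht'def]
    field_simp
    linear_combination h1
  -- generic tail bound
  have tail : ∀ (W : Fin n → Ω → ℝ), iIndepFun W P →
      (∀ i, Measurable (W i)) → (∀ i, ∀ᵐ ω ∂P, |W i ω| ≤ 2*V) →
      (∀ i, mgf (W i) P c ≤ Real.exp tb) →
      P {ω | (n:ℝ) * t' ≤ ∑ i, W i ω} ≤
        ENNReal.ofReal (δ / (2 * ((p:ℝ)^d * ((n:ℝ)+1)^(2*d)))) := by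
    intro W hWind hWm hWbd hWmgf
    have hSm : Measurable (fun ω => ∑ i, W i ω) :=
      Finset.univ.measurable_sum (fun i _ => hWm i)
    have hSbd : ∀ᵐ ω ∂P, |∑ i, W i ω| ≤ (n:ℝ) * (2*V) := by
      have hall : ∀ᵐ ω ∂P, ∀ i, |W i ω| ≤ 2*V := (ae_all_iff).2 hWbd
      filter_upwards [hall] with ω hω
      calc |∑ i, W i ω| ≤ ∑ i, |W i ω| := Finset.abs_sum_le_sum_abs _ _
      _ ≤ ∑ _i : Fin n, (2*V) := Finset.sum_le_sum (fun i _ => hω i)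
      _ = (n:ℝ) * (2*V) := by simp [Finset.sum_const, Finset.card_univ, mul_comm]
    have hint : Integrable (fun ω => Real.exp (c * ∑ i, W i ω)) P := by
      refine integrable_of_abs_le ((hSm.const_mul c).exp).aestronglyMeasurable
        (C := Real.exp (c * ((n:ℝ) * (2*V)))) ?_
      filter_upwards [hSbd] with ω hω
      rw [abs_of_pos (Real.exp_pos _)]
      exact Real.exp_le_exp.2 (mul_le_mul_of_nonneg_left ((le_abs_self _).trans hω) hc0.le)
    have hchern := measure_ge_le_exp_mul_mgf (μ := P) (X := fun ω => ∑ i, W i ω)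
      ((n:ℝ) * t') hc0.le hint
    have hmgfsum : mgf (fun ω => ∑ i, W i ω) P c = ∏ i, mgf (W i) P c := by
      rw [← hWind.mgf_sum hWm Finset.univ]
      congr 1
      funext ω
      simp [Finset.sum_apply]
    have hprod : ∏ i : Fin n, mgf (W i) P c ≤ Real.exp ((n:ℝ) * tb) := by
      calc ∏ i : Fin n, mgf (W i) P c ≤ ∏ _i : Fin n, Real.exp tb :=
            Finset.prod_le_prod (fun i _ => mgf_nonneg) (fun i _ => hWmgf i)
      _ = Real.exp tb ^ n := by simp [Finset.prod_const, Finset.card_univ]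
      _ = Real.exp ((n:ℝ) * tb) := by rw [← Real.exp_nat_mul]
    have hfinal : (P {ω | (n:ℝ) * t' ≤ ∑ i, W i ω}).toReal
        ≤ δ / (2 * ((p:ℝ)^d * ((n:ℝ)+1)^(2*d))) := by
      refine le_trans ?_ (exp_neg_ntb_le p n d hp hn hδ)
      calc (P {ω | (n:ℝ) * t' ≤ ∑ i, W i ω}).toReal
          ≤ Real.exp (-c * ((n:ℝ) * t')) * mgf (fun ω => ∑ i, W i ω) P c := hchern
      _ ≤ Real.exp (-c * ((n:ℝ) * t')) * Real.exp ((n:ℝ) * tb) := by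
          rw [hmgfsum]
          exact mul_le_mul_of_nonneg_left hprod (Real.exp_pos _).le
      _ = Real.exp (-((n:ℝ) * tb)) := by
          rw [← Real.exp_add, neg_mul, hct']
          ring_nf
    exact (ENNReal.le_ofReal_iff_toReal_le (measure_ne_top P _) (div_nonneg hδ.1.le (by positivity))).2 hfinal
  -- upper tail family
  set W1 : Fin n → Ω → ℝ := fun i ω => Y i ω - m with hW1def
  set W2 : Fin n → Ω → ℝ := fun i ω => m - Y i ω with hW2def
  have hW1ind : iIndepFun W1 P :=
    hindep.comp (fun _ => fun w => g w - m) (fun _ => hg.sub measurable_const)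
  have hW2ind : iIndepFun W2 P :=
    hindep.comp (fun _ => fun w => m - g w) (fun _ => measurable_const.sub hg)
  have hW1m : ∀ i, Measurable (W1 i) := fun i => (hYm i).sub measurable_const
  have hW2m : ∀ i, Measurable (W2 i) := fun i => measurable_const.sub (hYm i)
  have hW1bd : ∀ i, ∀ᵐ ω ∂P, |W1 i ω| ≤ 2*V := by
    intro i
    filter_upwards [hYbd i] with ω hω
    calc |Y i ω - m| ≤ |Y i ω| + |m| := abs_sub _ _
    _ ≤ 2*V := by linarith
  have hW2bd : ∀ i, ∀ᵐ ω ∂P, |W2 i ω| ≤ 2*V := by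
    intro i
    filter_upwards [hW1bd i] with ω hω
    rw [hW2def]
    simpa [abs_sub_comm] using hω
  have hW1mgf : ∀ i, mgf (W1 i) P c ≤ Real.exp tb := by
    intro i
    have := mgf_centered_le (hYm i) hV (hYbd i) (hmi i) (hY2 i) hcV
    rwa [hc2] at this
  have hW2mgf : ∀ i, mgf (W2 i) P c ≤ Real.exp tb := by
    intro i
    have hneg : ∀ᵐ ω ∂P, |(-(Y i ω))| ≤ V := by
      filter_upwards [hYbd i] with ω hω using by simpa using hω
    have hmneg : ∫ ω, -(Y i ω) ∂P = -m := by rw [integral_neg, hmi i]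
    have h2neg : ∫ ω, (-(Y i ω))^2 ∂P ≤ V^2 * q := by
      simpa [neg_pow] using hY2 i
    have := mgf_centered_le (Y := fun ω => -(Y i ω)) ((hYm i).neg) hV hneg hmneg h2neg hcV
    rw [hc2] at this
    have hfun : (W2 i) = (fun ω => -(Y i ω) - (-m)) := by
      funext ω; rw [hW2def]; ring
    rwa [hfun]
  have hup := tail W1 hW1ind hW1m hW1bd hW1mgf
  have hlo := tail W2 hW2ind hW2m hW2bd hW2mgf
  -- event inclusion
  have hsub : {ω | tb < q ∧
        ¬ (1 / sq * |(1 / (n : ℝ)) * (∑ i : Fin n, Y i ω) - m| ≤ 2 * V * stb)}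
      ⊆ {ω | (n:ℝ) * t' ≤ ∑ i, W1 i ω} ∪ {ω | (n:ℝ) * t' ≤ ∑ i, W2 i ω} := by
    intro ω hω
    obtain ⟨-, h2⟩ := hω
    rw [not_le] at h2
    set D := (1 / (n:ℝ)) * (∑ i, Y i ω) - m with hDdef
    have hD : t' < |D| := by
      calc t' = sq * (2 * V * stb) := by rw [ht'def]; ring
      _ < sq * (1 / sq * |D|) := by exact (mul_lt_mul_iff_right₀ hsq).2 h2
      _ = |D| := by field_simp
    have hsum1 : ∑ i, W1 i ω = (n:ℝ) * D := by
      simp only [hW1def, hDdef, Finset.sum_sub_distrib, Finset.sum_const,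
        Finset.card_univ, Fintype.card_fin, nsmul_eq_mul]
      field_simp
    have habs : (n:ℝ) * t' < |∑ i, W1 i ω| := by
      rw [hsum1, abs_mul, abs_of_pos hn']
      exact (mul_lt_mul_iff_right₀ hn').2 hD
    rcases abs_cases (∑ i, W1 i ω) with ⟨he, -⟩ | ⟨he, -⟩
    · left
      simp only [Set.mem_setOf_eq]
      rw [he] at habs
      exact habs.le
    · right
      simp only [Set.mem_setOf_eq]
      have hsum2 : ∑ i, W2 i ω = -∑ i, W1 i ω := by
        simp only [hW1def, hW2def, Finset.sum_sub_distrib, Finset.sum_const,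
          Finset.card_univ, Fintype.card_fin, nsmul_eq_mul]
        ring
      rw [hsum2, ← he]
      exact habs.le
  calc P {ω | tb < q ∧
        ¬ (1 / sq * |(1 / (n : ℝ)) * (∑ i : Fin n, Y i ω) - m| ≤ 2 * V * stb)}
      ≤ P ({ω | (n:ℝ) * t' ≤ ∑ i, W1 i ω} ∪ {ω | (n:ℝ) * t' ≤ ∑ i, W2 i ω}) :=
        measure_mono hsub
  _ ≤ P {ω | (n:ℝ) * t' ≤ ∑ i, W1 i ω} + P {ω | (n:ℝ) * t' ≤ ∑ i, W2 i ω} :=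
        measure_union_le _ _
  _ ≤ ENNReal.ofReal (δ / (2 * ((p:ℝ)^d * ((n:ℝ)+1)^(2*d))))
      + ENNReal.ofReal (δ / (2 * ((p:ℝ)^d * ((n:ℝ)+1)^(2*d)))) := add_le_add hup hlo
  _ = ENNReal.ofReal (δ / ((p:ℝ)^d * ((n:ℝ)+1)^(2*d))) := by
      rw [← ENNReal.ofReal_add (div_nonneg hδ.1.le (by positivity)) (div_nonneg hδ.1.le (by positivity))]
      congr 1
      have hNr : (1:ℝ) ≤ (p:ℝ)^d * ((n:ℝ)+1)^(2*d) := by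
        have h1 : (1:ℝ) ≤ (p:ℝ)^d := one_le_pow₀ (by exact_mod_cast hp)
        have h2 : (1:ℝ) ≤ ((n:ℝ)+1)^(2*d) := one_le_pow₀ (le_add_of_nonneg_left (Nat.cast_nonneg n))
        nlinarith
      field_simp
      ring

/-- **Lemma (weighted concentration over grid rectangles).**
Let `(x_i, z_i)` be i.i.d. with `x_i ∈ [0,1]^p` and `|z_i| ≤ V` a.s., and `X ~ x_1`.
Then with probability at least `1 − δ`, for every `A ∈ 𝒜̃_{p,d}` with `P(X∈A) > t̄₁(δ)`,
`(1/√P(X∈A)) |(1/n)∑ z_i 1_{x_i∈A} − E[z_1 1_{x_1∈A}]| ≤ 2V√t̄₁(δ)`. -/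
theorem grid_weighted_concentration
    (p n d : ℕ) (hp : 1 ≤ p) (hn : 0 < n) (hd : 1 ≤ d)
    (Ω : Type*) [MeasurableSpace Ω] (P : Measure Ω) [IsProbabilityMeasure P]
    (x : Fin n → Ω → Fin p → ℝ) (z : Fin n → Ω → ℝ)
    (hxm : ∀ i, Measurable (x i)) (hzm : ∀ i, Measurable (z i))
    (hxbox : ∀ i ω, x i ω ∈ Set.univ.pi fun _ => Set.Icc (0 : ℝ) 1)
    (hindep : iIndepFun (fun i ω => (x i ω, z i ω)) P)
    (hident : ∀ i i' : Fin n, IdentDistrib (fun ω => (x i ω, z i ω))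
      (fun ω => (x i' ω, z i' ω)) P P)
    (V : ℝ) (hV : 0 < V) (hzbd : ∀ i, ∀ᵐ ω ∂P, |z i ω| ≤ V)
    (μ : Measure (Fin p → ℝ))
    (hμ : Measure.map (x ⟨0, hn⟩) P = μ)
    (δ : ℝ) (hδ : δ ∈ Set.Ioo (0 : ℝ) 1) :
    ENNReal.ofReal (1 - δ) ≤
      P {ω | ∀ A ∈ gridApd p n d, tbar1 p n d δ < (μ A).toReal →
        1 / Real.sqrt (μ A).toReal *
            |(1 / (n : ℝ)) * (∑ i : Fin n, if x i ω ∈ A then z i ω else 0)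
              - ∫ ω', (if x ⟨0, hn⟩ ω' ∈ A then z ⟨0, hn⟩ ω' else 0) ∂P|
          ≤ 2 * V * Real.sqrt (tbar1 p n d δ)} := by
  classical
  set Nr : ℝ := (p:ℝ)^d * ((n:ℝ)+1)^(2*d) with hNrdef
  have hNrpos : (0:ℝ) < Nr := by positivity
  set bad : (Fin d → Fin p × Fin (n+1) × Fin (n+1)) → Set Ω := fun f =>
    {ω | tbar1 p n d δ < (μ (rectOf p n d f)).toReal ∧
        ¬ (1 / Real.sqrt (μ (rectOf p n d f)).toReal *
            |(1 / (n : ℝ)) * (∑ i : Fin n, if x i ω ∈ rectOf p n d f then z i ω else 0)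
              - ∫ ω', (if x ⟨0, hn⟩ ω' ∈ rectOf p n d f then z ⟨0, hn⟩ ω' else 0) ∂P|
          ≤ 2 * V * Real.sqrt (tbar1 p n d δ))} with hbaddef
  have hbad : ∀ f, P (bad f) ≤ ENNReal.ofReal (δ / Nr) := fun f =>
    chernoff_rect p n d hp hn Ω P x z hxm hzm hindep hident V hV hzbd μ hμ δ hδ
      (rectOf p n d f) (rectOf_measurable p n d f)
  have hbadm : ∀ f, MeasurableSet (bad f) := by
    intro f
    rw [hbaddef]
    simp only [Set.setOf_and]
    apply MeasurableSet.inter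
    · exact MeasurableSet.const _
    · have hexpr : Measurable (fun ω => 1 / Real.sqrt (μ (rectOf p n d f)).toReal *
          |(1 / (n : ℝ)) * (∑ i : Fin n, if x i ω ∈ rectOf p n d f then z i ω else 0)
            - ∫ ω', (if x ⟨0, hn⟩ ω' ∈ rectOf p n d f then z ⟨0, hn⟩ ω' else 0) ∂P|) := by
        apply Measurable.const_mul
        apply Measurable.abs
        apply Measurable.sub _ measurable_const
        apply Measurable.const_mul
        exact Finset.univ.measurable_sum (fun i _ =>
          Measurable.ite ((hxm i) (rectOf_measurable p n d f)) (hzm i) measurable_const)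
      have heq : {ω | ¬ (1 / Real.sqrt (μ (rectOf p n d f)).toReal *
          |(1 / (n : ℝ)) * (∑ i : Fin n, if x i ω ∈ rectOf p n d f then z i ω else 0)
            - ∫ ω', (if x ⟨0, hn⟩ ω' ∈ rectOf p n d f then z ⟨0, hn⟩ ω' else 0) ∂P|
          ≤ 2 * V * Real.sqrt (tbar1 p n d δ))} =
          {ω | 2 * V * Real.sqrt (tbar1 p n d δ) < 1 / Real.sqrt (μ (rectOf p n d f)).toReal *
          |(1 / (n : ℝ)) * (∑ i : Fin n, if x i ω ∈ rectOf p n d f then z i ω else 0)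
            - ∫ ω', (if x ⟨0, hn⟩ ω' ∈ rectOf p n d f then z ⟨0, hn⟩ ω' else 0) ∂P|} := by
        ext ω; simp [not_le]
      rw [heq]
      exact measurableSet_lt measurable_const hexpr
  have hUm : MeasurableSet (⋃ f, bad f) := MeasurableSet.iUnion hbadm
  have hcompl : {ω | ∀ A ∈ gridApd p n d, tbar1 p n d δ < (μ A).toReal →
        1 / Real.sqrt (μ A).toReal *
            |(1 / (n : ℝ)) * (∑ i : Fin n, if x i ω ∈ A then z i ω else 0)
              - ∫ ω', (if x ⟨0, hn⟩ ω' ∈ A then z ⟨0, hn⟩ ω' else 0) ∂P|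
          ≤ 2 * V * Real.sqrt (tbar1 p n d δ)}ᶜ ⊆ ⋃ f, bad f := by
    intro ω hω
    simp only [Set.mem_compl_iff, Set.mem_setOf_eq, not_forall] at hω
    obtain ⟨A, hAgrid, hqA, hnle⟩ := hω
    obtain ⟨f, hf⟩ := gridApd_eq_rectOf p n d hp hn hAgrid
    subst hf
    exact Set.mem_iUnion.2 ⟨f, ⟨hqA, hnle⟩⟩
  have hcard : (Fintype.card (Fin d → Fin p × Fin (n+1) × Fin (n+1)) : ℝ) = Nr := by
    rw [Fintype.card_fun, Fintype.card_prod, Fintype.card_prod, Fintype.card_fin,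
      Fintype.card_fin, Fintype.card_fin]
    rw [show p * ((n+1) * (n+1)) = p * (n+1)^2 by ring, mul_pow, ← pow_mul]
    rw [hNrdef]
    push_cast
    ring
  have hPU : P (⋃ f, bad f) ≤ ENNReal.ofReal δ := by
    calc P (⋃ f, bad f) ≤ ∑' f, P (bad f) := measure_iUnion_le _
    _ ≤ ∑' _f : (Fin d → Fin p × Fin (n+1) × Fin (n+1)), ENNReal.ofReal (δ / Nr) :=
        ENNReal.tsum_le_tsum hbad
    _ = (Fintype.card (Fin d → Fin p × Fin (n+1) × Fin (n+1)) : ℝ≥0∞)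
        * ENNReal.ofReal (δ / Nr) := by
        rw [tsum_fintype]
        simp [Finset.sum_const, Finset.card_univ, nsmul_eq_mul]
    _ = ENNReal.ofReal δ := by
        rw [← ENNReal.ofReal_natCast, ← ENNReal.ofReal_mul (Nat.cast_nonneg _), hcard]
        congr 1
        field_simp
  calc ENNReal.ofReal (1 - δ) = 1 - ENNReal.ofReal δ := by
        rw [ENNReal.ofReal_sub _ hδ.1.le, ENNReal.ofReal_one]
  _ ≤ 1 - P (⋃ f, bad f) := tsub_le_tsub_left hPU 1
  _ = P ((⋃ f, bad f)ᶜ) := by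
        rw [measure_compl hUm (measure_ne_top _ _), measure_univ]
  _ ≤ _ := measure_mono (Set.compl_subset_comm.1 hcompl)
end
end

section
/- Let x_1,…,x_n be i.i.d. random vectors with distribution μ supported on [0,1]^p. Let 𝒟 be a finite collection of measurable subsets of [0,1]^p satisfying P(x_1 ∈ D) ≤ ᾱ for all D ∈ 𝒟, for some ᾱ ∈ (0,1). Fix δ ∈ (0,1) and define w(ᾱ, δ) := max{e²ᾱ, (1/n)·log(|𝒟|/δ)}. If w(ᾱ, δ) ≤ 3/4, then with probability at least 1 − δ, max_{D ∈ 𝒟} (1/n)∑_{i=1}^n 1_{x_i ∈ D} ≤ w(ᾱ, δ). -/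
open MeasureTheory Set Filter ProbabilityTheory
open scoped ENNReal Classical

noncomputable section

set_option maxHeartbeats 1000000 in
/-- **Lemma (uniform upper bound on empirical frequencies of small sets).**
Let `x_1,…,x_n` be i.i.d. `μ` supported on `[0,1]^p`, and `𝒟` a finite collection of
measurable sets with `P(x_1 ∈ D) ≤ ᾱ` for all `D ∈ 𝒟`. If
`w(ᾱ,δ) = max{e²ᾱ, (1/n) log(|𝒟|/δ)} ≤ 3/4`, then with probability at least `1 − δ`,
`max_{D∈𝒟} (1/n)∑ 1_{x_i∈D} ≤ w(ᾱ,δ)`. -/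
theorem small_set_frequency_bound
    (p n : ℕ) (hn : 1 ≤ n)
    (Ω : Type*) [MeasurableSpace Ω] (P : Measure Ω) [IsProbabilityMeasure P]
    (μ : Measure (Fin p → ℝ)) [IsProbabilityMeasure μ] (hsupp : μ (box p)ᶜ = 0)
    (x : Fin n → Ω → Fin p → ℝ)
    (hxm : ∀ i, Measurable (x i))
    (hindep : iIndepFun x P)
    (hxdist : ∀ i, Measure.map (x i) P = μ)
    (𝒟 : Finset (Set (Fin p → ℝ))) (h𝒟m : ∀ D ∈ 𝒟, MeasurableSet D)
    (abar δ : ℝ) (habar : abar ∈ Set.Ioo (0 : ℝ) 1) (hδ : δ ∈ Set.Ioo (0 : ℝ) 1)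
    (h𝒟b : ∀ D ∈ 𝒟, (μ D).toReal ≤ abar)
    (hw : max (Real.exp 1 ^ 2 * abar) (1 / (n : ℝ) * Real.log (𝒟.card / δ)) ≤ 3 / 4) :
    ENNReal.ofReal (1 - δ) ≤
      P {ω | ∀ D ∈ 𝒟,
        (1 / (n : ℝ)) * (∑ i : Fin n, if x i ω ∈ D then (1 : ℝ) else 0)
          ≤ max (Real.exp 1 ^ 2 * abar) (1 / (n : ℝ) * Real.log (𝒟.card / δ))} := by
  classical
  obtain ⟨habar0, habar1⟩ := habar
  obtain ⟨hδ0, hδ1⟩ := hδ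
  have hn0 : (0:ℝ) < n := by exact_mod_cast hn
  set w := max (Real.exp 1 ^ 2 * abar) (1 / (n : ℝ) * Real.log (𝒟.card / δ)) with hw_def
  rcases Finset.eq_empty_or_nonempty 𝒟 with hDe | hDne
  · subst hDe
    simp only [Finset.notMem_empty, IsEmpty.forall_iff, forall_const, Set.setOf_true,
      measure_univ]
    exact ENNReal.ofReal_le_one.mpr (by linarith)
  -- main case
  have hN1 : (1:ℝ) ≤ 𝒟.card := by exact_mod_cast Finset.card_pos.mpr hDne
  have hN0 : (0:ℝ) < 𝒟.card := by linarith
  have hNδ : (1:ℝ) < 𝒟.card / δ := by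
    rw [lt_div_iff₀ hδ0]; linarith
  have hlogpos : 0 < Real.log (𝒟.card / δ) := Real.log_pos hNδ
  have hwα : Real.exp 1 ^ 2 * abar ≤ w := le_max_left _ _
  have hw0 : 0 < w := lt_of_lt_of_le (by positivity) hwα
  have hwlog : Real.log (𝒟.card / δ) ≤ n * w := by
    have := le_max_right (Real.exp 1 ^ 2 * abar) (1 / (n : ℝ) * Real.log (𝒟.card / δ))
    rw [← hw_def] at this
    calc Real.log (𝒟.card / δ) = n * (1 / (n:ℝ) * Real.log (𝒟.card / δ)) := by
          field_simp
      _ ≤ n * w := by nlinarith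
  set t := Real.log (w / abar) with ht_def
  have hwαdiv : Real.exp 2 ≤ w / abar := by
    rw [le_div_iff₀ habar0]
    calc Real.exp 2 * abar = Real.exp 1 ^ 2 * abar := by
          rw [sq, ← Real.exp_add]; norm_num
      _ ≤ w := hwα
  have hwa0 : 0 < w / abar := by positivity
  have ht2 : 2 ≤ t := (Real.le_log_iff_exp_le hwa0).mpr hwαdiv
  have ht0 : 0 ≤ t := by linarith
  have het : Real.exp t = w / abar := Real.exp_log hwa0
  -- per-D bound
  have key : ∀ D ∈ 𝒟, P {ω | w < (1 / (n : ℝ)) *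
      (∑ i : Fin n, if x i ω ∈ D then (1 : ℝ) else 0)} ≤ ENNReal.ofReal (δ / 𝒟.card) := by
    intro D hD
    have hDm := h𝒟m D hD
    set Y : Fin n → Ω → ℝ := fun i ω => if x i ω ∈ D then 1 else 0 with hY_def
    have hYm : ∀ i, Measurable (Y i) := fun i =>
      Measurable.ite ((hxm i) hDm) measurable_const measurable_const
    have hYindep : iIndepFun Y P :=
      hindep.comp (fun _ v => if v ∈ D then (1:ℝ) else 0)
        (fun _ => Measurable.ite hDm measurable_const measurable_const)
    set S : Ω → ℝ := ∑ i, Y i with hS_def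
    have hSfun : S = fun ω => ∑ i : Fin n, Y i ω := by funext ω; simp [hS_def]
    have hSm : Measurable S := by
      rw [hSfun]; exact Finset.measurable_sum _ fun i _ => hYm i
    have hPD : ∀ i : Fin n, P ((x i) ⁻¹' D) = μ D := fun i => by
      rw [← hxdist i, Measure.map_apply (hxm i) hDm]
    have hμD0 : 0 ≤ (μ D).toReal := ENNReal.toReal_nonneg
    have hμDb : (μ D).toReal ≤ abar := h𝒟b D hD
    -- expression for exp(t * Y i ω)
    have hexpY : ∀ i ω, Real.exp (t * Y i ω) = 1 + (Real.exp t - 1) * Y i ω := by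
      intro i ω
      by_cases h : x i ω ∈ D <;> simp [hY_def, h]
    -- Y i as indicator
    have hYind : ∀ i, Y i = Set.indicator ((x i) ⁻¹' D) (fun _ => (1:ℝ)) := by
      intro i; funext ω
      by_cases h : x i ω ∈ D <;> simp [hY_def, Set.indicator, h]
    have hYint : ∀ i, Integrable (Y i) P := by
      intro i
      rw [hYind i]
      exact (integrable_const (1:ℝ)).indicator ((hxm i) hDm)
    have hYintegral : ∀ i, ∫ ω, Y i ω ∂P = (μ D).toReal := by
      intro i
      rw [hYind i]
      rw [MeasureTheory.integral_indicator_const (1:ℝ) ((hxm i) hDm)]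
      rw [measureReal_def, hPD i]; simp
    have hint : ∀ i : Fin n, Integrable (fun ω => Real.exp (t * Y i ω)) P := by
      intro i
      have : (fun ω => Real.exp (t * Y i ω)) = fun ω => 1 + (Real.exp t - 1) * Y i ω := by
        funext ω; exact hexpY i ω
      rw [this]
      exact (integrable_const (1:ℝ)).add ((hYint i).const_mul _)
    have hmgfY : ∀ i : Fin n, mgf (Y i) P t = 1 + (Real.exp t - 1) * (μ D).toReal := by
      intro i
      unfold mgf
      have : (fun ω => Real.exp (t * Y i ω)) = fun ω => 1 + (Real.exp t - 1) * Y i ω := by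
        funext ω; exact hexpY i ω
      rw [this, integral_add (integrable_const _) ((hYint i).const_mul _),
        integral_const, integral_const_mul, hYintegral i]
      simp
    have hmgfS : mgf S P t = (1 + (Real.exp t - 1) * (μ D).toReal) ^ n := by
      rw [hS_def, hYindep.mgf_sum hYm]
      rw [Finset.prod_congr rfl fun i _ => hmgfY i]
      simp
    have hSint : Integrable (fun ω => Real.exp (t * S ω)) P := by
      have := hYindep.integrable_exp_mul_sum hYm (s := Finset.univ) fun i _ => hint i
      simpa [hS_def] using this
    -- Chernoff
    have hcher := measure_ge_le_exp_mul_mgf (X := S) (μ := P) (t := t) ((n:ℝ) * w) ht0 hSint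
    -- bound mgf
    have hfac : 1 + (Real.exp t - 1) * (μ D).toReal ≤ Real.exp w := by
      have h1 : (Real.exp t - 1) * (μ D).toReal ≤ (Real.exp t - 1) * abar := by
        apply mul_le_mul_of_nonneg_left hμDb
        have : (1:ℝ) ≤ Real.exp t := Real.one_le_exp ht0
        linarith
      have h2 : (Real.exp t - 1) * abar = w - abar := by
        rw [het]; field_simp
      have h3 : 1 + (w - abar) ≤ Real.exp (w - abar) := Real.add_one_le_exp _ |>.trans_eq' (by ring)
      have h4 : Real.exp (w - abar) ≤ Real.exp w := Real.exp_le_exp.mpr (by linarith)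
      linarith
    have hfac0 : 0 ≤ 1 + (Real.exp t - 1) * (μ D).toReal := by
      have : (1:ℝ) ≤ Real.exp t := Real.one_le_exp ht0
      nlinarith
    have hmgfb : mgf S P t ≤ Real.exp ((n:ℝ) * w) := by
      rw [hmgfS]
      calc (1 + (Real.exp t - 1) * (μ D).toReal) ^ n ≤ (Real.exp w) ^ n :=
            pow_le_pow_left₀ hfac0 hfac n
        _ = Real.exp ((n:ℝ) * w) := by rw [← Real.exp_nat_mul]
    have hnum : Real.exp (-t * ((n:ℝ) * w)) * Real.exp ((n:ℝ) * w) ≤ δ / 𝒟.card := by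
      rw [← Real.exp_add]
      have h1 : -t * ((n:ℝ) * w) + (n:ℝ) * w ≤ -((n:ℝ) * w) := by nlinarith
      have h2 : -((n:ℝ) * w) ≤ -Real.log (𝒟.card / δ) := by linarith
      calc Real.exp (-t * ((n:ℝ) * w) + (n:ℝ) * w) ≤ Real.exp (-Real.log (𝒟.card / δ)) :=
            Real.exp_le_exp.mpr (by linarith)
        _ = δ / 𝒟.card := by
            rw [Real.exp_neg, Real.exp_log (by positivity)]
            field_simp
    have hfinal : (P {ω | (n:ℝ) * w ≤ S ω}).toReal ≤ δ / 𝒟.card := by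
      calc (P {ω | (n:ℝ) * w ≤ S ω}).toReal ≤ Real.exp (-t * ((n:ℝ) * w)) * mgf S P t := hcher
        _ ≤ Real.exp (-t * ((n:ℝ) * w)) * Real.exp ((n:ℝ) * w) := by
            apply mul_le_mul_of_nonneg_left hmgfb (Real.exp_pos _).le
        _ ≤ δ / 𝒟.card := hnum
    have hsub : {ω | w < (1 / (n : ℝ)) * (∑ i : Fin n, if x i ω ∈ D then (1 : ℝ) else 0)}
        ⊆ {ω | (n:ℝ) * w ≤ S ω} := by
      intro ω hω
      simp only [Set.mem_setOf_eq] at hω ⊢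
      have hSω : S ω = ∑ i : Fin n, if x i ω ∈ D then (1 : ℝ) else 0 := by
        simp [hS_def, hY_def]
      rw [hSω]
      have h1 : (n:ℝ) * w < (n:ℝ) * (1 / (n:ℝ) * ∑ i : Fin n, if x i ω ∈ D then (1:ℝ) else 0) :=
        mul_lt_mul_of_pos_left hω hn0
      rw [← mul_assoc, mul_one_div_cancel (ne_of_gt hn0), one_mul] at h1
      linarith
    calc P {ω | w < (1 / (n : ℝ)) * (∑ i : Fin n, if x i ω ∈ D then (1 : ℝ) else 0)}
        ≤ P {ω | (n:ℝ) * w ≤ S ω} := measure_mono hsub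
      _ ≤ ENNReal.ofReal (δ / 𝒟.card) := by
          rw [ENNReal.le_ofReal_iff_toReal_le (measure_ne_top _ _) (div_nonneg hδ0.le (Nat.cast_nonneg _))]
          exact hfinal
  -- measurability of the bad events
  have hAm : ∀ D ∈ 𝒟, MeasurableSet {ω | w < (1 / (n : ℝ)) *
      (∑ i : Fin n, if x i ω ∈ D then (1 : ℝ) else 0)} := by
    intro D hD
    have hfm : Measurable fun ω => (1 / (n : ℝ)) *
        (∑ i : Fin n, if x i ω ∈ D then (1 : ℝ) else 0) := by
      apply Measurable.const_mul
      apply Finset.measurable_sum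
      intro i _
      exact Measurable.ite ((hxm i) (h𝒟m D hD)) measurable_const measurable_const
    exact measurableSet_lt measurable_const hfm
  -- union bound
  set U := ⋃ D ∈ 𝒟, {ω | w < (1 / (n : ℝ)) *
      (∑ i : Fin n, if x i ω ∈ D then (1 : ℝ) else 0)} with hU_def
  have hUm : MeasurableSet U := MeasurableSet.biUnion 𝒟.countable_toSet hAm
  have hUb : P U ≤ ENNReal.ofReal δ := by
    calc P U ≤ ∑ D ∈ 𝒟, P {ω | w < (1 / (n : ℝ)) *
          (∑ i : Fin n, if x i ω ∈ D then (1 : ℝ) else 0)} :=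
          measure_biUnion_finset_le 𝒟 _
      _ ≤ ∑ D ∈ 𝒟, ENNReal.ofReal (δ / 𝒟.card) := Finset.sum_le_sum key
      _ = 𝒟.card • ENNReal.ofReal (δ / 𝒟.card) := Finset.sum_const _
      _ = ENNReal.ofReal δ := by
          rw [nsmul_eq_mul, ← ENNReal.ofReal_natCast, ← ENNReal.ofReal_mul (Nat.cast_nonneg _)]
          congr 1
          rw [mul_comm, div_mul_cancel₀ _ (ne_of_gt hN0)]
  have hTc : {ω | ∀ D ∈ 𝒟,
      (1 / (n : ℝ)) * (∑ i : Fin n, if x i ω ∈ D then (1 : ℝ) else 0) ≤ w} = Uᶜ := by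
    rw [hU_def]
    ext ω
    simp only [Set.mem_setOf_eq, Set.mem_compl_iff, Set.mem_iUnion, not_exists, not_lt]
  rw [hTc, measure_compl hUm (measure_ne_top _ _), measure_univ]
  calc ENNReal.ofReal (1 - δ) = 1 - ENNReal.ofReal δ := by
        rw [ENNReal.ofReal_sub _ hδ0.le, ENNReal.ofReal_one]
    _ ≤ 1 - P U := tsub_le_tsub_left hUb 1
end
end
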